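/- arXiv:1309.1790 — 3 statements merged into one kernel-verified Lean document; each statement's English description precedes it below -/
import Mathlib

section
/- Suppose m = 2, A_1(A_1 + L_11)τ_1 + L_11 < α_1, and (α_1 − A_1(A_1 + L_11)τ_1 − L_11)(α_2 − A_2(A_2 + L_22)τ_2 − L_22) > L_12 L_21 (1 + A_1τ_1)(1 + A_2τ_2). Then the nonlinear delay system ẋ_i(t) = −a_i(t)x_i(h_i(t)) + Σ_{j=1}^2 F_{ij}(t, x_j(g_{ij}(t))) is globally exponentially stable. -/
open MeasureTheory

set_option maxHeartbeats 1000000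

lemma exp_le_one_add_two_mul {x : ℝ} (h0 : 0 ≤ x) (h1 : x ≤ 1) : Real.exp x ≤ 1 + 2*x := by
  have hc := convexOn_exp.2 (Set.mem_univ (0:ℝ)) (Set.mem_univ (1:ℝ))
    (show (0:ℝ) ≤ 1 - x by linarith) h0 (by ring)
  simp only [smul_eq_mul, mul_zero, mul_one, zero_add, Real.exp_zero] at hc
  nlinarith [Real.exp_one_lt_d9, Real.exp_pos (1:ℝ)]

lemma exp_half_lt_two : Real.exp (1/2 : ℝ) < 2 := by
  have h2 : Real.exp (1/2 : ℝ) * Real.exp (1/2 : ℝ) = Real.exp 1 := by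
    rw [← Real.exp_add]; norm_num
  nlinarith [Real.exp_one_lt_d9, Real.exp_pos (1/2 : ℝ)]

lemma intervalIntegrable_of_bdd {f : ℝ → ℝ} (hf : Measurable f) {a b C : ℝ}
    (hC : ∀ s ∈ Set.uIoc a b, |f s| ≤ C) : IntervalIntegrable f volume a b := by
  constructor
  · refine MeasureTheory.Integrable.mono' (g := fun _ => C)
      (MeasureTheory.integrableOn_const measure_Ioc_lt_top.ne)
      hf.aestronglyMeasurable.restrict ?_
    rw [MeasureTheory.ae_restrict_iff' measurableSet_Ioc]
    exact MeasureTheory.ae_of_all _ fun s hs => by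
      rw [Real.norm_eq_abs]; exact hC s (Set.Ioc_subset_uIoc hs)
  · refine MeasureTheory.Integrable.mono' (g := fun _ => C)
      (MeasureTheory.integrableOn_const measure_Ioc_lt_top.ne)
      hf.aestronglyMeasurable.restrict ?_
    rw [MeasureTheory.ae_restrict_iff' measurableSet_Ioc]
    exact MeasureTheory.ae_of_all _ fun s hs => by
      rw [Real.norm_eq_abs]; exact hC s (Set.Ioc_subset_uIoc' hs)

lemma crossing {g : ℝ → ℝ} (hg : Continuous g) {a b W : ℝ} (hga : g a < W)
    (hex : ∃ t, t ∈ Set.Icc a b ∧ W ≤ g t) :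
    ∃ T, T ∈ Set.Icc a b ∧ W ≤ g T ∧ ∀ s, a ≤ s → s ≤ T → g s ≤ W := by
  set U := Set.Icc a b ∩ g ⁻¹' Set.Ici W with hU
  have hUc : IsClosed U := isClosed_Icc.inter (isClosed_Ici.preimage hg)
  obtain ⟨t, ht1, ht2⟩ := hex
  have hUne : U.Nonempty := ⟨t, ht1, ht2⟩
  have hbb : BddBelow U := ⟨a, fun u hu => hu.1.1⟩
  have hTU : sInf U ∈ U := hUc.csInf_mem hUne hbb
  set T := sInf U with hT
  have hTa : a < T := by
    rcases lt_or_eq_of_le hTU.1.1 with h | h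
    · exact h
    · exact absurd hTU.2 (by rw [← h]; exact not_le.2 hga)
  have hlt : ∀ s, a ≤ s → s < T → g s < W := by
    intro s hs hsT
    by_contra hc
    push_neg at hc
    have : s ∈ U := ⟨⟨hs, hsT.le.trans hTU.1.2⟩, hc⟩
    exact absurd (csInf_le hbb this) (not_le.2 hsT)
  have hTle : g T ≤ W := by
    have h1 : Filter.Tendsto g (nhdsWithin T (Set.Iio T)) (nhds (g T)) :=
      (hg.tendsto T).mono_left nhdsWithin_le_nhds
    refine le_of_tendsto h1 ?_
    filter_upwards [Ioo_mem_nhdsLT_of_mem (Set.mem_Ioc.2 ⟨hTa, le_rfl⟩)] with s hs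
    exact (hlt s hs.1.le hs.2).le
  refine ⟨T, hTU.1, hTU.2, fun s hs hsT => ?_⟩
  rcases lt_or_eq_of_le hsT with h | h
  · exact (hlt s hs h).le
  · rw [h]; exact hTle


lemma key (f a y h : ℝ → ℝ) (t₀ T Δ τ α A V Cf Cg lam : ℝ)
    (hΔ : 0 < Δ) (hτ : 0 ≤ τ) (hα : 0 ≤ α) (hA : 0 ≤ A) (hV : 0 < V)
    (hCf : 0 ≤ Cf) (hCg : 0 ≤ Cg)
    (ht₁ : t₀ ≤ T - Δ)
    (hyd : ∀ t₂ t₃, t₀ ≤ t₂ → t₂ ≤ t₃ → y t₃ - y t₂ = ∫ s in t₂..t₃, f s)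
    (hfInt : IntervalIntegrable f volume (T-Δ) T)
    (haInt : IntervalIntegrable a volume (T-Δ) T)
    (hIa : α * Δ ≤ ∫ s in (T-Δ)..T, a s)
    (hfb : ∀ u, T - (Δ + τ) ≤ u → u ≤ T → |f u| ≤ Cf)
    (hh : ∀ s, T - Δ < s → s ≤ T → t₀ ≤ h s ∧ h s ≤ s ∧ T - h s ≤ Δ + τ)
    (hptw : ∀ s, T - Δ < s → s ≤ T → |f s + a s * y T| ≤ A * |y T - y (h s)| + Cg)
    (hyT : V ≤ |y T|)
    (hyt₁ : |y (T-Δ)| ≤ V * Real.exp (lam * Δ)) :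
    V * (1 + α*Δ) ≤ V * Real.exp (lam*Δ) + Δ * (A * (Δ+τ) * Cf + Cg) := by
  set t₁ := T - Δ with ht₁def
  have hT : t₁ ≤ T := by simp only [ht₁def]; linarith
  have h1 : y T - y t₁ = ∫ s in t₁..T, f s := hyd t₁ T ht₁ hT
  have h2 : (∫ s in t₁..T, (f s + a s * y T)) =
      (∫ s in t₁..T, f s) + (∫ s in t₁..T, a s) * y T := by
    rw [intervalIntegral.integral_add hfInt (haInt.mul_const _),
      intervalIntegral.integral_mul_const]
  set I := ∫ s in t₁..T, a s with hIdef
  have hI0 : α * Δ ≤ I := hIa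
  have h3 : y t₁ + (∫ s in t₁..T, (f s + a s * y T)) = y T * (1 + I) := by
    rw [h2, ← h1]; ring
  have hdiff : ∀ s, t₁ < s → s ≤ T → |y T - y (h s)| ≤ Cf * (Δ + τ) := by
    intro s hs1 hs2
    obtain ⟨hhs0, hhs1, hhs2⟩ := hh s hs1 hs2
    have hhsT : h s ≤ T := hhs1.trans hs2
    have hyd2 : y T - y (h s) = ∫ u in (h s)..T, f u := hyd (h s) T hhs0 hhsT
    rw [hyd2]
    have hb := intervalIntegral.norm_integral_le_of_norm_le_const (C := Cf)
      (f := f) (a := h s) (b := T) ?_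
    · rw [Real.norm_eq_abs] at hb
      refine hb.trans ?_
      rw [abs_of_nonneg (by linarith : (0:ℝ) ≤ T - h s)]
      exact mul_le_mul_of_nonneg_left hhs2 hCf
    · intro u hu
      rw [Set.uIoc_of_le hhsT] at hu
      rw [Real.norm_eq_abs]
      exact hfb u (by linarith [hu.1]) hu.2
  have h4 : |∫ s in t₁..T, (f s + a s * y T)| ≤ (A*(Δ+τ)*Cf + Cg) * Δ := by
    have hb := intervalIntegral.norm_integral_le_of_norm_le_const
      (C := A*(Δ+τ)*Cf + Cg) (f := fun s => f s + a s * y T) (a := t₁) (b := T) ?_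
    · rw [Real.norm_eq_abs] at hb
      refine hb.trans ?_
      rw [abs_of_nonneg (by linarith : (0:ℝ) ≤ T - t₁)]
      have : T - t₁ = Δ := by simp only [ht₁def]; ring
      rw [this]
    · intro s hs
      rw [Set.uIoc_of_le hT] at hs
      rw [Real.norm_eq_abs]
      refine (hptw s hs.1 hs.2).trans ?_
      have := hdiff s hs.1 hs.2
      nlinarith [hdiff s hs.1 hs.2]
  have h5 : |y T| * (1 + I) ≤ |y t₁| + (A*(Δ+τ)*Cf + Cg) * Δ := by
    have hIn : (0:ℝ) ≤ 1 + I := by nlinarith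
    calc |y T| * (1 + I) = |y T * (1 + I)| := by
          rw [abs_mul, abs_of_nonneg hIn]
      _ = |y t₁ + (∫ s in t₁..T, (f s + a s * y T))| := by rw [h3]
      _ ≤ |y t₁| + |∫ s in t₁..T, (f s + a s * y T)| := abs_add_le _ _
      _ ≤ |y t₁| + (A*(Δ+τ)*Cf + Cg) * Δ := by linarith [h4]
  have h6 : V * (1 + α*Δ) ≤ |y T| * (1 + I) := by
    apply mul_le_mul hyT (by linarith) (by nlinarith) (abs_nonneg _)
  nlinarith [h5, h6, hyt₁]


lemma exp_le_one_add_two_mul' {x : ℝ} (h0 : 0 ≤ x) (h1 : x ≤ 1) : Real.exp x ≤ 1 + 2*x := by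
  have hc := convexOn_exp.2 (Set.mem_univ (0:ℝ)) (Set.mem_univ (1:ℝ))
    (show (0:ℝ) ≤ 1 - x by linarith) h0 (by ring)
  simp only [smul_eq_mul, mul_zero, mul_one, zero_add, Real.exp_zero] at hc
  nlinarith [Real.exp_one_lt_d9, Real.exp_pos (1:ℝ)]

lemma NIaux (lam Δ r γ Q ε α' : ℝ) (hΔpos : 0 < Δ) (hr0 : 0 ≤ r) (hlam0 : 0 < lam)
    (hlamΔ : lam*Δ ≤ 1) (hlamr : lam*(Δ+2*r) ≤ 1)
    (hγ : 0 < γ) (hQ : 0 ≤ Q) (hε : 0 < ε) (hQle : Q ≤ γ*α' - ε/2)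
    (hlε : lam*(4*γ+4*Q*(Δ+2*r)+1) ≤ ε) :
    γ * Real.exp (lam*Δ) + Δ*Q*Real.exp (lam*(Δ+2*r)) < γ*(1+α'*Δ) := by
  have e1 : Real.exp (lam*Δ) ≤ 1 + 2*(lam*Δ) :=
    exp_le_one_add_two_mul' (mul_nonneg hlam0.le hΔpos.le) hlamΔ
  have e2 : Real.exp (lam*(Δ+2*r)) ≤ 1 + 2*(lam*(Δ+2*r)) :=
    exp_le_one_add_two_mul' (mul_nonneg hlam0.le (by linarith)) hlamr
  have m2 : 2*γ*lam + 2*Q*(lam*(Δ+2*r)) < ε/2 := by nlinarith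
  have m3 : Δ*(2*γ*lam + 2*Q*(lam*(Δ+2*r))) < Δ*(ε/2) := mul_lt_mul_of_pos_left m2 hΔpos
  have m4 : Δ*Q ≤ Δ*(γ*α' - ε/2) := mul_le_mul_of_nonneg_left hQle hΔpos.le
  have m5 : γ*Real.exp (lam*Δ) ≤ γ*(1+2*(lam*Δ)) := mul_le_mul_of_nonneg_left e1 hγ.le
  have m6 : Δ*Q*Real.exp (lam*(Δ+2*r)) ≤ Δ*Q*(1+2*(lam*(Δ+2*r))) :=
    mul_le_mul_of_nonneg_left e2 (mul_nonneg hΔpos.le hQ)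
  nlinarith [m3, m4, m5, m6]

lemma consts (α₁ α₂ A₁ A₂ L₁₁ L₁₂ L₂₁ L₂₂ τ₁ τ₂ r : ℝ)
    (hα₁ : 0 < α₁) (hα₂ : 0 < α₂)
    (hA₁α : α₁ ≤ A₁) (hA₂α : α₂ ≤ A₂)
    (hτ₁0 : 0 ≤ τ₁) (hτ₂0 : 0 ≤ τ₂) (hr0 : 0 ≤ r)
    (hL₁₁0 : 0 ≤ L₁₁) (hL₁₂0 : 0 ≤ L₁₂) (hL₂₁0 : 0 ≤ L₂₁) (hL₂₂0 : 0 ≤ L₂₂)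
    (hcond₁ : A₁ * (A₁ + L₁₁) * τ₁ + L₁₁ < α₁)
    (hcond₂ : (α₁ - A₁ * (A₁ + L₁₁) * τ₁ - L₁₁) * (α₂ - A₂ * (A₂ + L₂₂) * τ₂ - L₂₂) >
      L₁₂ * L₂₁ * (1 + A₁ * τ₁) * (1 + A₂ * τ₂)) :
    ∃ γ₁ γ₂ Δ lam : ℝ, 0 < γ₁ ∧ 0 < γ₂ ∧ 0 < Δ ∧ 0 < lam ∧ lam * (Δ + 2*r) ≤ 1 ∧
      (γ₁ * Real.exp (lam*Δ) +
        Δ*(A₁*(Δ+τ₁)*(A₁*γ₁ + (L₁₁*γ₁ + L₁₂*γ₂)) + (L₁₁*γ₁ + L₁₂*γ₂))*Real.exp (lam*(Δ+2*r))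
        < γ₁*(1+α₁*Δ)) ∧
      (γ₂ * Real.exp (lam*Δ) +
        Δ*(A₂*(Δ+τ₂)*(A₂*γ₂ + (L₂₁*γ₁ + L₂₂*γ₂)) + (L₂₁*γ₁ + L₂₂*γ₂))*Real.exp (lam*(Δ+2*r))
        < γ₂*(1+α₂*Δ)) := by
  have hA₁pos : 0 < A₁ := lt_of_lt_of_le hα₁ hA₁α
  have hA₂pos : 0 < A₂ := lt_of_lt_of_le hα₂ hA₂α
  obtain ⟨c₁, hc₁def⟩ : ∃ c, c = α₁ - A₁ * (A₁ + L₁₁) * τ₁ - L₁₁ := ⟨_, rfl⟩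
  obtain ⟨c₂, hc₂def⟩ : ∃ c, c = α₂ - A₂ * (A₂ + L₂₂) * τ₂ - L₂₂ := ⟨_, rfl⟩
  obtain ⟨b₁₂, hb₁₂def⟩ : ∃ c, c = L₁₂ * (1 + A₁ * τ₁) := ⟨_, rfl⟩
  obtain ⟨b₂₁, hb₂₁def⟩ : ∃ c, c = L₂₁ * (1 + A₂ * τ₂) := ⟨_, rfl⟩
  have hc₁ : 0 < c₁ := by rw [hc₁def]; linarith
  have hb₁₂0 : 0 ≤ b₁₂ := by rw [hb₁₂def]; positivity
  have hb₂₁0 : 0 ≤ b₂₁ := by rw [hb₂₁def]; positivity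
  have hP : b₁₂ * b₂₁ < c₁ * c₂ := by
    rw [hb₁₂def, hb₂₁def, hc₁def, hc₂def]; linarith [hcond₂]
  have hc₂ : 0 < c₂ := by
    by_contra hcon
    have h0 : c₁ * c₂ ≤ 0 := mul_nonpos_of_nonneg_of_nonpos hc₁.le (not_lt.1 hcon)
    linarith [mul_nonneg hb₁₂0 hb₂₁0]
  obtain ⟨δ₀, hδ₀def⟩ : ∃ c, c = (c₁*c₂ - b₁₂*b₂₁)/(2*(b₁₂+1)) := ⟨_, rfl⟩
  have hδ₀ : 0 < δ₀ := by rw [hδ₀def]; apply div_pos (by linarith) (by linarith)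
  have hδval : δ₀ * (2*(b₁₂+1)) = c₁*c₂ - b₁₂*b₂₁ := by
    rw [hδ₀def]; field_simp
  obtain ⟨γ₁, hγ₁def⟩ : ∃ c, c = (1:ℝ) := ⟨_, rfl⟩
  obtain ⟨γ₂, hγ₂def⟩ : ∃ c, c = (b₂₁ + δ₀)/c₂ := ⟨_, rfl⟩
  have hγ₁ : 0 < γ₁ := by rw [hγ₁def]; norm_num
  have hγ₂ : 0 < γ₂ := by rw [hγ₂def]; positivity
  have hγval : γ₂ * c₂ = b₂₁ + δ₀ := by rw [hγ₂def]; field_simp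
  obtain ⟨ε₁, hε₁def⟩ : ∃ c, c = c₁*γ₁ - b₁₂*γ₂ := ⟨_, rfl⟩
  obtain ⟨ε₂, hε₂def⟩ : ∃ c, c = c₂*γ₂ - b₂₁*γ₁ := ⟨_, rfl⟩
  have hε₂eq : ε₂ = δ₀ := by
    rw [hε₂def, hγ₁def]; linear_combination hγval
  have hε₂ : 0 < ε₂ := by rw [hε₂eq]; exact hδ₀
  have hε₁ : 0 < ε₁ := by
    have h9 : ε₁ * c₂ = δ₀ * (b₁₂ + 2) := by
      rw [hε₁def, hγ₁def]; linear_combination -hδval - b₁₂ * hγval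
    by_contra hcon
    have h0 : ε₁ * c₂ ≤ 0 := mul_nonpos_of_nonpos_of_nonneg (not_lt.1 hcon) hc₂.le
    linarith [mul_pos hδ₀ (show (0:ℝ) < b₁₂ + 2 by linarith)]
  obtain ⟨S₁, hS₁def⟩ : ∃ c, c = A₁*γ₁ + (L₁₁*γ₁ + L₁₂*γ₂) := ⟨_, rfl⟩
  obtain ⟨S₂, hS₂def⟩ : ∃ c, c = A₂*γ₂ + (L₂₁*γ₁ + L₂₂*γ₂) := ⟨_, rfl⟩
  have hS₁0 : 0 < S₁ := by
    rw [hS₁def]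
    linarith [mul_pos hA₁pos hγ₁, mul_nonneg hL₁₁0 hγ₁.le, mul_nonneg hL₁₂0 hγ₂.le]
  have hS₂0 : 0 < S₂ := by
    rw [hS₂def]
    linarith [mul_pos hA₂pos hγ₂, mul_nonneg hL₂₁0 hγ₁.le, mul_nonneg hL₂₂0 hγ₂.le]
  have hkey₁ : γ₁*α₁ - (A₁*τ₁*S₁ + (L₁₁*γ₁ + L₁₂*γ₂)) = ε₁ := by
    rw [hε₁def, hS₁def, hc₁def, hb₁₂def]; ring
  have hkey₂ : γ₂*α₂ - (A₂*τ₂*S₂ + (L₂₁*γ₁ + L₂₂*γ₂)) = ε₂ := by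
    rw [hε₂def, hS₂def, hc₂def, hb₂₁def]; ring
  obtain ⟨Δ, hΔdef⟩ : ∃ c, c = min 1 (min (ε₁/(2*A₁*S₁+1)) (ε₂/(2*A₂*S₂+1))) := ⟨_, rfl⟩
  have hden₁ : 0 < 2*A₁*S₁+1 := by linarith [mul_pos hA₁pos hS₁0]
  have hden₂ : 0 < 2*A₂*S₂+1 := by linarith [mul_pos hA₂pos hS₂0]
  have hΔpos : 0 < Δ := by
    rw [hΔdef]
    exact lt_min one_pos (lt_min (div_pos hε₁ hden₁) (div_pos hε₂ hden₂))
  have hΔ1 : Δ ≤ 1 := by rw [hΔdef]; exact min_le_left _ _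
  have hΔd₁ : Δ * (2*A₁*S₁+1) ≤ ε₁ := by
    have h : Δ ≤ ε₁/(2*A₁*S₁+1) := by
      rw [hΔdef]; exact le_trans (min_le_right _ _) (min_le_left _ _)
    exact (le_div_iff₀ hden₁).1 h
  have hΔd₂ : Δ * (2*A₂*S₂+1) ≤ ε₂ := by
    have h : Δ ≤ ε₂/(2*A₂*S₂+1) := by
      rw [hΔdef]; exact le_trans (min_le_right _ _) (min_le_right _ _)
    exact (le_div_iff₀ hden₂).1 h
  obtain ⟨Q₁, hQ₁def⟩ : ∃ c, c = A₁*(Δ+τ₁)*S₁ + (L₁₁*γ₁ + L₁₂*γ₂) := ⟨_, rfl⟩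
  obtain ⟨Q₂, hQ₂def⟩ : ∃ c, c = A₂*(Δ+τ₂)*S₂ + (L₂₁*γ₁ + L₂₂*γ₂) := ⟨_, rfl⟩
  have hQ₁0 : 0 ≤ Q₁ := by
    rw [hQ₁def]
    linarith [mul_nonneg (mul_nonneg hA₁pos.le (show (0:ℝ) ≤ Δ+τ₁ by linarith)) hS₁0.le,
      mul_nonneg hL₁₁0 hγ₁.le, mul_nonneg hL₁₂0 hγ₂.le]
  have hQ₂0 : 0 ≤ Q₂ := by
    rw [hQ₂def]
    linarith [mul_nonneg (mul_nonneg hA₂pos.le (show (0:ℝ) ≤ Δ+τ₂ by linarith)) hS₂0.le,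
      mul_nonneg hL₂₁0 hγ₁.le, mul_nonneg hL₂₂0 hγ₂.le]
  have hQ₁le : Q₁ ≤ γ₁*α₁ - ε₁/2 := by
    have h1 : A₁*Δ*S₁ ≤ ε₁/2 := by linarith [hΔd₁, hΔpos]
    rw [hQ₁def]; linarith [hkey₁]
  have hQ₂le : Q₂ ≤ γ₂*α₂ - ε₂/2 := by
    have h1 : A₂*Δ*S₂ ≤ ε₂/2 := by linarith [hΔd₂, hΔpos]
    rw [hQ₂def]; linarith [hkey₂]
  obtain ⟨lam, hlamdef⟩ : ∃ c, c = min (1/(Δ+2*r+1))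
      (min (ε₁/(4*γ₁+4*Q₁*(Δ+2*r)+1)) (ε₂/(4*γ₂+4*Q₂*(Δ+2*r)+1))) := ⟨_, rfl⟩
  have hld₀ : 0 < Δ+2*r+1 := by linarith
  have hld₁ : 0 < 4*γ₁+4*Q₁*(Δ+2*r)+1 := by
    linarith [mul_nonneg hQ₁0 (show (0:ℝ) ≤ Δ+2*r by linarith)]
  have hld₂ : 0 < 4*γ₂+4*Q₂*(Δ+2*r)+1 := by
    linarith [mul_nonneg hQ₂0 (show (0:ℝ) ≤ Δ+2*r by linarith)]
  have hlam0 : 0 < lam := by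
    rw [hlamdef]
    exact lt_min (by positivity) (lt_min (div_pos hε₁ hld₁) (div_pos hε₂ hld₂))
  have hlamr : lam * (Δ+2*r) ≤ 1 := by
    have h1 : lam ≤ 1/(Δ+2*r+1) := by rw [hlamdef]; exact min_le_left _ _
    have h2 : lam * (Δ+2*r+1) ≤ 1 := by
      calc lam * (Δ+2*r+1) ≤ (1/(Δ+2*r+1)) * (Δ+2*r+1) :=
            mul_le_mul_of_nonneg_right h1 hld₀.le
        _ = 1 := by field_simp
    linarith [hlam0]
  have hlamΔ : lam * Δ ≤ 1 := by
    linarith [hlamr, mul_nonneg hlam0.le hr0]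
  have hlε₁ : lam * (4*γ₁+4*Q₁*(Δ+2*r)+1) ≤ ε₁ := by
    have h1 : lam ≤ ε₁/(4*γ₁+4*Q₁*(Δ+2*r)+1) := by
      rw [hlamdef]; exact le_trans (min_le_right _ _) (min_le_left _ _)
    exact (le_div_iff₀ hld₁).1 h1
  have hlε₂ : lam * (4*γ₂+4*Q₂*(Δ+2*r)+1) ≤ ε₂ := by
    have h1 : lam ≤ ε₂/(4*γ₂+4*Q₂*(Δ+2*r)+1) := by
      rw [hlamdef]; exact le_trans (min_le_right _ _) (min_le_right _ _)
    exact (le_div_iff₀ hld₂).1 h1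
  have NI : ∀ γ Q ε α' : ℝ, 0 < γ → 0 ≤ Q → 0 < ε → Q ≤ γ*α' - ε/2 →
      lam * (4*γ+4*Q*(Δ+2*r)+1) ≤ ε →
      γ * Real.exp (lam*Δ) + Δ*Q*Real.exp (lam*(Δ+2*r)) < γ*(1+α'*Δ) :=
    fun γ Q ε α' hγ hQ hε hQle hlε =>
      NIaux lam Δ r γ Q ε α' hΔpos hr0 hlam0 hlamΔ hlamr hγ hQ hε hQle hlε
  have NI₁ := NI γ₁ Q₁ ε₁ α₁ hγ₁ hQ₁0 hε₁ hQ₁le hlε₁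
  have NI₂ := NI γ₂ Q₂ ε₂ α₂ hγ₂ hQ₂0 hε₂ hQ₂le hlε₂
  rw [hQ₁def, hS₁def] at NI₁
  rw [hQ₂def, hS₂def] at NI₂
  exact ⟨γ₁, γ₂, Δ, lam, hγ₁, hγ₂, hΔpos, hlam0, hlamr, NI₁, NI₂⟩

/-- Corollary 2.6: for `m = 2`, if `A₁(A₁+L₁₁)τ₁ + L₁₁ < α₁` and
`(α₁ − A₁(A₁+L₁₁)τ₁ − L₁₁)(α₂ − A₂(A₂+L₂₂)τ₂ − L₂₂) > L₁₂L₂₁(1+A₁τ₁)(1+A₂τ₂)`,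
then the two-dimensional nonlinear delay system (1) is globally exponentially stable. -/
theorem stmt5
    (a₁ a₂ : ℝ → ℝ) (α₁ α₂ A₁ A₂ : ℝ)
    (F₁₁ F₁₂ F₂₁ F₂₂ : ℝ → ℝ → ℝ) (L₁₁ L₁₂ L₂₁ L₂₂ : ℝ)
    (h₁ h₂ : ℝ → ℝ) (g₁₁ g₁₂ g₂₁ g₂₂ : ℝ → ℝ)
    (τ₁ τ₂ σ : ℝ)
    -- (a1)
    (ha₁_meas : Measurable a₁) (ha₂_meas : Measurable a₂)
    (hα₁ : 0 < α₁) (hα₂ : 0 < α₂)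
    (ha₁_bd : ∀ t, 0 ≤ t → α₁ ≤ a₁ t ∧ a₁ t ≤ A₁)
    (ha₂_bd : ∀ t, 0 ≤ t → α₂ ≤ a₂ t ∧ a₂ t ≤ A₂)
    -- (a2)
    (hF₁₁ : ∀ t, Continuous (F₁₁ t)) (hF₁₂ : ∀ t, Continuous (F₁₂ t))
    (hF₂₁ : ∀ t, Continuous (F₂₁ t)) (hF₂₂ : ∀ t, Continuous (F₂₂ t))
    (hF₁₁m : ∀ u, Measurable fun t => F₁₁ t u) (hF₁₂m : ∀ u, Measurable fun t => F₁₂ t u)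
    (hF₂₁m : ∀ u, Measurable fun t => F₂₁ t u) (hF₂₂m : ∀ u, Measurable fun t => F₂₂ t u)
    (hL₁₁ : ∀ t u, 0 ≤ t → |F₁₁ t u| ≤ L₁₁ * |u|)
    (hL₁₂ : ∀ t u, 0 ≤ t → |F₁₂ t u| ≤ L₁₂ * |u|)
    (hL₂₁ : ∀ t u, 0 ≤ t → |F₂₁ t u| ≤ L₂₁ * |u|)
    (hL₂₂ : ∀ t u, 0 ≤ t → |F₂₂ t u| ≤ L₂₂ * |u|)
    -- (a3)
    (hh₁_meas : Measurable h₁) (hh₂_meas : Measurable h₂)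
    (hh₁ : ∀ t, 0 ≤ t → 0 ≤ t - h₁ t ∧ t - h₁ t ≤ τ₁)
    (hh₂ : ∀ t, 0 ≤ t → 0 ≤ t - h₂ t ∧ t - h₂ t ≤ τ₂)
    (hg₁₁_meas : Measurable g₁₁) (hg₁₂_meas : Measurable g₁₂)
    (hg₂₁_meas : Measurable g₂₁) (hg₂₂_meas : Measurable g₂₂)
    (hg₁₁ : ∀ t, 0 ≤ t → 0 ≤ t - g₁₁ t ∧ t - g₁₁ t ≤ σ)
    (hg₁₂ : ∀ t, 0 ≤ t → 0 ≤ t - g₁₂ t ∧ t - g₁₂ t ≤ σ)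
    (hg₂₁ : ∀ t, 0 ≤ t → 0 ≤ t - g₂₁ t ∧ t - g₂₁ t ≤ σ)
    (hg₂₂ : ∀ t, 0 ≤ t → 0 ≤ t - g₂₂ t ∧ t - g₂₂ t ≤ σ)
    -- stability conditions
    (hcond₁ : A₁ * (A₁ + L₁₁) * τ₁ + L₁₁ < α₁)
    (hcond₂ : (α₁ - A₁ * (A₁ + L₁₁) * τ₁ - L₁₁) * (α₂ - A₂ * (A₂ + L₂₂) * τ₂ - L₂₂) >
      L₁₂ * L₂₁ * (1 + A₁ * τ₁) * (1 + A₂ * τ₂)) :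
    -- global exponential stability
    ∃ M Λ : ℝ, 0 < M ∧ 0 < Λ ∧
      ∀ t₀ : ℝ, 0 ≤ t₀ → ∀ x₁ x₂ : ℝ → ℝ,
        Continuous x₁ → Continuous x₂ →
        (∀ t, t₀ ≤ t → IntervalIntegrable
            (fun s => -(a₁ s) * x₁ (h₁ s) + (F₁₁ s (x₁ (g₁₁ s)) + F₁₂ s (x₂ (g₁₂ s))))
            volume t₀ t) →
        (∀ t, t₀ ≤ t → IntervalIntegrable
            (fun s => -(a₂ s) * x₂ (h₂ s) + (F₂₁ s (x₁ (g₂₁ s)) + F₂₂ s (x₂ (g₂₂ s))))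
            volume t₀ t) →
        (∀ t, t₀ ≤ t →
          x₁ t = x₁ t₀ + ∫ s in t₀..t,
            (-(a₁ s) * x₁ (h₁ s) + (F₁₁ s (x₁ (g₁₁ s)) + F₁₂ s (x₂ (g₁₂ s))))) →
        (∀ t, t₀ ≤ t →
          x₂ t = x₂ t₀ + ∫ s in t₀..t,
            (-(a₂ s) * x₂ (h₂ s) + (F₂₁ s (x₁ (g₂₁ s)) + F₂₂ s (x₂ (g₂₂ s))))) →
        ∀ t, t₀ ≤ t →
          ‖(x₁ t, x₂ t)‖ ≤
            M * Real.exp (-Λ * (t - t₀)) *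
              (‖(x₁ t₀, x₂ t₀)‖ +
                sSup ((fun s => ‖(x₁ s, x₂ s)‖) ''
                  Set.Icc (t₀ - max σ (max τ₁ τ₂)) t₀)) := by
  have hτ₁0 : 0 ≤ τ₁ := le_trans (hh₁ 0 le_rfl).1 (hh₁ 0 le_rfl).2
  have hτ₂0 : 0 ≤ τ₂ := le_trans (hh₂ 0 le_rfl).1 (hh₂ 0 le_rfl).2
  have hσ0 : 0 ≤ σ := le_trans (hg₁₁ 0 le_rfl).1 (hg₁₁ 0 le_rfl).2
  have hA₁α : α₁ ≤ A₁ := le_trans (ha₁_bd 0 le_rfl).1 (ha₁_bd 0 le_rfl).2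
  have hA₂α : α₂ ≤ A₂ := le_trans (ha₂_bd 0 le_rfl).1 (ha₂_bd 0 le_rfl).2
  have hA₁pos : 0 < A₁ := lt_of_lt_of_le hα₁ hA₁α
  have hA₂pos : 0 < A₂ := lt_of_lt_of_le hα₂ hA₂α
  have hL₁₁0 : 0 ≤ L₁₁ := by
    have h := hL₁₁ 0 1 le_rfl; rw [abs_one, mul_one] at h; linarith [abs_nonneg (F₁₁ 0 1)]
  have hL₁₂0 : 0 ≤ L₁₂ := by
    have h := hL₁₂ 0 1 le_rfl; rw [abs_one, mul_one] at h; linarith [abs_nonneg (F₁₂ 0 1)]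
  have hL₂₁0 : 0 ≤ L₂₁ := by
    have h := hL₂₁ 0 1 le_rfl; rw [abs_one, mul_one] at h; linarith [abs_nonneg (F₂₁ 0 1)]
  have hL₂₂0 : 0 ≤ L₂₂ := by
    have h := hL₂₂ 0 1 le_rfl; rw [abs_one, mul_one] at h; linarith [abs_nonneg (F₂₂ 0 1)]
  obtain ⟨r, hrdef⟩ : ∃ c, c = max σ (max τ₁ τ₂) := ⟨_, rfl⟩
  have hσr : σ ≤ r := by rw [hrdef]; exact le_max_left _ _
  have hτ₁r : τ₁ ≤ r := by rw [hrdef]; exact le_trans (le_max_left _ _) (le_max_right _ _)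
  have hτ₂r : τ₂ ≤ r := by rw [hrdef]; exact le_trans (le_max_right _ _) (le_max_right _ _)
  have hr0 : 0 ≤ r := le_trans hσ0 hσr
  obtain ⟨γ₁, γ₂, Δ, lam, hγ₁, hγ₂, hΔpos, hlam0, hlamr, NI₁, NI₂⟩ :=
    consts α₁ α₂ A₁ A₂ L₁₁ L₁₂ L₂₁ L₂₂ τ₁ τ₂ r hα₁ hα₂ hA₁α hA₂α hτ₁0 hτ₂0 hr0
      hL₁₁0 hL₁₂0 hL₂₁0 hL₂₂0 hcond₁ hcond₂
  obtain ⟨C, hCdef⟩ : ∃ c, c = 1 + (A₁+A₂+L₁₁+L₁₂+L₂₁+L₂₂) := ⟨_, rfl⟩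
  have hC1 : 1 ≤ C := by rw [hCdef]; linarith
  have hC0 : 0 < C := lt_of_lt_of_le one_pos hC1
  have hCb₁ : A₁ + L₁₁ + L₁₂ ≤ C := by rw [hCdef]; linarith
  have hCb₂ : A₂ + L₂₁ + L₂₂ ≤ C := by rw [hCdef]; linarith
  obtain ⟨Ts, hTsdef⟩ : ∃ c, c = Δ + r := ⟨_, rfl⟩
  have hTs0 : 0 < Ts := by rw [hTsdef]; linarith
  obtain ⟨G, hGdef⟩ : ∃ c, c = Real.exp (2*C*Ts) := ⟨_, rfl⟩
  have hG1 : 1 ≤ G := by rw [hGdef]; exact Real.one_le_exp (by positivity)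
  have hG0 : 0 < G := lt_of_lt_of_le one_pos hG1
  obtain ⟨γm, hγmdef⟩ : ∃ c, c = min γ₁ γ₂ := ⟨_, rfl⟩
  obtain ⟨γM, hγMdef⟩ : ∃ c, c = max γ₁ γ₂ := ⟨_, rfl⟩
  have hγm0 : 0 < γm := by rw [hγmdef]; exact lt_min hγ₁ hγ₂
  have hγ₁m : γm ≤ γ₁ := by rw [hγmdef]; exact min_le_left _ _
  have hγ₂m : γm ≤ γ₂ := by rw [hγmdef]; exact min_le_right _ _
  have hγ₁M : γ₁ ≤ γM := by rw [hγMdef]; exact le_max_left _ _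
  have hγ₂M : γ₂ ≤ γM := by rw [hγMdef]; exact le_max_right _ _
  have hγM0 : 0 < γM := lt_of_lt_of_le hγ₁ hγ₁M
  obtain ⟨M, hMdef⟩ : ∃ c, c = 2*γM*G*Real.exp (lam*Ts)/γm := ⟨_, rfl⟩
  have hM0 : 0 < M := by rw [hMdef]; positivity
  refine ⟨M, lam, hM0, hlam0, ?_⟩
  intro t₀ ht₀ x₁ x₂ hx₁c hx₂c hI₁ hI₂ hE₁ hE₂ t ht
  obtain ⟨nX, hnXdef⟩ : ∃ f : ℝ → ℝ, f = fun u => ‖(x₁ u, x₂ u)‖ := ⟨_, rfl⟩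
  have hnXu : ∀ u, nX u = max |x₁ u| |x₂ u| := by
    intro u; simp only [hnXdef, Prod.norm_def, Real.norm_eq_abs]
  have hnX₁ : ∀ u, |x₁ u| ≤ nX u := fun u => by rw [hnXu]; exact le_max_left _ _
  have hnX₂ : ∀ u, |x₂ u| ≤ nX u := fun u => by rw [hnXu]; exact le_max_right _ _
  have hnXmax : ∀ u b, |x₁ u| ≤ b → |x₂ u| ≤ b → nX u ≤ b := fun u b p q => by
    rw [hnXu]; exact max_le p q
  have hnX0 : ∀ u, 0 ≤ nX u := fun u => by rw [hnXdef]; exact norm_nonneg _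
  have hnXc : Continuous nX := by rw [hnXdef]; exact (hx₁c.prodMk hx₂c).norm
  rw [← hnXdef]
  have hxt : ‖(x₁ t, x₂ t)‖ = nX t := by rw [hnXdef]
  have hxt₀ : ‖(x₁ t₀, x₂ t₀)‖ = nX t₀ := by rw [hnXdef]
  rw [hxt, hxt₀, ← hrdef]
  obtain ⟨K, hKdef⟩ : ∃ c, c = nX t₀ + sSup (nX '' Set.Icc (t₀ - r) t₀) := ⟨_, rfl⟩
  rw [← hKdef]
  -- history bound
  have hbdd : BddAbove (nX '' Set.Icc (t₀ - r) t₀) := (isCompact_Icc.image hnXc).bddAbove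
  have hsup0 : nX t₀ ≤ sSup (nX '' Set.Icc (t₀ - r) t₀) :=
    le_csSup hbdd ⟨t₀, ⟨by linarith, le_rfl⟩, rfl⟩
  have hhist : ∀ u, t₀ - r ≤ u → u ≤ t₀ → nX u ≤ K := by
    intro u h1 h2
    have := le_csSup hbdd ⟨u, ⟨h1, h2⟩, rfl⟩
    rw [hKdef]; linarith [hnX0 t₀]
  have hK0 : 0 ≤ K := le_trans (hnX0 t₀) (hhist t₀ (by linarith) le_rfl)
  have hKt₀ : nX t₀ ≤ K := hhist t₀ (by linarith) le_rfl
  -- per-solution integrability and equation facts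
  obtain ⟨f₁, hf₁def⟩ : ∃ f : ℝ → ℝ,
    f = fun s => -(a₁ s) * x₁ (h₁ s) + (F₁₁ s (x₁ (g₁₁ s)) + F₁₂ s (x₂ (g₁₂ s))) := ⟨_, rfl⟩
  obtain ⟨f₂, hf₂def⟩ : ∃ f : ℝ → ℝ,
    f = fun s => -(a₂ s) * x₂ (h₂ s) + (F₂₁ s (x₁ (g₂₁ s)) + F₂₂ s (x₂ (g₂₂ s))) := ⟨_, rfl⟩
  rw [← hf₁def] at hI₁ hE₁
  rw [← hf₂def] at hI₂ hE₂
  have hIsub₁ : ∀ t₂ t₃, t₀ ≤ t₂ → t₂ ≤ t₃ → IntervalIntegrable f₁ volume t₂ t₃ := by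
    intro t₂ t₃ h2 h3
    exact (hI₁ t₃ (h2.trans h3)).mono_set
      (by rw [Set.uIcc_of_le h3, Set.uIcc_of_le (h2.trans h3)]
          exact Set.Icc_subset_Icc h2 le_rfl)
  have hIsub₂ : ∀ t₂ t₃, t₀ ≤ t₂ → t₂ ≤ t₃ → IntervalIntegrable f₂ volume t₂ t₃ := by
    intro t₂ t₃ h2 h3
    exact (hI₂ t₃ (h2.trans h3)).mono_set
      (by rw [Set.uIcc_of_le h3, Set.uIcc_of_le (h2.trans h3)]
          exact Set.Icc_subset_Icc h2 le_rfl)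
  have hyd₁ : ∀ t₂ t₃, t₀ ≤ t₂ → t₂ ≤ t₃ → x₁ t₃ - x₁ t₂ = ∫ s in t₂..t₃, f₁ s := by
    intro t₂ t₃ h2 h3
    have e2 := hE₁ t₂ h2
    have e3 := hE₁ t₃ (h2.trans h3)
    have hadd := intervalIntegral.integral_add_adjacent_intervals
      (hI₁ t₂ h2) (hIsub₁ t₂ t₃ h2 h3)
    rw [e3, e2]; linarith [hadd]
  have hyd₂ : ∀ t₂ t₃, t₀ ≤ t₂ → t₂ ≤ t₃ → x₂ t₃ - x₂ t₂ = ∫ s in t₂..t₃, f₂ s := by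
    intro t₂ t₃ h2 h3
    have e2 := hE₂ t₂ h2
    have e3 := hE₂ t₃ (h2.trans h3)
    have hadd := intervalIntegral.integral_add_adjacent_intervals
      (hI₂ t₂ h2) (hIsub₂ t₂ t₃ h2 h3)
    rw [e3, e2]; linarith [hadd]
  -- pointwise bounds on f under a window bound
  have hfb₁ : ∀ T' B, t₀ ≤ T' → 0 ≤ B → (∀ u, t₀ - r ≤ u → u ≤ T' → nX u ≤ B) →
      ∀ s, t₀ ≤ s → s ≤ T' → |f₁ s| ≤ C * B := by
    intro T' B hT' hB hwin s hs1 hs2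
    have hs0 : (0:ℝ) ≤ s := le_trans ht₀ hs1
    obtain ⟨hh1, hh2⟩ := hh₁ s hs0
    obtain ⟨hg1, hg2⟩ := hg₁₁ s hs0
    obtain ⟨hg3, hg4⟩ := hg₁₂ s hs0
    have hxh : |x₁ (h₁ s)| ≤ B :=
      le_trans (hnX₁ _) (hwin _ (by linarith) (by linarith))
    have hxg1 : |x₁ (g₁₁ s)| ≤ B :=
      le_trans (hnX₁ _) (hwin _ (by linarith) (by linarith))
    have hxg2 : |x₂ (g₁₂ s)| ≤ B :=
      le_trans (hnX₂ _) (hwin _ (by linarith) (by linarith))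
    obtain ⟨ha1, ha2⟩ := ha₁_bd s hs0
    have hFa : |F₁₁ s (x₁ (g₁₁ s))| ≤ L₁₁ * B := by
      refine le_trans (hL₁₁ s _ hs0) (mul_le_mul_of_nonneg_left hxg1 hL₁₁0)
    have hFb : |F₁₂ s (x₂ (g₁₂ s))| ≤ L₁₂ * B := by
      refine le_trans (hL₁₂ s _ hs0) (mul_le_mul_of_nonneg_left hxg2 hL₁₂0)
    have hax : |(-(a₁ s)) * x₁ (h₁ s)| ≤ A₁ * B := by
      rw [abs_mul, abs_neg, abs_of_pos (lt_of_lt_of_le hα₁ ha1)]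
      exact mul_le_mul ha2 hxh (abs_nonneg _) hA₁pos.le
    have habs : |f₁ s| ≤ |(-(a₁ s)) * x₁ (h₁ s)| + (|F₁₁ s (x₁ (g₁₁ s))| + |F₁₂ s (x₂ (g₁₂ s))|) := by
      rw [hf₁def]
      exact le_trans (abs_add_le _ _) (by linarith [abs_add_le (F₁₁ s (x₁ (g₁₁ s))) (F₁₂ s (x₂ (g₁₂ s)))])
    have hCB : (A₁ + L₁₁ + L₁₂) * B ≤ C * B := mul_le_mul_of_nonneg_right hCb₁ hB
    linarith [habs, hax, hFa, hFb, hCB]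
  have hfb₂ : ∀ T' B, t₀ ≤ T' → 0 ≤ B → (∀ u, t₀ - r ≤ u → u ≤ T' → nX u ≤ B) →
      ∀ s, t₀ ≤ s → s ≤ T' → |f₂ s| ≤ C * B := by
    intro T' B hT' hB hwin s hs1 hs2
    have hs0 : (0:ℝ) ≤ s := le_trans ht₀ hs1
    obtain ⟨hh1, hh2⟩ := hh₂ s hs0
    obtain ⟨hg1, hg2⟩ := hg₂₁ s hs0
    obtain ⟨hg3, hg4⟩ := hg₂₂ s hs0
    have hxh : |x₂ (h₂ s)| ≤ B :=
      le_trans (hnX₂ _) (hwin _ (by linarith) (by linarith))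
    have hxg1 : |x₁ (g₂₁ s)| ≤ B :=
      le_trans (hnX₁ _) (hwin _ (by linarith) (by linarith))
    have hxg2 : |x₂ (g₂₂ s)| ≤ B :=
      le_trans (hnX₂ _) (hwin _ (by linarith) (by linarith))
    obtain ⟨ha1, ha2⟩ := ha₂_bd s hs0
    have hFa : |F₂₁ s (x₁ (g₂₁ s))| ≤ L₂₁ * B := by
      refine le_trans (hL₂₁ s _ hs0) (mul_le_mul_of_nonneg_left hxg1 hL₂₁0)
    have hFb : |F₂₂ s (x₂ (g₂₂ s))| ≤ L₂₂ * B := by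
      refine le_trans (hL₂₂ s _ hs0) (mul_le_mul_of_nonneg_left hxg2 hL₂₂0)
    have hax : |(-(a₂ s)) * x₂ (h₂ s)| ≤ A₂ * B := by
      rw [abs_mul, abs_neg, abs_of_pos (lt_of_lt_of_le hα₂ ha1)]
      exact mul_le_mul ha2 hxh (abs_nonneg _) hA₂pos.le
    have habs : |f₂ s| ≤ |(-(a₂ s)) * x₂ (h₂ s)| + (|F₂₁ s (x₁ (g₂₁ s))| + |F₂₂ s (x₂ (g₂₂ s))|) := by
      rw [hf₂def]
      exact le_trans (abs_add_le _ _) (by linarith [abs_add_le (F₂₁ s (x₁ (g₂₁ s))) (F₂₂ s (x₂ (g₂₂ s)))])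
    have hCB : (A₂ + L₂₁ + L₂₂) * B ≤ C * B := mul_le_mul_of_nonneg_right hCb₂ hB
    linarith [habs, hax, hFa, hFb, hCB]
  -- conclusion via ι-perturbation
  suffices H : ∀ ι : ℝ, 0 < ι → nX t ≤ M * Real.exp (-lam*(t-t₀)) * (K + ι) by
    have hMe : 0 < M * Real.exp (-lam*(t-t₀)) := by positivity
    refine le_of_forall_pos_le_add fun ε hε => ?_
    have h := H (ε / (M * Real.exp (-lam*(t-t₀)))) (by positivity)
    calc nX t ≤ M * Real.exp (-lam*(t-t₀)) * (K + ε / (M * Real.exp (-lam*(t-t₀)))) := h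
      _ = M * Real.exp (-lam*(t-t₀)) * K + ε := by field_simp
  intro ι hι
  obtain ⟨Kp, hKpdef⟩ : ∃ c, c = K + ι := ⟨_, rfl⟩
  have hKp0 : 0 < Kp := by rw [hKpdef]; linarith
  have hKKp : K < Kp := by rw [hKpdef]; linarith
  -- growth estimate on the initial window
  have GA : ∀ u, t₀ ≤ u → u ≤ t₀ + Ts → nX u < Kp * Real.exp (2*C*(u-t₀)) := by
    obtain ⟨gA, hgAdef⟩ : ∃ f : ℝ → ℝ, f = fun v => nX v / Real.exp (2*C*(v-t₀)) := ⟨_, rfl⟩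
    have hgAc : Continuous gA := by
      rw [hgAdef]
      exact hnXc.div (Real.continuous_exp.comp
        (continuous_const.mul (continuous_id.sub continuous_const)))
        (fun v => (Real.exp_pos _).ne')
    have hgAle : ∀ v b, gA v ≤ b ↔ nX v ≤ b * Real.exp (2*C*(v-t₀)) := by
      intro v b; rw [hgAdef]; exact div_le_iff₀ (Real.exp_pos _)
    have hgAlt : ∀ v b, gA v < b ↔ nX v < b * Real.exp (2*C*(v-t₀)) := by
      intro v b; rw [hgAdef]; exact div_lt_iff₀ (Real.exp_pos _)
    have hgAge : ∀ v b, b ≤ gA v ↔ b * Real.exp (2*C*(v-t₀)) ≤ nX v := by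
      intro v b; rw [hgAdef]; exact le_div_iff₀ (Real.exp_pos _)
    have hgat₀ : gA t₀ < Kp := by
      rw [hgAlt]
      have : Real.exp (2*C*(t₀-t₀)) = 1 := by rw [show 2*C*(t₀-t₀) = 0 by ring, Real.exp_zero]
      rw [this, mul_one]; linarith
    obtain ⟨l, hldef⟩ : ∃ c, c = 1/(4*C) := ⟨_, rfl⟩
    have hl0 : 0 < l := by rw [hldef]; positivity
    have hlC : 2*C*l = 1/2 := by rw [hldef]; field_simp; ring
    obtain ⟨n₀, hn₀⟩ := exists_nat_ge (Ts/l)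
    have hn₀' : Ts ≤ (n₀:ℝ)*l := by
      calc Ts = (Ts/l)*l := by field_simp
        _ ≤ (n₀:ℝ)*l := mul_le_mul_of_nonneg_right hn₀ hl0.le
    have QA : ∀ n : ℕ, ∀ u, t₀ ≤ u → u ≤ t₀ + min ((n:ℝ)*l) Ts → gA u < Kp := by
      intro n
      induction n with
      | zero =>
        intro u h1 h2
        simp only [Nat.cast_zero, zero_mul] at h2
        rw [min_eq_left hTs0.le] at h2
        have hu : u = t₀ := le_antisymm (by linarith) h1
        rw [hu]; exact hgat₀
      | succ n ih =>
        intro u hu1 hu2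
        by_contra hcon
        push_neg at hcon
        obtain ⟨T, hTmem, hTge, hTbd⟩ := crossing (a := t₀)
          (b := t₀ + min (((n:ℝ)+1)*l) Ts) (W := Kp) hgAc hgat₀
          ⟨u, ⟨hu1, by push_cast at hu2; exact hu2⟩, hcon⟩
        have hTt₀ : t₀ ≤ T := hTmem.1
        have hTub : T ≤ t₀ + Ts := le_trans hTmem.2 (by linarith [min_le_right (((n:ℝ)+1)*l) Ts])
        have hTub2 : T ≤ t₀ + ((n:ℝ)+1)*l := le_trans hTmem.2 (by linarith [min_le_left (((n:ℝ)+1)*l) Ts])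
        have hT1 : t₀ + min ((n:ℝ)*l) Ts < T := by
          by_contra hc; push_neg at hc
          exact absurd hTge (not_le.2 (ih T hTmem.1 hc))
        have hminn : (n:ℝ)*l ≤ Ts := by
          by_contra hc; push_neg at hc
          rw [min_eq_right hc.le] at hT1; linarith
        rw [min_eq_left hminn] at hT1
        obtain ⟨t₁, ht₁def⟩ : ∃ c, c = t₀ + (n:ℝ)*l := ⟨_, rfl⟩
        have ht₁T : t₁ < T := by rw [ht₁def]; exact hT1
        have ht₀t₁ : t₀ ≤ t₁ := by
          have := mul_nonneg (Nat.cast_nonneg n) hl0.le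
          rw [ht₁def]; linarith
        have hθl : T - t₁ ≤ l := by rw [ht₁def]; linarith [hTub2]
        obtain ⟨B, hBdef⟩ : ∃ c, c = Kp * Real.exp (2*C*(T-t₀)) := ⟨_, rfl⟩
        have hB0 : 0 < B := by rw [hBdef]; positivity
        have hBw : ∀ v, t₀ - r ≤ v → v ≤ T → nX v ≤ B := by
          intro v hv1 hv2
          rcases le_or_gt v t₀ with hv | hv
          · refine le_trans (hhist v hv1 hv) ?_
            have h5 : (1:ℝ) ≤ Real.exp (2*C*(T-t₀)) :=
              Real.one_le_exp (mul_nonneg (by linarith) (by linarith))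
            have h6 : Kp * 1 ≤ Kp * Real.exp (2*C*(T-t₀)) :=
              mul_le_mul_of_nonneg_left h5 hKp0.le
            rw [hBdef]; linarith
          · have h5 := (hgAle v Kp).1 (hTbd v (by linarith) hv2)
            refine le_trans h5 ?_
            rw [hBdef]
            exact mul_le_mul_of_nonneg_left
              (Real.exp_le_exp.2 (mul_le_mul_of_nonneg_left (by linarith) (by linarith)))
              hKp0.le
        have hint₁ : |x₁ T| ≤ |x₁ t₁| + (C*B)*(T-t₁) := by
          have heq := hyd₁ t₁ T ht₀t₁ ht₁T.le
          have hub := intervalIntegral.norm_integral_le_of_norm_le_const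
            (C := C*B) (f := f₁) (a := t₁) (b := T) ?_
          · rw [Real.norm_eq_abs] at hub
            rw [abs_of_nonneg (by linarith : (0:ℝ) ≤ T - t₁)] at hub
            have h7 : x₁ T = x₁ t₁ + ∫ s in t₁..T, f₁ s := by linarith [heq]
            calc |x₁ T| = |x₁ t₁ + ∫ s in t₁..T, f₁ s| := by rw [← h7]
              _ ≤ |x₁ t₁| + |∫ s in t₁..T, f₁ s| := abs_add_le _ _
              _ ≤ |x₁ t₁| + (C*B)*(T-t₁) := by linarith [hub]
          · intro s hs
            rw [Set.uIoc_of_le ht₁T.le] at hs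
            rw [Real.norm_eq_abs]
            exact hfb₁ T B hTt₀ hB0.le hBw s (le_trans ht₀t₁ hs.1.le) hs.2
        have hint₂ : |x₂ T| ≤ |x₂ t₁| + (C*B)*(T-t₁) := by
          have heq := hyd₂ t₁ T ht₀t₁ ht₁T.le
          have hub := intervalIntegral.norm_integral_le_of_norm_le_const
            (C := C*B) (f := f₂) (a := t₁) (b := T) ?_
          · rw [Real.norm_eq_abs] at hub
            rw [abs_of_nonneg (by linarith : (0:ℝ) ≤ T - t₁)] at hub
            have h7 : x₂ T = x₂ t₁ + ∫ s in t₁..T, f₂ s := by linarith [heq]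
            calc |x₂ T| = |x₂ t₁ + ∫ s in t₁..T, f₂ s| := by rw [← h7]
              _ ≤ |x₂ t₁| + |∫ s in t₁..T, f₂ s| := abs_add_le _ _
              _ ≤ |x₂ t₁| + (C*B)*(T-t₁) := by linarith [hub]
          · intro s hs
            rw [Set.uIoc_of_le ht₁T.le] at hs
            rw [Real.norm_eq_abs]
            exact hfb₂ T B hTt₀ hB0.le hBw s (le_trans ht₀t₁ hs.1.le) hs.2
        have hnXT : nX T ≤ nX t₁ + (C*B)*(T-t₁) := by
          refine hnXmax T _ (le_trans hint₁ ?_) (le_trans hint₂ ?_)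
          · linarith [hnX₁ t₁]
          · linarith [hnX₂ t₁]
        obtain ⟨B₁, hB₁def⟩ : ∃ c, c = Kp * Real.exp (2*C*((n:ℝ)*l)) := ⟨_, rfl⟩
        have hB₁0 : 0 < B₁ := by rw [hB₁def]; positivity
        have hnXt₁ : nX t₁ < B₁ := by
          have h8 := ih t₁ ht₀t₁ (by rw [min_eq_left hminn, ht₁def])
          rw [hgAlt] at h8
          rw [hB₁def, show 2*C*((n:ℝ)*l) = 2*C*(t₁-t₀) by rw [ht₁def]; ring]
          exact h8
        have hBle : B ≤ nX T := by rw [hBdef]; exact (hgAge T Kp).1 hTge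
        obtain ⟨e2, he2def⟩ : ∃ c, c = Real.exp (2*C*(T-t₁)) := ⟨_, rfl⟩
        have hBsplit : B = B₁ * e2 := by
          have hsp : (2:ℝ)*C*(T-t₀) = 2*C*((n:ℝ)*l) + 2*C*(T-t₁) := by
            rw [ht₁def]; ring
          rw [hBdef, hB₁def, he2def, hsp, Real.exp_add]; ring
        have he21 : 1 + 2*C*(T-t₁) ≤ e2 := by
          rw [he2def]; linarith [Real.add_one_le_exp (2*C*(T-t₁))]
        have he22 : e2 ≤ 2 := by
          rw [he2def]
          have h9 : 2*C*(T-t₁) ≤ 1/2 := by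
            have := mul_le_mul_of_nonneg_left hθl (by linarith : (0:ℝ) ≤ 2*C)
            linarith [hlC]
          exact le_trans (Real.exp_le_exp.2 h9) exp_half_lt_two.le
        have hCθ : (0:ℝ) ≤ C*(T-t₁) := mul_nonneg hC0.le (by linarith)
        have h9 : C*(T-t₁)*(B₁*e2) ≤ C*(T-t₁)*(2*B₁) := by
          refine mul_le_mul_of_nonneg_left ?_ hCθ
          have h9a : B₁*e2 ≤ B₁*2 := mul_le_mul_of_nonneg_left he22 hB₁0.le
          linarith
        have h10 : B₁*(1+2*C*(T-t₁)) ≤ B₁*e2 := mul_le_mul_of_nonneg_left he21 hB₁0.le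
        rw [hBsplit] at hBle hnXT
        linarith [hBle, hnXT, hnXt₁, h9, h10]
    intro u h1 h2
    have h3 := QA n₀ u h1 (by rw [min_eq_right hn₀']; exact h2)
    rw [hgAlt] at h3
    exact h3
  -- decay via Razumikhin
  obtain ⟨W, hWdef⟩ : ∃ c, c = 2*Kp*G*Real.exp (lam*Ts)/γm := ⟨_, rfl⟩
  have hW0 : 0 < W := by rw [hWdef]; positivity
  obtain ⟨fB, hfBdef⟩ : ∃ f : ℝ → ℝ,
    f = fun u => max (|x₁ u|/γ₁) (|x₂ u|/γ₂) / Real.exp (-(lam*(u-t₀))) := ⟨_, rfl⟩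
  have MB : ∀ s, t₀ - r ≤ s → fB s ≤ W := by
    have hfBc : Continuous fB := by
      rw [hfBdef]
      exact ((hx₁c.abs.div_const γ₁).max (hx₂c.abs.div_const γ₂)).div
        (Real.continuous_exp.comp
          ((continuous_const.mul (continuous_id.sub continuous_const)).neg))
        (fun v => (Real.exp_pos _).ne')
    have hinit : ∀ v, t₀ - r ≤ v → v ≤ t₀ + Ts → fB v ≤ W/2 := by
      intro v hv1 hv2
      have hnXv : nX v ≤ Kp*G := by
        rcases le_or_gt v t₀ with hv | hv
        · have h4 := hhist v hv1 hv
          have h5 : Kp*1 ≤ Kp*G := mul_le_mul_of_nonneg_left hG1 hKp0.le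
          linarith
        · have h5 := GA v hv.le hv2
          have h6 : Real.exp (2*C*(v-t₀)) ≤ G := by
            rw [hGdef]
            exact Real.exp_le_exp.2 (mul_le_mul_of_nonneg_left (by linarith) (by linarith))
          calc nX v ≤ Kp*Real.exp (2*C*(v-t₀)) := h5.le
            _ ≤ Kp*G := mul_le_mul_of_nonneg_left h6 hKp0.le
      rw [hfBdef]
      rw [div_le_iff₀ (Real.exp_pos _)]
      have hm1 : |x₁ v|/γ₁ ≤ nX v/γm := div_le_div₀ (hnX0 v) (hnX₁ v) hγm0 hγ₁m
      have hm2 : |x₂ v|/γ₂ ≤ nX v/γm := div_le_div₀ (hnX0 v) (hnX₂ v) hγm0 hγ₂m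
      have hexp1 : (1:ℝ) ≤ Real.exp (lam*Ts) * Real.exp (-(lam*(v-t₀))) := by
        rw [← Real.exp_add,
          show lam*Ts + -(lam*(v-t₀)) = lam*(Ts-(v-t₀)) by ring]
        exact Real.one_le_exp (mul_nonneg hlam0.le (by linarith))
      have h7 : Kp*G ≤ Kp*G*(Real.exp (lam*Ts)*Real.exp (-(lam*(v-t₀)))) :=
        le_mul_of_one_le_right (by positivity) hexp1
      have hmain : nX v / γm ≤ (W/2) * Real.exp (-(lam*(v-t₀))) := by
        have heq9 : (W/2) * Real.exp (-(lam*(v-t₀))) =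
            (Kp*G*(Real.exp (lam*Ts)*Real.exp (-(lam*(v-t₀)))))/γm := by
          rw [hWdef]; field_simp
        rw [heq9]
        exact (div_le_div_iff_of_pos_right hγm0).2 (le_trans hnXv h7)
      exact max_le (le_trans hm1 hmain) (le_trans hm2 hmain)
    by_contra hcon
    push_neg at hcon
    obtain ⟨tb, htb1, htb2⟩ := hcon
    have hfB0 : fB (t₀ - r) < W := lt_of_le_of_lt (hinit _ le_rfl (by linarith)) (by linarith)
    obtain ⟨T, hTmem, hTge, hTbd⟩ := crossing (a := t₀ - r) (b := tb) (W := W)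
      hfBc hfB0 ⟨tb, ⟨htb1, le_rfl⟩, htb2.le⟩
    have hTbig : t₀ + Ts < T := by
      by_contra hc; push_neg at hc
      have := hinit T hTmem.1 hc
      linarith
    have hTt₀ : t₀ + Δ + r < T := by rw [hTsdef] at hTbig; linarith
    have hwin₁ : ∀ v, t₀ - r ≤ v → v ≤ T → |x₁ v| ≤ γ₁*(W*Real.exp (-(lam*(v-t₀)))) := by
      intro v h1 h2
      have h3 := hTbd v h1 h2
      rw [hfBdef] at h3
      have h4 := (div_le_iff₀ (Real.exp_pos _)).1 h3
      have h5 := le_trans (le_max_left (|x₁ v|/γ₁) (|x₂ v|/γ₂)) h4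
      calc |x₁ v| = (|x₁ v|/γ₁)*γ₁ := by field_simp
        _ ≤ (W*Real.exp (-(lam*(v-t₀))))*γ₁ := mul_le_mul_of_nonneg_right h5 hγ₁.le
        _ = γ₁*(W*Real.exp (-(lam*(v-t₀)))) := by ring
    have hwin₂ : ∀ v, t₀ - r ≤ v → v ≤ T → |x₂ v| ≤ γ₂*(W*Real.exp (-(lam*(v-t₀)))) := by
      intro v h1 h2
      have h3 := hTbd v h1 h2
      rw [hfBdef] at h3
      have h4 := (div_le_iff₀ (Real.exp_pos _)).1 h3
      have h5 := le_trans (le_max_right (|x₁ v|/γ₁) (|x₂ v|/γ₂)) h4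
      calc |x₂ v| = (|x₂ v|/γ₂)*γ₂ := by field_simp
        _ ≤ (W*Real.exp (-(lam*(v-t₀))))*γ₂ := mul_le_mul_of_nonneg_right h5 hγ₂.le
        _ = γ₂*(W*Real.exp (-(lam*(v-t₀)))) := by ring
    obtain ⟨W', hW'def⟩ : ∃ c, c = W*Real.exp (-(lam*(T-t₀))) := ⟨_, rfl⟩
    have hW'0 : 0 < W' := by rw [hW'def]; positivity
    obtain ⟨E, hEdef⟩ : ∃ c, c = Real.exp (lam*(Δ+2*r)) := ⟨_, rfl⟩
    have hE0 : 0 < E := by rw [hEdef]; positivity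
    obtain ⟨WE, hWEdef⟩ : ∃ c, c = W'*E := ⟨_, rfl⟩
    have hWE0 : 0 < WE := by rw [hWEdef]; exact mul_pos hW'0 hE0
    have hesplit : ∀ v, W*Real.exp (-(lam*(v-t₀))) = W'*Real.exp (lam*(T-v)) := by
      intro v
      rw [show -(lam*(v-t₀)) = -(lam*(T-t₀)) + lam*(T-v) by ring, Real.exp_add, hW'def]
      ring
    have hwinE₁ : ∀ v, T-(Δ+2*r) ≤ v → v ≤ T → |x₁ v| ≤ γ₁*WE := by
      intro v h1 h2
      have h3 := hwin₁ v (by linarith) h2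
      rw [hesplit v] at h3
      have h4 : Real.exp (lam*(T-v)) ≤ E := by
        rw [hEdef]
        exact Real.exp_le_exp.2 (mul_le_mul_of_nonneg_left (by linarith) hlam0.le)
      have h5 : W'*Real.exp (lam*(T-v)) ≤ W'*E := mul_le_mul_of_nonneg_left h4 hW'0.le
      rw [hWEdef]
      calc |x₁ v| ≤ γ₁*(W'*Real.exp (lam*(T-v))) := h3
        _ ≤ γ₁*(W'*E) := mul_le_mul_of_nonneg_left h5 hγ₁.le
    have hwinE₂ : ∀ v, T-(Δ+2*r) ≤ v → v ≤ T → |x₂ v| ≤ γ₂*WE := by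
      intro v h1 h2
      have h3 := hwin₂ v (by linarith) h2
      rw [hesplit v] at h3
      have h4 : Real.exp (lam*(T-v)) ≤ E := by
        rw [hEdef]
        exact Real.exp_le_exp.2 (mul_le_mul_of_nonneg_left (by linarith) hlam0.le)
      have h5 : W'*Real.exp (lam*(T-v)) ≤ W'*E := mul_le_mul_of_nonneg_left h4 hW'0.le
      rw [hWEdef]
      calc |x₂ v| ≤ γ₂*(W'*Real.exp (lam*(T-v))) := h3
        _ ≤ γ₂*(W'*E) := mul_le_mul_of_nonneg_left h5 hγ₂.le
    have hTg := hTge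
    rw [hfBdef] at hTg
    have hTineq := (le_div_iff₀ (Real.exp_pos _)).1 hTg
    rw [show W * Real.exp (-(lam*(T-t₀))) = W' from hW'def.symm] at hTineq
    have hE1 : (1:ℝ) ≤ E := by
      rw [hEdef]
      exact Real.one_le_exp (mul_nonneg hlam0.le (by linarith))
    rcases le_max_iff.1 hTineq with hbr | hbr
    · -- branch i = 1
      have hyT' : γ₁*W' ≤ |x₁ T| := by
        have := (le_div_iff₀ hγ₁).1 hbr
        linarith [this]
      have hfInt' : IntervalIntegrable f₁ volume (T-Δ) T :=
        hIsub₁ (T-Δ) T (by linarith) (by linarith)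
      have haInt' : IntervalIntegrable a₁ volume (T-Δ) T := by
        refine intervalIntegrable_of_bdd ha₁_meas (C := A₁) ?_
        intro s hs
        rw [Set.uIoc_of_le (by linarith : T-Δ ≤ T)] at hs
        obtain ⟨hb1, hb2⟩ := ha₁_bd s (by linarith [hs.1])
        exact abs_le.2 ⟨by linarith, hb2⟩
      have hIa' : α₁ * Δ ≤ ∫ s in (T-Δ)..T, a₁ s := by
        have hca := intervalIntegral.integral_mono_on (by linarith : T-Δ ≤ T)
          (intervalIntegrable_const (c := α₁)) haInt'
          (fun s hs => (ha₁_bd s (by linarith [hs.1])).1)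
        rw [intervalIntegral.integral_const, smul_eq_mul] at hca
        calc α₁*Δ = (T-(T-Δ))*α₁ := by ring
          _ ≤ ∫ s in (T-Δ)..T, a₁ s := hca
      have hfb' : ∀ u, T-(Δ+τ₁) ≤ u → u ≤ T →
          |f₁ u| ≤ (A₁*γ₁ + (L₁₁*γ₁ + L₁₂*γ₂))*WE := by
        intro u h1 h2
        have hu0 : (0:ℝ) ≤ u := by linarith
        obtain ⟨hp1, hp2⟩ := hh₁ u hu0
        obtain ⟨hq1, hq2⟩ := hg₁₁ u hu0
        obtain ⟨hq3, hq4⟩ := hg₁₂ u hu0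
        have hxh : |x₁ (h₁ u)| ≤ γ₁*WE := hwinE₁ _ (by linarith) (by linarith)
        have hxg1 : |x₁ (g₁₁ u)| ≤ γ₁*WE := hwinE₁ _ (by linarith) (by linarith)
        have hxg2 : |x₂ (g₁₂ u)| ≤ γ₂*WE := hwinE₂ _ (by linarith) (by linarith)
        obtain ⟨hb1, hb2⟩ := ha₁_bd u hu0
        have hγWE1 : (0:ℝ) ≤ γ₁*WE := mul_nonneg hγ₁.le hWE0.le
        have hFa : |F₁₁ u (x₁ (g₁₁ u))| ≤ L₁₁*(γ₁*WE) :=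
          le_trans (hL₁₁ u _ hu0) (mul_le_mul_of_nonneg_left hxg1 hL₁₁0)
        have hFb : |F₁₂ u (x₂ (g₁₂ u))| ≤ L₁₂*(γ₂*WE) :=
          le_trans (hL₁₂ u _ hu0) (mul_le_mul_of_nonneg_left hxg2 hL₁₂0)
        have hax : |(-(a₁ u)) * x₁ (h₁ u)| ≤ A₁*(γ₁*WE) := by
          rw [abs_mul, abs_neg, abs_of_pos (lt_of_lt_of_le hα₁ hb1)]
          exact mul_le_mul hb2 hxh (abs_nonneg _) hA₁pos.le
        have habs : |f₁ u| ≤ |(-(a₁ u)) * x₁ (h₁ u)| +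
            (|F₁₁ u (x₁ (g₁₁ u))| + |F₁₂ u (x₂ (g₁₂ u))|) := by
          rw [hf₁def]
          exact le_trans (abs_add_le _ _)
            (by linarith [abs_add_le (F₁₁ u (x₁ (g₁₁ u))) (F₁₂ u (x₂ (g₁₂ u)))])
        have hre : A₁*(γ₁*WE) + (L₁₁*(γ₁*WE) + L₁₂*(γ₂*WE)) =
            (A₁*γ₁ + (L₁₁*γ₁ + L₁₂*γ₂))*WE := by ring
        linarith [habs, hax, hFa, hFb, hre.le]
      have hh' : ∀ s, T-Δ < s → s ≤ T → t₀ ≤ h₁ s ∧ h₁ s ≤ s ∧ T - h₁ s ≤ Δ + τ₁ := by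
        intro s h1 h2
        obtain ⟨hp1, hp2⟩ := hh₁ s (by linarith)
        exact ⟨by linarith, by linarith, by linarith⟩
      have hptw' : ∀ s, T-Δ < s → s ≤ T →
          |f₁ s + a₁ s * x₁ T| ≤ A₁ * |x₁ T - x₁ (h₁ s)| + (L₁₁*γ₁ + L₁₂*γ₂)*WE := by
        intro s h1 h2
        have hs0 : (0:ℝ) ≤ s := by linarith
        obtain ⟨hq1, hq2⟩ := hg₁₁ s hs0
        obtain ⟨hq3, hq4⟩ := hg₁₂ s hs0
        have hxg1 : |x₁ (g₁₁ s)| ≤ γ₁*WE := hwinE₁ _ (by linarith) (by linarith)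
        have hxg2 : |x₂ (g₁₂ s)| ≤ γ₂*WE := hwinE₂ _ (by linarith) (by linarith)
        obtain ⟨hb1, hb2⟩ := ha₁_bd s hs0
        have hFa : |F₁₁ s (x₁ (g₁₁ s))| ≤ L₁₁*(γ₁*WE) :=
          le_trans (hL₁₁ s _ hs0) (mul_le_mul_of_nonneg_left hxg1 hL₁₁0)
        have hFb : |F₁₂ s (x₂ (g₁₂ s))| ≤ L₁₂*(γ₂*WE) :=
          le_trans (hL₁₂ s _ hs0) (mul_le_mul_of_nonneg_left hxg2 hL₁₂0)
        have hrw : f₁ s + a₁ s * x₁ T =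
            a₁ s * (x₁ T - x₁ (h₁ s)) + (F₁₁ s (x₁ (g₁₁ s)) + F₁₂ s (x₂ (g₁₂ s))) := by
          rw [hf₁def]; ring
        have hax : |a₁ s * (x₁ T - x₁ (h₁ s))| ≤ A₁ * |x₁ T - x₁ (h₁ s)| := by
          rw [abs_mul, abs_of_pos (lt_of_lt_of_le hα₁ hb1)]
          exact mul_le_mul_of_nonneg_right hb2 (abs_nonneg _)
        have hre : L₁₁*(γ₁*WE) + L₁₂*(γ₂*WE) = (L₁₁*γ₁ + L₁₂*γ₂)*WE := by ring
        calc |f₁ s + a₁ s * x₁ T|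
            = |a₁ s * (x₁ T - x₁ (h₁ s)) + (F₁₁ s (x₁ (g₁₁ s)) + F₁₂ s (x₂ (g₁₂ s)))| := by
              rw [hrw]
          _ ≤ |a₁ s * (x₁ T - x₁ (h₁ s))| + (|F₁₁ s (x₁ (g₁₁ s))| + |F₁₂ s (x₂ (g₁₂ s))|) :=
              le_trans (abs_add_le _ _)
                (by linarith [abs_add_le (F₁₁ s (x₁ (g₁₁ s))) (F₁₂ s (x₂ (g₁₂ s)))])
          _ ≤ A₁ * |x₁ T - x₁ (h₁ s)| + (L₁₁*γ₁ + L₁₂*γ₂)*WE := by linarith [hax, hFa, hFb]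
      have hyt₁' : |x₁ (T-Δ)| ≤ (γ₁*W') * Real.exp (lam*Δ) := by
        have h3 := hwin₁ (T-Δ) (by linarith) (by linarith)
        rw [hesplit (T-Δ), show lam*(T-(T-Δ)) = lam*Δ by ring] at h3
        calc |x₁ (T-Δ)| ≤ γ₁*(W'*Real.exp (lam*Δ)) := h3
          _ = (γ₁*W') * Real.exp (lam*Δ) := by ring
      have hS0' : (0:ℝ) ≤ A₁*γ₁ + (L₁₁*γ₁ + L₁₂*γ₂) := by
        linarith [mul_pos hA₁pos hγ₁, mul_nonneg hL₁₁0 hγ₁.le, mul_nonneg hL₁₂0 hγ₂.le]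
      have hLg0 : (0:ℝ) ≤ L₁₁*γ₁ + L₁₂*γ₂ := by
        linarith [mul_nonneg hL₁₁0 hγ₁.le, mul_nonneg hL₁₂0 hγ₂.le]
      have KEY := key f₁ a₁ x₁ h₁ t₀ T Δ τ₁ α₁ A₁ (γ₁*W')
        ((A₁*γ₁ + (L₁₁*γ₁ + L₁₂*γ₂))*WE) ((L₁₁*γ₁ + L₁₂*γ₂)*WE) lam
        hΔpos hτ₁0 hα₁.le hA₁pos.le (mul_pos hγ₁ hW'0)
        (mul_nonneg hS0' hWE0.le) (mul_nonneg hLg0 hWE0.le)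
        (by linarith) hyd₁ hfInt' haInt' hIa' hfb' hh' hptw' hyT' hyt₁'
      have MUL := mul_lt_mul_of_pos_right NI₁ hW'0
      have EQ2 : (γ₁*W')*Real.exp (lam*Δ) +
          Δ*(A₁*(Δ+τ₁)*((A₁*γ₁ + (L₁₁*γ₁ + L₁₂*γ₂))*WE) + (L₁₁*γ₁ + L₁₂*γ₂)*WE) =
          (γ₁ * Real.exp (lam*Δ) +
            Δ*(A₁*(Δ+τ₁)*(A₁*γ₁ + (L₁₁*γ₁ + L₁₂*γ₂)) + (L₁₁*γ₁ + L₁₂*γ₂)) *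
              Real.exp (lam*(Δ+2*r)))*W' := by
        rw [hWEdef, hEdef]; ring
      linarith [KEY, MUL, EQ2.le, EQ2.ge]
    · -- branch i = 2
      have hyT' : γ₂*W' ≤ |x₂ T| := by
        have := (le_div_iff₀ hγ₂).1 hbr
        linarith [this]
      have hfInt' : IntervalIntegrable f₂ volume (T-Δ) T :=
        hIsub₂ (T-Δ) T (by linarith) (by linarith)
      have haInt' : IntervalIntegrable a₂ volume (T-Δ) T := by
        refine intervalIntegrable_of_bdd ha₂_meas (C := A₂) ?_
        intro s hs
        rw [Set.uIoc_of_le (by linarith : T-Δ ≤ T)] at hs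
        obtain ⟨hb1, hb2⟩ := ha₂_bd s (by linarith [hs.1])
        exact abs_le.2 ⟨by linarith, hb2⟩
      have hIa' : α₂ * Δ ≤ ∫ s in (T-Δ)..T, a₂ s := by
        have hca := intervalIntegral.integral_mono_on (by linarith : T-Δ ≤ T)
          (intervalIntegrable_const (c := α₂)) haInt'
          (fun s hs => (ha₂_bd s (by linarith [hs.1])).1)
        rw [intervalIntegral.integral_const, smul_eq_mul] at hca
        calc α₂*Δ = (T-(T-Δ))*α₂ := by ring
          _ ≤ ∫ s in (T-Δ)..T, a₂ s := hca
      have hfb' : ∀ u, T-(Δ+τ₂) ≤ u → u ≤ T →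
          |f₂ u| ≤ (A₂*γ₂ + (L₂₁*γ₁ + L₂₂*γ₂))*WE := by
        intro u h1 h2
        have hu0 : (0:ℝ) ≤ u := by linarith
        obtain ⟨hp1, hp2⟩ := hh₂ u hu0
        obtain ⟨hq1, hq2⟩ := hg₂₁ u hu0
        obtain ⟨hq3, hq4⟩ := hg₂₂ u hu0
        have hxh : |x₂ (h₂ u)| ≤ γ₂*WE := hwinE₂ _ (by linarith) (by linarith)
        have hxg1 : |x₁ (g₂₁ u)| ≤ γ₁*WE := hwinE₁ _ (by linarith) (by linarith)
        have hxg2 : |x₂ (g₂₂ u)| ≤ γ₂*WE := hwinE₂ _ (by linarith) (by linarith)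
        obtain ⟨hb1, hb2⟩ := ha₂_bd u hu0
        have hFa : |F₂₁ u (x₁ (g₂₁ u))| ≤ L₂₁*(γ₁*WE) :=
          le_trans (hL₂₁ u _ hu0) (mul_le_mul_of_nonneg_left hxg1 hL₂₁0)
        have hFb : |F₂₂ u (x₂ (g₂₂ u))| ≤ L₂₂*(γ₂*WE) :=
          le_trans (hL₂₂ u _ hu0) (mul_le_mul_of_nonneg_left hxg2 hL₂₂0)
        have hax : |(-(a₂ u)) * x₂ (h₂ u)| ≤ A₂*(γ₂*WE) := by
          rw [abs_mul, abs_neg, abs_of_pos (lt_of_lt_of_le hα₂ hb1)]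
          exact mul_le_mul hb2 hxh (abs_nonneg _) hA₂pos.le
        have habs : |f₂ u| ≤ |(-(a₂ u)) * x₂ (h₂ u)| +
            (|F₂₁ u (x₁ (g₂₁ u))| + |F₂₂ u (x₂ (g₂₂ u))|) := by
          rw [hf₂def]
          exact le_trans (abs_add_le _ _)
            (by linarith [abs_add_le (F₂₁ u (x₁ (g₂₁ u))) (F₂₂ u (x₂ (g₂₂ u)))])
        have hre : A₂*(γ₂*WE) + (L₂₁*(γ₁*WE) + L₂₂*(γ₂*WE)) =
            (A₂*γ₂ + (L₂₁*γ₁ + L₂₂*γ₂))*WE := by ring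
        linarith [habs, hax, hFa, hFb, hre.le]
      have hh' : ∀ s, T-Δ < s → s ≤ T → t₀ ≤ h₂ s ∧ h₂ s ≤ s ∧ T - h₂ s ≤ Δ + τ₂ := by
        intro s h1 h2
        obtain ⟨hp1, hp2⟩ := hh₂ s (by linarith)
        exact ⟨by linarith, by linarith, by linarith⟩
      have hptw' : ∀ s, T-Δ < s → s ≤ T →
          |f₂ s + a₂ s * x₂ T| ≤ A₂ * |x₂ T - x₂ (h₂ s)| + (L₂₁*γ₁ + L₂₂*γ₂)*WE := by
        intro s h1 h2
        have hs0 : (0:ℝ) ≤ s := by linarith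
        obtain ⟨hq1, hq2⟩ := hg₂₁ s hs0
        obtain ⟨hq3, hq4⟩ := hg₂₂ s hs0
        have hxg1 : |x₁ (g₂₁ s)| ≤ γ₁*WE := hwinE₁ _ (by linarith) (by linarith)
        have hxg2 : |x₂ (g₂₂ s)| ≤ γ₂*WE := hwinE₂ _ (by linarith) (by linarith)
        obtain ⟨hb1, hb2⟩ := ha₂_bd s hs0
        have hFa : |F₂₁ s (x₁ (g₂₁ s))| ≤ L₂₁*(γ₁*WE) :=
          le_trans (hL₂₁ s _ hs0) (mul_le_mul_of_nonneg_left hxg1 hL₂₁0)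
        have hFb : |F₂₂ s (x₂ (g₂₂ s))| ≤ L₂₂*(γ₂*WE) :=
          le_trans (hL₂₂ s _ hs0) (mul_le_mul_of_nonneg_left hxg2 hL₂₂0)
        have hrw : f₂ s + a₂ s * x₂ T =
            a₂ s * (x₂ T - x₂ (h₂ s)) + (F₂₁ s (x₁ (g₂₁ s)) + F₂₂ s (x₂ (g₂₂ s))) := by
          rw [hf₂def]; ring
        have hax : |a₂ s * (x₂ T - x₂ (h₂ s))| ≤ A₂ * |x₂ T - x₂ (h₂ s)| := by
          rw [abs_mul, abs_of_pos (lt_of_lt_of_le hα₂ hb1)]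
          exact mul_le_mul_of_nonneg_right hb2 (abs_nonneg _)
        calc |f₂ s + a₂ s * x₂ T|
            = |a₂ s * (x₂ T - x₂ (h₂ s)) + (F₂₁ s (x₁ (g₂₁ s)) + F₂₂ s (x₂ (g₂₂ s)))| := by
              rw [hrw]
          _ ≤ |a₂ s * (x₂ T - x₂ (h₂ s))| + (|F₂₁ s (x₁ (g₂₁ s))| + |F₂₂ s (x₂ (g₂₂ s))|) :=
              le_trans (abs_add_le _ _)
                (by linarith [abs_add_le (F₂₁ s (x₁ (g₂₁ s))) (F₂₂ s (x₂ (g₂₂ s)))])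
          _ ≤ A₂ * |x₂ T - x₂ (h₂ s)| + (L₂₁*γ₁ + L₂₂*γ₂)*WE := by
              have hre : L₂₁*(γ₁*WE) + L₂₂*(γ₂*WE) = (L₂₁*γ₁ + L₂₂*γ₂)*WE := by ring
              linarith [hax, hFa, hFb, hre.le]
      have hyt₁' : |x₂ (T-Δ)| ≤ (γ₂*W') * Real.exp (lam*Δ) := by
        have h3 := hwin₂ (T-Δ) (by linarith) (by linarith)
        rw [hesplit (T-Δ), show lam*(T-(T-Δ)) = lam*Δ by ring] at h3
        calc |x₂ (T-Δ)| ≤ γ₂*(W'*Real.exp (lam*Δ)) := h3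
          _ = (γ₂*W') * Real.exp (lam*Δ) := by ring
      have hS0' : (0:ℝ) ≤ A₂*γ₂ + (L₂₁*γ₁ + L₂₂*γ₂) := by
        linarith [mul_pos hA₂pos hγ₂, mul_nonneg hL₂₁0 hγ₁.le, mul_nonneg hL₂₂0 hγ₂.le]
      have hLg0 : (0:ℝ) ≤ L₂₁*γ₁ + L₂₂*γ₂ := by
        linarith [mul_nonneg hL₂₁0 hγ₁.le, mul_nonneg hL₂₂0 hγ₂.le]
      have KEY := key f₂ a₂ x₂ h₂ t₀ T Δ τ₂ α₂ A₂ (γ₂*W')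
        ((A₂*γ₂ + (L₂₁*γ₁ + L₂₂*γ₂))*WE) ((L₂₁*γ₁ + L₂₂*γ₂)*WE) lam
        hΔpos hτ₂0 hα₂.le hA₂pos.le (mul_pos hγ₂ hW'0)
        (mul_nonneg hS0' hWE0.le) (mul_nonneg hLg0 hWE0.le)
        (by linarith) hyd₂ hfInt' haInt' hIa' hfb' hh' hptw' hyT' hyt₁'
      have MUL := mul_lt_mul_of_pos_right NI₂ hW'0
      have EQ2 : (γ₂*W')*Real.exp (lam*Δ) +
          Δ*(A₂*(Δ+τ₂)*((A₂*γ₂ + (L₂₁*γ₁ + L₂₂*γ₂))*WE) + (L₂₁*γ₁ + L₂₂*γ₂)*WE) =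
          (γ₂ * Real.exp (lam*Δ) +
            Δ*(A₂*(Δ+τ₂)*(A₂*γ₂ + (L₂₁*γ₁ + L₂₂*γ₂)) + (L₂₁*γ₁ + L₂₂*γ₂)) *
              Real.exp (lam*(Δ+2*r)))*W' := by
        rw [hWEdef, hEdef]; ring
      linarith [KEY, MUL, EQ2.le, EQ2.ge]
  -- final computation
  have hfin := MB t (by linarith)
  rw [hfBdef] at hfin
  have hexp0 : (0:ℝ) < Real.exp (-(lam*(t-t₀))) := Real.exp_pos _
  have hmax : max (|x₁ t|/γ₁) (|x₂ t|/γ₂) ≤ W * Real.exp (-(lam*(t-t₀))) :=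
    (div_le_iff₀ hexp0).1 hfin
  have hx₁b : |x₁ t| ≤ γ₁ * (W * Real.exp (-(lam*(t-t₀)))) := by
    have := le_trans (le_max_left (|x₁ t|/γ₁) (|x₂ t|/γ₂)) hmax
    calc |x₁ t| = (|x₁ t|/γ₁) * γ₁ := by field_simp
      _ ≤ (W * Real.exp (-(lam*(t-t₀)))) * γ₁ := mul_le_mul_of_nonneg_right this hγ₁.le
      _ = γ₁ * (W * Real.exp (-(lam*(t-t₀)))) := by ring
  have hx₂b : |x₂ t| ≤ γ₂ * (W * Real.exp (-(lam*(t-t₀)))) := by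
    have := le_trans (le_max_right (|x₁ t|/γ₁) (|x₂ t|/γ₂)) hmax
    calc |x₂ t| = (|x₂ t|/γ₂) * γ₂ := by field_simp
      _ ≤ (W * Real.exp (-(lam*(t-t₀)))) * γ₂ := mul_le_mul_of_nonneg_right this hγ₂.le
      _ = γ₂ * (W * Real.exp (-(lam*(t-t₀)))) := by ring
  have hWe0 : 0 ≤ W * Real.exp (-(lam*(t-t₀))) := by positivity
  have hnXt : nX t ≤ γM * (W * Real.exp (-(lam*(t-t₀)))) := by
    refine hnXmax t _ (le_trans hx₁b ?_) (le_trans hx₂b ?_)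
    · exact mul_le_mul_of_nonneg_right hγ₁M hWe0
    · exact mul_le_mul_of_nonneg_right hγ₂M hWe0
  refine le_trans hnXt (le_of_eq ?_)
  rw [hWdef, hMdef, hKpdef]
  rw [show -lam*(t-t₀) = -(lam*(t-t₀)) by ring]
  field_simp
end

section
/- Suppose m = 2, L_11 < α_1, and (α_1 − L_11)(α_2 − L_22) > L_12 L_21. Then the system ẋ_i(t) = −a_i(t)x_i(t) + Σ_{j=1}^2 F_{ij}(t, x_j(g_{ij}(t))) is globally exponentially stable. -/
open MeasureTheory Set

lemma my_swap (f φ : ℝ → ℝ) (t₀ t : ℝ) (h : t₀ ≤ t)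
    (hf : IntervalIntegrable f volume t₀ t) (hφ : Continuous φ) :
    ∫ s in t₀..t, φ s * (∫ u in t₀..s, f u) = ∫ u in t₀..t, (∫ s in u..t, φ s) * f u := by
  set μ := volume.restrict (Set.Ioc t₀ t) with hμ
  have hφi : Integrable φ μ := hφ.integrableOn_Ioc
  have hfi : Integrable f μ := (intervalIntegrable_iff_integrableOn_Ioc_of_le h).1 hf
  set F : ℝ → ℝ → ℝ := fun s u => if u ≤ s then φ s * f u else 0 with hF
  have hunc : Function.uncurry F = ({p : ℝ × ℝ | p.2 ≤ p.1}).indicator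
      (fun p => φ p.1 * f p.2) := by
    funext p
    simp only [Function.uncurry, hF, Set.indicator_apply, Set.mem_setOf_eq]
  have hFint : Integrable (Function.uncurry F) (μ.prod μ) := by
    rw [hunc]
    exact (hφi.mul_prod hfi).indicator (measurableSet_le measurable_snd measurable_fst)
  have hswap := MeasureTheory.integral_integral_swap hFint
  have hL : ∫ s, (∫ u, F s u ∂μ) ∂μ = ∫ s in t₀..t, φ s * (∫ u in t₀..s, f u) := by
    rw [intervalIntegral.integral_of_le h]
    apply setIntegral_congr_fun measurableSet_Ioc
    intro s hs
    show (∫ u, F s u ∂μ) = φ s * ∫ u in t₀..s, f u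
    have h1 : (fun u => F s u) = (Set.Iic s).indicator (fun u => φ s * f u) := by
      funext u; simp [hF, Set.indicator_apply]
    rw [h1, hμ, integral_indicator measurableSet_Iic, Measure.restrict_restrict measurableSet_Iic]
    have h2 : Set.Iic s ∩ Set.Ioc t₀ t = Set.Ioc t₀ s := by
      ext x
      simp only [Set.mem_inter_iff, Set.mem_Iic, Set.mem_Ioc]
      constructor
      · rintro ⟨h1, h2, h3⟩; exact ⟨h2, h1⟩
      · rintro ⟨h1, h2⟩; exact ⟨h2, h1, h2.trans hs.2⟩
    rw [h2, intervalIntegral.integral_of_le hs.1.le, MeasureTheory.integral_const_mul]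
  have hR : ∫ u, (∫ s, F s u ∂μ) ∂μ = ∫ u in t₀..t, (∫ s in u..t, φ s) * f u := by
    rw [intervalIntegral.integral_of_le h]
    apply setIntegral_congr_fun measurableSet_Ioc
    intro u hu
    show (∫ s, F s u ∂μ) = (∫ s in u..t, φ s) * f u
    have h1 : (fun s => F s u) = (Set.Ici u).indicator (fun s => φ s * f u) := by
      funext s; simp [hF, Set.indicator_apply]
    rw [h1, hμ, integral_indicator measurableSet_Ici, Measure.restrict_restrict measurableSet_Ici]
    have h2 : Set.Ici u ∩ Set.Ioc t₀ t = Set.Icc u t := by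
      ext x
      simp only [Set.mem_inter_iff, Set.mem_Ici, Set.mem_Ioc, Set.mem_Icc]
      constructor
      · rintro ⟨h1, h2, h3⟩; exact ⟨h1, h3⟩
      · rintro ⟨h1, h2⟩; exact ⟨h1, lt_of_lt_of_le hu.1 h1, h2⟩
    rw [h2, MeasureTheory.integral_Icc_eq_integral_Ioc,
      ← intervalIntegral.integral_of_le hu.2, intervalIntegral.integral_mul_const]
  rw [← hL, hswap, hR]

lemma my_exp_transform (x f : ℝ → ℝ) (t₀ α : ℝ)
    (hx : Continuous x)
    (hf : ∀ t, t₀ ≤ t → IntervalIntegrable f volume t₀ t)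
    (heq : ∀ t, t₀ ≤ t → x t = x t₀ + ∫ s in t₀..t, f s)
    (t : ℝ) (ht : t₀ ≤ t) :
    Real.exp (α * (t - t₀)) * x t
      = x t₀ + ∫ s in t₀..t, Real.exp (α * (s - t₀)) * (f s + α * x s) := by
  set E : ℝ → ℝ := fun s => Real.exp (α * (s - t₀)) with hE
  have hEc : Continuous E := Real.continuous_exp.comp (by continuity)
  have hd : ∀ s : ℝ, HasDerivAt E (α * E s) s := by
    intro s
    have h := (((hasDerivAt_id s).sub_const t₀).const_mul α).exp
    simpa [hE, mul_comm] using h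
  have hftc : ∀ u v : ℝ, (∫ s in u..v, α * E s) = E v - E u := by
    intro u v
    exact intervalIntegral.integral_eq_sub_of_hasDerivAt (fun s _ => hd s)
      ((continuous_const.mul hEc).intervalIntegrable u v)
  have hEf : IntervalIntegrable (fun s => E s * f s) volume t₀ t :=
    (hf t ht).continuousOn_mul hEc.continuousOn
  have hEx : IntervalIntegrable (fun s => α * E s * x s) volume t₀ t :=
    (((continuous_const.mul hEc).mul hx)).intervalIntegrable t₀ t
  have hG : Continuous fun s => α * E s * x t₀ := (continuous_const.mul hEc).mul continuous_const
  have hprim : IntervalIntegrable (fun s => α * E s * ∫ u in t₀..s, f u) volume t₀ t := by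
    apply ContinuousOn.intervalIntegrable
    apply ((continuous_const.mul hEc).continuousOn).mul
    apply intervalIntegral.continuousOn_primitive_interval
    rw [Set.uIcc_of_le ht, integrableOn_Icc_iff_integrableOn_Ioc]
    exact (intervalIntegrable_iff_integrableOn_Ioc_of_le ht).1 (hf t ht)
  have h1 : (∫ s in t₀..t, E s * (f s + α * x s))
      = (∫ s in t₀..t, E s * f s) + ∫ s in t₀..t, α * E s * x s := by
    rw [← intervalIntegral.integral_add hEf hEx]
    apply intervalIntegral.integral_congr
    intro s _; ring
  have h2 : (∫ s in t₀..t, α * E s * x s)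
      = (∫ s in t₀..t, α * E s * x t₀) + ∫ s in t₀..t, α * E s * ∫ u in t₀..s, f u := by
    rw [← intervalIntegral.integral_add (hG.intervalIntegrable t₀ t) hprim]
    apply intervalIntegral.integral_congr
    intro s hs
    rw [Set.uIcc_of_le ht] at hs
    have := heq s hs.1
    simp only []
    rw [this]; ring
  have h3 : (∫ s in t₀..t, α * E s * x t₀) = (E t - 1) * x t₀ := by
    have : (∫ s in t₀..t, α * E s * x t₀) = (∫ s in t₀..t, α * E s) * x t₀ := by
      rw [← intervalIntegral.integral_mul_const]
    rw [this, hftc t₀ t]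
    have : E t₀ = 1 := by simp [hE]
    rw [this]
  have h4 : (∫ s in t₀..t, α * E s * ∫ u in t₀..s, f u)
      = E t * (∫ u in t₀..t, f u) - ∫ u in t₀..t, E u * f u := by
    have hswap := my_swap f (fun s => α * E s) t₀ t ht (hf t ht) (continuous_const.mul hEc)
    have e1 : (∫ s in t₀..t, α * E s * ∫ u in t₀..s, f u)
        = ∫ u in t₀..t, (∫ s in u..t, α * E s) * f u := hswap
    rw [e1]
    have e2 : (∫ u in t₀..t, (∫ s in u..t, α * E s) * f u)
        = ∫ u in t₀..t, (E t * f u - E u * f u) := by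
      apply intervalIntegral.integral_congr
      intro u _
      show (∫ s in u..t, α * E s) * f u = E t * f u - E u * f u
      rw [hftc u t]; ring
    rw [e2, intervalIntegral.integral_sub ((hf t ht).const_mul (E t)) hEf,
      intervalIntegral.integral_const_mul]
  rw [heq t ht, h1, h2, h3, h4]
  ring

lemma my_dissip (z b k : ℝ → ℝ) (t₀ : ℝ)
    (hz : Continuous z)
    (hb : ∀ s, t₀ ≤ s → 0 ≤ b s)
    (hI : ∀ t, t₀ ≤ t → IntervalIntegrable (fun s => -(b s) * z s + k s) volume t₀ t)
    (hk : ∀ t, t₀ ≤ t → IntervalIntegrable k volume t₀ t)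
    (heq : ∀ t, t₀ ≤ t → z t = z t₀ + ∫ s in t₀..t, (-(b s) * z s + k s))
    (t : ℝ) (ht : t₀ ≤ t) :
    |z t| ≤ |z t₀| + ∫ s in t₀..t, |k s| := by
  have hka : ∀ t', t₀ ≤ t' → IntervalIntegrable (fun s => |k s|) volume t₀ t' :=
    fun t' ht' => (hk t' ht').abs
  apply le_of_forall_pos_le_add
  intro ε hε
  by_contra hcon
  push_neg at hcon
  set m : ℝ → ℝ := fun τ => |z t₀| + (∫ s in t₀..τ, |k s|) + ε with hm
  have hmc : ContinuousOn m (Set.Icc t₀ t) := by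
    apply (continuousOn_const.add ?_).add continuousOn_const
    have := intervalIntegral.continuousOn_primitive_interval
      (f := fun s => |k s|) (a := t₀) (b := t) (μ := volume) ?_
    · rwa [Set.uIcc_of_le ht] at this
    · rw [Set.uIcc_of_le ht, integrableOn_Icc_iff_integrableOn_Ioc]
      exact (intervalIntegrable_iff_integrableOn_Ioc_of_le ht).1 (hka t ht)
  set S : Set ℝ := Set.Icc t₀ t ∩ {τ | m τ - |z τ| ≤ 0} with hS
  have hScl : IsClosed S := by
    have : S = Set.Icc t₀ t ∩ (fun τ => m τ - |z τ|) ⁻¹' Set.Iic 0 := by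
      ext τ; simp [hS]
    rw [this]
    exact (hmc.sub hz.abs.continuousOn).preimage_isClosed_of_isClosed isClosed_Icc isClosed_Iic
  have htS : t ∈ S := ⟨⟨ht, le_refl t⟩, by simp only [Set.mem_setOf_eq, hm]; linarith⟩
  have hSbd : BddBelow S := ⟨t₀, fun τ hτ => hτ.1.1⟩
  set t₁ := sInf S with ht₁
  have ht₁S : t₁ ∈ S := hScl.csInf_mem ⟨t, htS⟩ hSbd
  have ht₁m : m t₁ ≤ |z t₁| := by have := ht₁S.2; simp only [Set.mem_setOf_eq] at this; linarith
  have hint_nonneg : ∀ u v : ℝ, u ≤ v → (0:ℝ) ≤ ∫ s in u..v, |k s| :=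
    fun u v huv => intervalIntegral.integral_nonneg huv (fun s _ => abs_nonneg _)
  have hmpos : 0 < m t₁ := by
    have h1 := hint_nonneg t₀ t₁ ht₁S.1.1
    have h2 := abs_nonneg (z t₀)
    simp only [hm]; linarith
  have ht₀t₁ : t₀ < t₁ := by
    rcases lt_or_eq_of_le ht₁S.1.1 with h | h
    · exact h
    · exfalso
      have h2 : m t₀ ≤ |z t₀| := by rw [h]; exact ht₁m
      simp only [hm, intervalIntegral.integral_same] at h2
      linarith
  have hlt : ∀ τ, t₀ ≤ τ → τ < t₁ → |z τ| < m τ := by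
    intro τ hτ₀ hτ₁
    by_contra hcc
    push_neg at hcc
    have : τ ∈ S := ⟨⟨hτ₀, hτ₁.le.trans ht₁S.1.2⟩, by simp only [Set.mem_setOf_eq]; linarith⟩
    exact absurd (csInf_le hSbd this) (not_le.mpr hτ₁)
  have hz₁ : 0 < |z t₁| := lt_of_lt_of_le hmpos ht₁m
  obtain ⟨y, k', hyc, hyabs, hy₁, hk'le, hIy, heqy⟩ :
      ∃ (y k' : ℝ → ℝ), Continuous y ∧ (∀ τ, |y τ| = |z τ|) ∧ y t₁ = |z t₁| ∧
        (∀ s, k' s ≤ |k s|) ∧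
        (∀ u v, t₀ ≤ u → u ≤ v →
          IntervalIntegrable (fun s => -(b s) * y s + k' s) volume u v) ∧
        (∀ u v, t₀ ≤ u → u ≤ v →
          y v - y u = ∫ s in u..v, (-(b s) * y s + k' s)) := by
    have hImono : ∀ u v, t₀ ≤ u → u ≤ v →
        IntervalIntegrable (fun s => -(b s) * z s + k s) volume u v := by
      intro u v hu huv
      exact (hI v (hu.trans huv)).mono_set
        (by rw [Set.uIcc_of_le huv, Set.uIcc_of_le (hu.trans huv)];
            exact Set.Icc_subset_Icc hu le_rfl)
    have hsub : ∀ u v, t₀ ≤ u → u ≤ v →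
        z v - z u = ∫ s in u..v, (-(b s) * z s + k s) := by
      intro u v hu huv
      rw [heq v (hu.trans huv), heq u hu]
      have := intervalIntegral.integral_interval_sub_left (hI v (hu.trans huv)) (hI u hu)
      linarith [this]
    rcases le_or_gt 0 (z t₁) with h | h
    · exact ⟨z, k, hz, fun _ => rfl, (abs_of_nonneg h).symm,
        fun s => le_abs_self _, hImono, hsub⟩
    · have hfun : (fun s => -(b s) * (-(z s)) + (-(k s)))
          = fun s => -((-(b s)) * z s + k s) := by funext s; ring
      refine ⟨fun τ => -(z τ), fun s => -(k s), hz.neg, fun τ => abs_neg _,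
        by rw [abs_of_neg h], fun s => (neg_le_abs _), ?_, ?_⟩
      · intro u v hu huv
        rw [hfun]
        exact (hImono u v hu huv).neg
      · intro u v hu huv
        have h1 := hsub u v hu huv
        show -(z v) - -(z u) = ∫ s in u..v, (-(b s) * (-(z s)) + (-(k s)))
        have hrw : (∫ s in u..v, (-(b s) * (-(z s)) + (-(k s))))
            = - ∫ s in u..v, (-(b s) * z s + k s) := by
          rw [hfun, intervalIntegral.integral_neg]
        rw [hrw]; linarith
  have hy₁pos : 0 < y t₁ := by rw [hy₁]; exact hz₁
  have hev : ∀ᶠ s in nhds t₁, 0 < y s :=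
    (hyc.tendsto t₁).eventually (eventually_gt_nhds hy₁pos)
  obtain ⟨δ, hδ, hδy⟩ := Metric.eventually_nhds_iff.1 hev
  set τ := max t₀ (t₁ - δ/2) with hτ
  have hτt₀ : t₀ ≤ τ := le_max_left _ _
  have hτlt : τ < t₁ := max_lt ht₀t₁ (by linarith)
  have hτpos : ∀ s ∈ Set.Icc τ t₁, 0 < y s := by
    intro s hs
    apply hδy
    rw [Real.dist_eq, abs_lt]
    have h1 := hs.1; have h2 := hs.2
    have h3 : t₁ - δ/2 ≤ τ := le_max_right _ _
    constructor <;> linarith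
  have hstep : y t₁ - y τ ≤ ∫ s in τ..t₁, |k s| := by
    rw [heqy τ t₁ hτt₀ hτlt.le]
    apply intervalIntegral.integral_mono_on hτlt.le (hIy τ t₁ hτt₀ hτlt.le)
      ((hka t₁ ht₀t₁.le).mono_set
        (by rw [Set.uIcc_of_le hτlt.le, Set.uIcc_of_le ht₀t₁.le];
            exact Set.Icc_subset_Icc hτt₀ le_rfl))
    intro s hs
    have h1 : 0 ≤ b s := hb s (hτt₀.trans hs.1)
    have h2 : 0 < y s := hτpos s hs
    have h3 := hk'le s
    nlinarith
  have hmdiff : m t₁ - m τ = ∫ s in τ..t₁, |k s| := by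
    simp only [hm]
    have := intervalIntegral.integral_interval_sub_left (hka t₁ ht₀t₁.le) (hka τ hτt₀)
    linarith
  have h5 : y τ ≤ |z τ| := (le_abs_self _).trans (le_of_eq (hyabs τ))
  have h6 : |z τ| < m τ := hlt τ hτt₀ hτlt
  linarith [hstep, hmdiff, ht₁m, h5, h6, hy₁.symm.le, hy₁.le]

lemma my_decay (x a h : ℝ → ℝ) (t₀ α : ℝ)
    (hx : Continuous x)
    (ht₀ : 0 ≤ t₀)
    (ha_lb : ∀ s, 0 ≤ s → α ≤ a s)
    (hI : ∀ t, t₀ ≤ t → IntervalIntegrable (fun s => -(a s) * x s + h s) volume t₀ t)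
    (hh : ∀ t, t₀ ≤ t → IntervalIntegrable h volume t₀ t)
    (heq : ∀ t, t₀ ≤ t → x t = x t₀ + ∫ s in t₀..t, (-(a s) * x s + h s))
    (t : ℝ) (ht : t₀ ≤ t) :
    Real.exp (α * (t - t₀)) * |x t|
      ≤ |x t₀| + ∫ s in t₀..t, Real.exp (α * (s - t₀)) * |h s| := by
  set E : ℝ → ℝ := fun s => Real.exp (α * (s - t₀)) with hE
  have hEc : Continuous E := Real.continuous_exp.comp (by continuity)
  have hEpos : ∀ s, 0 < E s := fun s => Real.exp_pos _
  have hEt₀ : E t₀ = 1 := by simp [hE]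
  set z : ℝ → ℝ := fun s => E s * x s with hz
  set b : ℝ → ℝ := fun s => a s - α with hbdef
  set k : ℝ → ℝ := fun s => E s * h s with hk
  have hzc : Continuous z := hEc.mul hx
  have hzt₀ : z t₀ = x t₀ := by simp [hz, hEt₀]
  have hfun : ∀ s : ℝ, -(b s) * z s + k s
      = E s * ((-(a s) * x s + h s) + α * x s) := by
    intro s; simp only [hz, hbdef, hk]; ring
  have hIbzk : ∀ t', t₀ ≤ t' →
      IntervalIntegrable (fun s => -(b s) * z s + k s) volume t₀ t' := by
    intro t' ht'
    have h1 : IntervalIntegrable (fun s => E s * (-(a s) * x s + h s)) volume t₀ t' :=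
      (hI t' ht').continuousOn_mul hEc.continuousOn
    have h2 : IntervalIntegrable (fun s => E s * (α * x s)) volume t₀ t' :=
      (hEc.mul (continuous_const.mul hx)).intervalIntegrable _ _
    have h3 := h1.add h2
    have hfg : (fun s => -(b s) * z s + k s)
        = fun s => E s * (-(a s) * x s + h s) + E s * (α * x s) := by
      funext s; rw [hfun s]; ring
    rw [hfg]; exact h3
  have hkI : ∀ t', t₀ ≤ t' → IntervalIntegrable k volume t₀ t' :=
    fun t' ht' => (hh t' ht').continuousOn_mul hEc.continuousOn
  have heqz : ∀ t', t₀ ≤ t' → z t' = z t₀ + ∫ s in t₀..t', (-(b s) * z s + k s) := by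
    intro t' ht'
    have h1 := my_exp_transform x (fun s => -(a s) * x s + h s) t₀ α hx hI heq t' ht'
    have h2 : (∫ s in t₀..t', (-(b s) * z s + k s))
        = ∫ s in t₀..t', E s * ((-(a s) * x s + h s) + α * x s) :=
      intervalIntegral.integral_congr (fun s _ => hfun s)
    rw [h2, hzt₀]
    exact h1
  have hd := my_dissip z b k t₀ hzc
    (fun s hs => by simp only [hbdef, sub_nonneg]; exact ha_lb s (ht₀.trans hs))
    hIbzk hkI heqz t ht
  have habs1 : |z t| = E t * |x t| := by
    simp only [hz, abs_mul, abs_of_pos (hEpos t)]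
  have habs2 : (∫ s in t₀..t, |k s|) = ∫ s in t₀..t, E s * |h s| := by
    apply intervalIntegral.integral_congr
    intro s _
    simp only [hk, abs_mul, abs_of_pos (hEpos s)]
  rw [habs1, hzt₀] at hd
  rw [habs2] at hd
  exact hd

lemma my_exp_integral (c u v : ℝ) (hc : c ≠ 0) :
    (∫ s in u..v, Real.exp (c * (s - u))) * c = Real.exp (c * (v - u)) - 1 := by
  have h1 : ∀ s : ℝ, HasDerivAt (fun y => Real.exp (c * (y - u)) / c)
      (Real.exp (c * (s - u))) s := by
    intro s
    have h := ((((hasDerivAt_id s).sub_const u).const_mul c).exp).div_const c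
    refine h.congr_deriv ?_
    simp [hc]
  have h2 := intervalIntegral.integral_eq_sub_of_hasDerivAt (fun s _ => h1 s)
    ((Real.continuous_exp.comp (by continuity)).intervalIntegrable u v)
  rw [h2]
  have h3 : c * (u - u) = 0 := by ring
  rw [h3, Real.exp_zero]
  field_simp

lemma my_halanay_case (x h : ℝ → ℝ) (ρ αc Λ t₀ t₁ W ε K : ℝ)
    (hρ : 0 < ρ) (hε : 0 < ε) (hWε : 0 < W + ε) (ht₁ : t₀ ≤ t₁)
    (hc : 0 < αc - Λ)
    (hdec : Real.exp (αc * (t₁ - t₀)) * |x t₁|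
      ≤ |x t₀| + ∫ s in t₀..t₁, Real.exp (αc * (s - t₀)) * |h s|)
    (hII : IntervalIntegrable (fun s => Real.exp (αc * (s - t₀)) * |h s|) volume t₀ t₁)
    (hx₀ : ρ * |x t₀| ≤ W)
    (hhb : ∀ s ∈ Set.Icc t₀ t₁, ρ * |h s| ≤ K * Real.exp (-Λ * (s - t₀)))
    (hKle : K ≤ (αc - Λ) * (W + ε))
    (hu : W + ε ≤ ρ * (|x t₁| * Real.exp (Λ * (t₁ - t₀)))) : False := by
  set I : ℝ := ∫ s in t₀..t₁, Real.exp ((αc - Λ) * (s - t₀)) with hI_def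
  have hI0 : 0 ≤ I :=
    intervalIntegral.integral_nonneg ht₁ (fun s _ => (Real.exp_pos _).le)
  have hIc : I * (αc - Λ) = Real.exp ((αc - Λ) * (t₁ - t₀)) - 1 :=
    my_exp_integral (αc - Λ) t₀ t₁ hc.ne'
  have hstep1 : ρ * (Real.exp (αc * (t₁ - t₀)) * |x t₁|)
      ≤ W + ∫ s in t₀..t₁, ρ * (Real.exp (αc * (s - t₀)) * |h s|) := by
    have h1 := mul_le_mul_of_nonneg_left hdec hρ.le
    rw [mul_add] at h1
    rw [intervalIntegral.integral_const_mul]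
    linarith
  have hstep2 : (∫ s in t₀..t₁, ρ * (Real.exp (αc * (s - t₀)) * |h s|)) ≤ K * I := by
    rw [hI_def, ← intervalIntegral.integral_const_mul]
    apply intervalIntegral.integral_mono_on ht₁ (hII.const_mul ρ)
      (((Real.continuous_exp.comp (by continuity)).intervalIntegrable t₀ t₁).const_mul K)
    intro s hs
    have h1 := hhb s hs
    have h2 : Real.exp (αc * (s - t₀)) * (ρ * |h s|)
        ≤ Real.exp (αc * (s - t₀)) * (K * Real.exp (-Λ * (s - t₀))) :=
      mul_le_mul_of_nonneg_left h1 (Real.exp_pos _).le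
    calc ρ * (Real.exp (αc * (s - t₀)) * |h s|)
        = Real.exp (αc * (s - t₀)) * (ρ * |h s|) := by ring
      _ ≤ Real.exp (αc * (s - t₀)) * (K * Real.exp (-Λ * (s - t₀))) := h2
      _ = K * (Real.exp (αc * (s - t₀)) * Real.exp (-Λ * (s - t₀))) := by ring
      _ = K * Real.exp ((αc - Λ) * (s - t₀)) := by
          rw [← Real.exp_add, show αc * (s - t₀) + -Λ * (s - t₀) = (αc - Λ) * (s - t₀) by ring]
  have h5 : K * I ≤ ((αc - Λ) * (W + ε)) * I := mul_le_mul_of_nonneg_right hKle hI0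
  have hX : ρ * (|x t₁| * Real.exp (Λ * (t₁ - t₀))) * Real.exp ((αc - Λ) * (t₁ - t₀))
      = ρ * (Real.exp (αc * (t₁ - t₀)) * |x t₁|) := by
    rw [show ρ * (|x t₁| * Real.exp (Λ * (t₁ - t₀))) * Real.exp ((αc - Λ) * (t₁ - t₀))
        = ρ * |x t₁| * (Real.exp (Λ * (t₁ - t₀)) * Real.exp ((αc - Λ) * (t₁ - t₀))) from by ring,
      ← Real.exp_add,
      show Λ * (t₁ - t₀) + (αc - Λ) * (t₁ - t₀) = αc * (t₁ - t₀) from by ring]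
    ring
  have h7 := mul_le_mul_of_nonneg_right hu (Real.exp_pos ((αc - Λ) * (t₁ - t₀))).le
  rw [hX] at h7
  have h8 : ((αc - Λ) * (W + ε)) * I = (W + ε) * (Real.exp ((αc - Λ) * (t₁ - t₀)) - 1) := by
    linear_combination (W + ε) * hIc
  nlinarith [h7, hstep1, hstep2, h5, h8, hε]

set_option maxHeartbeats 1000000 in
/-- Corollary 2.7: for `m = 2`, if `L₁₁ < α₁` and `(α₁ − L₁₁)(α₂ − L₂₂) > L₁₂L₂₁`,
then the system `ẋ_i(t) = −a_i(t)x_i(t) + Σ_j F_{ij}(t, x_j(g_{ij}(t)))` (i = 1,2)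
is globally exponentially stable. -/
theorem stmt6
    (a₁ a₂ : ℝ → ℝ) (α₁ α₂ A₁ A₂ : ℝ)
    (F₁₁ F₁₂ F₂₁ F₂₂ : ℝ → ℝ → ℝ) (L₁₁ L₁₂ L₂₁ L₂₂ : ℝ)
    (g₁₁ g₁₂ g₂₁ g₂₂ : ℝ → ℝ) (σ : ℝ)
    -- (a1)
    (ha₁_meas : Measurable a₁) (ha₂_meas : Measurable a₂)
    (hα₁ : 0 < α₁) (hα₂ : 0 < α₂)
    (ha₁_bd : ∀ t, 0 ≤ t → α₁ ≤ a₁ t ∧ a₁ t ≤ A₁)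
    (ha₂_bd : ∀ t, 0 ≤ t → α₂ ≤ a₂ t ∧ a₂ t ≤ A₂)
    -- (a2)
    (hF₁₁ : ∀ t, Continuous (F₁₁ t)) (hF₁₂ : ∀ t, Continuous (F₁₂ t))
    (hF₂₁ : ∀ t, Continuous (F₂₁ t)) (hF₂₂ : ∀ t, Continuous (F₂₂ t))
    (hF₁₁m : ∀ u, Measurable fun t => F₁₁ t u) (hF₁₂m : ∀ u, Measurable fun t => F₁₂ t u)
    (hF₂₁m : ∀ u, Measurable fun t => F₂₁ t u) (hF₂₂m : ∀ u, Measurable fun t => F₂₂ t u)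
    (hL₁₁ : ∀ t u, 0 ≤ t → |F₁₁ t u| ≤ L₁₁ * |u|)
    (hL₁₂ : ∀ t u, 0 ≤ t → |F₁₂ t u| ≤ L₁₂ * |u|)
    (hL₂₁ : ∀ t u, 0 ≤ t → |F₂₁ t u| ≤ L₂₁ * |u|)
    (hL₂₂ : ∀ t u, 0 ≤ t → |F₂₂ t u| ≤ L₂₂ * |u|)
    -- (a3)
    (hg₁₁_meas : Measurable g₁₁) (hg₁₂_meas : Measurable g₁₂)
    (hg₂₁_meas : Measurable g₂₁) (hg₂₂_meas : Measurable g₂₂)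
    (hg₁₁ : ∀ t, 0 ≤ t → 0 ≤ t - g₁₁ t ∧ t - g₁₁ t ≤ σ)
    (hg₁₂ : ∀ t, 0 ≤ t → 0 ≤ t - g₁₂ t ∧ t - g₁₂ t ≤ σ)
    (hg₂₁ : ∀ t, 0 ≤ t → 0 ≤ t - g₂₁ t ∧ t - g₂₁ t ≤ σ)
    (hg₂₂ : ∀ t, 0 ≤ t → 0 ≤ t - g₂₂ t ∧ t - g₂₂ t ≤ σ)
    -- stability conditions
    (hcond₁ : L₁₁ < α₁)
    (hcond₂ : (α₁ - L₁₁) * (α₂ - L₂₂) > L₁₂ * L₂₁) :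
    -- global exponential stability
    ∃ M Λ : ℝ, 0 < M ∧ 0 < Λ ∧
      ∀ t₀ : ℝ, 0 ≤ t₀ → ∀ x₁ x₂ : ℝ → ℝ,
        Continuous x₁ → Continuous x₂ →
        (∀ t, t₀ ≤ t → IntervalIntegrable
            (fun s => -(a₁ s) * x₁ s + (F₁₁ s (x₁ (g₁₁ s)) + F₁₂ s (x₂ (g₁₂ s))))
            volume t₀ t) →
        (∀ t, t₀ ≤ t → IntervalIntegrable
            (fun s => -(a₂ s) * x₂ s + (F₂₁ s (x₁ (g₂₁ s)) + F₂₂ s (x₂ (g₂₂ s))))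
            volume t₀ t) →
        (∀ t, t₀ ≤ t →
          x₁ t = x₁ t₀ + ∫ s in t₀..t,
            (-(a₁ s) * x₁ s + (F₁₁ s (x₁ (g₁₁ s)) + F₁₂ s (x₂ (g₁₂ s))))) →
        (∀ t, t₀ ≤ t →
          x₂ t = x₂ t₀ + ∫ s in t₀..t,
            (-(a₂ s) * x₂ s + (F₂₁ s (x₁ (g₂₁ s)) + F₂₂ s (x₂ (g₂₂ s))))) →
        ∀ t, t₀ ≤ t →
          ‖(x₁ t, x₂ t)‖ ≤
            M * Real.exp (-Λ * (t - t₀)) *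
              (‖(x₁ t₀, x₂ t₀)‖ +
                sSup ((fun s => ‖(x₁ s, x₂ s)‖) '' Set.Icc (t₀ - σ) t₀)) := by
  -- nonnegativity of Lipschitz constants
  have habs : ∀ (F : ℝ → ℝ → ℝ) (L : ℝ), (∀ t u, 0 ≤ t → |F t u| ≤ L * |u|) → 0 ≤ L := by
    intro F L hF
    have h := hF 0 1 le_rfl
    have h2 := abs_nonneg (F 0 1)
    simp only [abs_one, mul_one] at h
    linarith
  have hL11 : 0 ≤ L₁₁ := habs _ _ hL₁₁
  have hL12 : 0 ≤ L₁₂ := habs _ _ hL₁₂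
  have hL21 : 0 ≤ L₂₁ := habs _ _ hL₂₁
  have hL22 : 0 ≤ L₂₂ := habs _ _ hL₂₂
  have hσ : 0 ≤ σ := le_trans (hg₁₁ 0 le_rfl).1 (hg₁₁ 0 le_rfl).2
  have hd₁ : 0 < α₁ - L₁₁ := sub_pos.2 hcond₁
  have hd₂ : 0 < α₂ - L₂₂ := by nlinarith [mul_nonneg hL12 hL21]
  set r : ℝ := (L₁₂ + (α₂ - L₂₂)) / ((α₁ - L₁₁) + L₂₁) with hr_def
  have hden : 0 < (α₁ - L₁₁) + L₂₁ := by linarith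
  have hr : 0 < r := div_pos (by linarith) hden
  have hℓ₁ : L₁₁ + L₁₂ / r < α₁ := by
    have h2 : L₁₂ < (α₁ - L₁₁) * r := by
      rw [hr_def, ← mul_div_assoc, lt_div_iff₀ hden]
      nlinarith
    have h3 : L₁₂ / r < α₁ - L₁₁ := (div_lt_iff₀ hr).2 h2
    linarith
  have hℓ₂ : L₂₂ + r * L₂₁ < α₂ := by
    have h3 : r * L₂₁ < α₂ - L₂₂ := by
      rw [hr_def, div_mul_eq_mul_div, div_lt_iff₀ hden]
      nlinarith
    linarith
  have hℓ₁0 : 0 ≤ L₁₁ + L₁₂ / r := add_nonneg hL11 (div_nonneg hL12 hr.le)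
  have hℓ₂0 : 0 ≤ L₂₂ + r * L₂₁ := add_nonneg hL22 (mul_nonneg hr.le hL21)
  -- choice of Λ
  obtain ⟨Λ, hΛpos, hΛ₁, hΛ₂⟩ : ∃ Λ : ℝ, 0 < Λ ∧
      (L₁₁ + L₁₂ / r) * Real.exp (Λ * σ) < α₁ - Λ ∧
      (L₂₂ + r * L₂₁) * Real.exp (Λ * σ) < α₂ - Λ := by
    set φ : ℝ → ℝ := fun l => max ((L₁₁ + L₁₂ / r) * Real.exp (l * σ) + l - α₁)
      ((L₂₂ + r * L₂₁) * Real.exp (l * σ) + l - α₂) with hφ_def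
    have hexp : Continuous fun l : ℝ => Real.exp (l * σ) :=
      Real.continuous_exp.comp (continuous_id.mul continuous_const)
    have hφc : Continuous φ := by
      apply Continuous.max <;>
        exact ((continuous_const.mul hexp).add continuous_id).sub continuous_const
    have h0 : φ 0 < 0 := by
      simp only [hφ_def, zero_mul, Real.exp_zero, mul_one]
      apply max_lt <;> linarith
    have hev : ∀ᶠ l in nhds (0 : ℝ), φ l < 0 :=
      (hφc.tendsto 0).eventually (eventually_lt_nhds h0)
    obtain ⟨δ, hδ, hδf⟩ := Metric.eventually_nhds_iff.1 hev
    have hm : φ (δ / 2) < 0 := hδf (by rw [Real.dist_eq, sub_zero, abs_of_pos (by linarith)]; linarith)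
    obtain ⟨ha, hb⟩ := max_lt_iff.1 hm
    exact ⟨δ / 2, by linarith, by linarith, by linarith⟩
  have hm2pos : (0:ℝ) < max 1 r := lt_of_lt_of_le one_pos (le_max_left _ _)
  have hm1pos : (0:ℝ) < max 1 (1 / r) := lt_of_lt_of_le one_pos (le_max_left _ _)
  refine ⟨max 1 r * max 1 (1 / r), Λ, mul_pos hm2pos hm1pos, hΛpos, ?_⟩
  intro t₀ ht₀ x₁ x₂ hx₁ hx₂ hI₁ hI₂ heq₁ heq₂
  set w : ℝ → ℝ := fun τ => max |x₁ τ| (r * |x₂ τ|) with hw_def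
  have hwc : Continuous w := (hx₁.abs).max (continuous_const.mul hx₂.abs)
  have hw0 : ∀ τ, 0 ≤ w τ := fun τ => le_trans (abs_nonneg _) (le_max_left _ _)
  have hx₁w : ∀ τ, |x₁ τ| ≤ w τ := fun τ => le_max_left _ _
  have hx₂w : ∀ τ, r * |x₂ τ| ≤ w τ := fun τ => le_max_right _ _
  have hNc : Continuous fun s => ‖(x₁ s, x₂ s)‖ := (Continuous.prodMk hx₁ hx₂).norm
  have hNw : ∀ τ, ‖(x₁ τ, x₂ τ)‖ = max |x₁ τ| |x₂ τ| := by
    intro τ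
    rw [Prod.norm_def]
    simp [Real.norm_eq_abs]
  set S := sSup ((fun s => ‖(x₁ s, x₂ s)‖) '' Set.Icc (t₀ - σ) t₀) with hS_def
  have hIccne : (Set.Icc (t₀ - σ) t₀).Nonempty := ⟨t₀, by constructor <;> linarith⟩
  have hNbd : BddAbove ((fun s => ‖(x₁ s, x₂ s)‖) '' Set.Icc (t₀ - σ) t₀) :=
    (isCompact_Icc.image hNc).bddAbove
  have hS0 : 0 ≤ S :=
    le_trans (norm_nonneg _) (le_csSup hNbd ⟨t₀, ⟨by linarith, le_rfl⟩, rfl⟩)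
  set Wc := sSup (w '' Set.Icc (t₀ - σ) t₀) with hW_def
  have hWbd : BddAbove (w '' Set.Icc (t₀ - σ) t₀) := (isCompact_Icc.image hwc).bddAbove
  have hwW : ∀ τ, t₀ - σ ≤ τ → τ ≤ t₀ → w τ ≤ Wc :=
    fun τ h1 h2 => le_csSup hWbd ⟨τ, ⟨h1, h2⟩, rfl⟩
  have hW0 : 0 ≤ Wc := le_trans (hw0 t₀) (hwW t₀ (by linarith) le_rfl)
  have hWS : Wc ≤ max 1 r * S := by
    apply csSup_le (hIccne.image w)
    rintro y ⟨τ, hτ, rfl⟩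
    have h1 : w τ ≤ max 1 r * ‖(x₁ τ, x₂ τ)‖ := by
      rw [hNw]
      apply max_le
      · calc |x₁ τ| ≤ max |x₁ τ| |x₂ τ| := le_max_left _ _
          _ = 1 * max |x₁ τ| |x₂ τ| := (one_mul _).symm
          _ ≤ max 1 r * max |x₁ τ| |x₂ τ| :=
            mul_le_mul_of_nonneg_right (le_max_left 1 r)
              (le_trans (abs_nonneg _) (le_max_left _ _))
      · exact mul_le_mul (le_max_right 1 r) (le_max_right _ _) (abs_nonneg _)
          (le_trans zero_le_one (le_max_left 1 r))
    have h2 : ‖(x₁ τ, x₂ τ)‖ ≤ S := le_csSup hNbd ⟨τ, hτ, rfl⟩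
    calc w τ ≤ max 1 r * ‖(x₁ τ, x₂ τ)‖ := h1
      _ ≤ max 1 r * S := mul_le_mul_of_nonneg_left h2 hm2pos.le
  clear_value w S Wc
  -- integrability of the delayed terms
  have hax : ∀ (a x : ℝ → ℝ) (A : ℝ), Measurable a → Continuous x →
      (∀ s, 0 ≤ s → |a s| ≤ A) →
      ∀ t', t₀ ≤ t' → IntervalIntegrable (fun s => a s * x s) volume t₀ t' := by
    intro a x A ha hx hA t' ht'
    rw [intervalIntegrable_iff_integrableOn_Ioc_of_le ht']
    obtain ⟨C, hC⟩ := (isCompact_Icc (a := t₀) (b := t')).exists_bound_of_continuousOn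
      hx.continuousOn
    apply Integrable.mono' (integrable_const (A * C))
      ((ha.mul hx.measurable).aestronglyMeasurable)
    apply (ae_restrict_iff' measurableSet_Ioc).2
    apply ae_of_all
    intro s hs
    have h1 : |a s| ≤ A := hA s (le_trans ht₀ hs.1.le)
    have h2 : |x s| ≤ C := by
      have := hC s ⟨hs.1.le, hs.2⟩
      rwa [Real.norm_eq_abs] at this
    calc ‖a s * x s‖ = |a s| * |x s| := by rw [Real.norm_eq_abs, abs_mul]
      _ ≤ A * C := mul_le_mul h1 h2 (abs_nonneg _) (le_trans (abs_nonneg _) h1)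
  have hax₁ : ∀ t', t₀ ≤ t' → IntervalIntegrable (fun s => a₁ s * x₁ s) volume t₀ t' :=
    hax a₁ x₁ A₁ ha₁_meas hx₁ (fun s hs => by
      rw [abs_of_pos (lt_of_lt_of_le hα₁ (ha₁_bd s hs).1)]; exact (ha₁_bd s hs).2)
  have hax₂ : ∀ t', t₀ ≤ t' → IntervalIntegrable (fun s => a₂ s * x₂ s) volume t₀ t' :=
    hax a₂ x₂ A₂ ha₂_meas hx₂ (fun s hs => by
      rw [abs_of_pos (lt_of_lt_of_le hα₂ (ha₂_bd s hs).1)]; exact (ha₂_bd s hs).2)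
  have hh₁I : ∀ t', t₀ ≤ t' → IntervalIntegrable
      (fun s => F₁₁ s (x₁ (g₁₁ s)) + F₁₂ s (x₂ (g₁₂ s))) volume t₀ t' := by
    intro t' ht'
    have h1 := (hI₁ t' ht').add (hax₁ t' ht')
    have hfg : (fun s => F₁₁ s (x₁ (g₁₁ s)) + F₁₂ s (x₂ (g₁₂ s)))
        = fun s => (-(a₁ s) * x₁ s + (F₁₁ s (x₁ (g₁₁ s)) + F₁₂ s (x₂ (g₁₂ s)))) + a₁ s * x₁ s := by
      funext s; ring
    rw [hfg]; exact h1
  have hh₂I : ∀ t', t₀ ≤ t' → IntervalIntegrable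
      (fun s => F₂₁ s (x₁ (g₂₁ s)) + F₂₂ s (x₂ (g₂₂ s))) volume t₀ t' := by
    intro t' ht'
    have h1 := (hI₂ t' ht').add (hax₂ t' ht')
    have hfg : (fun s => F₂₁ s (x₁ (g₂₁ s)) + F₂₂ s (x₂ (g₂₂ s)))
        = fun s => (-(a₂ s) * x₂ s + (F₂₁ s (x₁ (g₂₁ s)) + F₂₂ s (x₂ (g₂₂ s)))) + a₂ s * x₂ s := by
      funext s; ring
    rw [hfg]; exact h1
  -- decay estimates per component
  have hdec₁ : ∀ t', t₀ ≤ t' → Real.exp (α₁ * (t' - t₀)) * |x₁ t'|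
      ≤ |x₁ t₀| + ∫ s in t₀..t', Real.exp (α₁ * (s - t₀))
        * |F₁₁ s (x₁ (g₁₁ s)) + F₁₂ s (x₂ (g₁₂ s))| :=
    my_decay x₁ a₁ (fun s => F₁₁ s (x₁ (g₁₁ s)) + F₁₂ s (x₂ (g₁₂ s))) t₀ α₁ hx₁ ht₀
      (fun s hs => (ha₁_bd s hs).1) hI₁ hh₁I heq₁
  have hdec₂ : ∀ t', t₀ ≤ t' → Real.exp (α₂ * (t' - t₀)) * |x₂ t'|
      ≤ |x₂ t₀| + ∫ s in t₀..t', Real.exp (α₂ * (s - t₀))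
        * |F₂₁ s (x₁ (g₂₁ s)) + F₂₂ s (x₂ (g₂₂ s))| :=
    my_decay x₂ a₂ (fun s => F₂₁ s (x₁ (g₂₁ s)) + F₂₂ s (x₂ (g₂₂ s))) t₀ α₂ hx₂ ht₀
      (fun s hs => (ha₂_bd s hs).1) hI₂ hh₂I heq₂
  -- the Halanay claim
  have hclaim : ∀ t', t₀ ≤ t' → w t' * Real.exp (Λ * (t' - t₀)) ≤ Wc := by
    intro t' ht'
    apply le_of_forall_pos_le_add
    intro ε hε
    by_contra hcon
    push_neg at hcon
    have hWεpos : 0 < Wc + ε := by linarith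
    set u : ℝ → ℝ := fun τ => w τ * Real.exp (Λ * (τ - t₀)) with hu_def
    have huc : Continuous u := hwc.mul (Real.continuous_exp.comp (continuous_const.mul (continuous_id.sub continuous_const)))
    set S' : Set ℝ := Set.Icc t₀ t' ∩ {τ | Wc + ε ≤ u τ} with hS'_def
    have hS'cl : IsClosed S' := isClosed_Icc.inter (isClosed_le continuous_const huc)
    have ht'S : t' ∈ S' := ⟨⟨ht', le_rfl⟩, le_of_lt hcon⟩
    have hSbd' : BddBelow S' := ⟨t₀, fun τ hτ => hτ.1.1⟩
    set t₁ := sInf S' with ht₁_def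
    have ht₁S : t₁ ∈ S' := hS'cl.csInf_mem ⟨t', ht'S⟩ hSbd'
    have hut₀ : u t₀ ≤ Wc := by
      have h1 : Λ * (t₀ - t₀) = 0 := by ring
      simp only [hu_def, h1, Real.exp_zero, mul_one]
      exact hwW t₀ (by linarith) le_rfl
    have ht₀t₁ : t₀ < t₁ := by
      rcases lt_or_eq_of_le ht₁S.1.1 with h | h
      · exact h
      · exfalso
        have h2 := ht₁S.2
        rw [← h] at h2
        simp only [Set.mem_setOf_eq] at h2
        linarith
    have hbefore : ∀ τ, t₀ ≤ τ → τ < t₁ → u τ < Wc + ε := by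
      intro τ h1 h2
      by_contra hc2
      push_neg at hc2
      exact absurd (csInf_le hSbd' ⟨⟨h1, h2.le.trans ht₁S.1.2⟩, hc2⟩) (not_le.2 h2)
    have ht₁le : u t₁ ≤ Wc + ε := by
      have htd : Filter.Tendsto u (nhdsWithin t₁ (Set.Iio t₁)) (nhds (u t₁)) :=
        (huc.continuousAt).continuousWithinAt.tendsto
      apply le_of_tendsto htd
      filter_upwards [Ioo_mem_nhdsLT_of_mem (⟨ht₀t₁, le_rfl⟩ : t₁ ∈ Set.Ioc t₀ t₁)] with τ hτ
      exact (hbefore τ hτ.1.le hτ.2).le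
    have ht₁u : Wc + ε ≤ u t₁ := ht₁S.2
    clear_value u S' t₁
    have hwbnd : ∀ τ, t₀ - σ ≤ τ → τ ≤ t₁ → w τ ≤ (Wc + ε) * Real.exp (-Λ * (τ - t₀)) := by
      intro τ h1 h2
      rcases le_or_gt τ t₀ with h3 | h3
      · have hwτ : w τ ≤ Wc := hwW τ h1 h3
        have he0 : 0 ≤ Λ * (t₀ - τ) := mul_nonneg hΛpos.le (by linarith)
        have he1 : (1:ℝ) ≤ Real.exp (-Λ * (τ - t₀)) :=
          Real.one_le_exp (by linarith)
        have he2 : Wc + ε ≤ (Wc + ε) * Real.exp (-Λ * (τ - t₀)) :=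
          le_mul_of_one_le_right hWεpos.le he1
        linarith
      · have huτ : u τ ≤ Wc + ε := by
          rcases lt_or_eq_of_le h2 with h4 | h4
          · exact (hbefore τ h3.le h4).le
          · rw [h4]; exact ht₁le
        have hE : Real.exp (Λ * (τ - t₀)) * Real.exp (-Λ * (τ - t₀)) = 1 := by
          rw [← Real.exp_add, show Λ * (τ - t₀) + -Λ * (τ - t₀) = 0 by ring, Real.exp_zero]
        have h5 : w τ = u τ * Real.exp (-Λ * (τ - t₀)) := by
          simp only [hu_def]
          rw [mul_assoc, hE, mul_one]
        rw [h5]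
        exact mul_le_mul_of_nonneg_right huτ (Real.exp_pos _).le
    have hgbnd : ∀ (g : ℝ → ℝ), (∀ s, 0 ≤ s → 0 ≤ s - g s ∧ s - g s ≤ σ) →
        ∀ s ∈ Set.Icc t₀ t₁, w (g s)
          ≤ (Wc + ε) * Real.exp (Λ * σ) * Real.exp (-Λ * (s - t₀)) := by
      intro g hg s hs
      have hs1 := hs.1
      have hs2 := hs.2
      have hs0 : 0 ≤ s := le_trans ht₀ hs1
      obtain ⟨hg1, hg2⟩ := hg s hs0
      have h1 : w (g s) ≤ (Wc + ε) * Real.exp (-Λ * (g s - t₀)) :=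
        hwbnd (g s) (by linarith) (by linarith [hs.2])
      have h2 : Real.exp (-Λ * (g s - t₀)) ≤ Real.exp (Λ * σ) * Real.exp (-Λ * (s - t₀)) := by
        rw [← Real.exp_add]
        apply Real.exp_le_exp.2
        have := mul_le_mul_of_nonneg_left hg2 hΛpos.le
        linarith
      calc w (g s) ≤ (Wc + ε) * Real.exp (-Λ * (g s - t₀)) := h1
        _ ≤ (Wc + ε) * (Real.exp (Λ * σ) * Real.exp (-Λ * (s - t₀))) :=
          mul_le_mul_of_nonneg_left h2 hWεpos.le
        _ = (Wc + ε) * Real.exp (Λ * σ) * Real.exp (-Λ * (s - t₀)) := by ring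
    rcases max_cases |x₁ t₁| (r * |x₂ t₁|) with ⟨hmx, _⟩ | ⟨hmx, _⟩
    · -- case 1 : w t₁ = |x₁ t₁|
      have hwt₁ : w t₁ = |x₁ t₁| := by simp only [hw_def]; exact hmx
      have hcpos : 0 < α₁ - Λ := by
        have := mul_nonneg hℓ₁0 (Real.exp_pos (Λ * σ)).le
        linarith
      have hKle : (L₁₁ + L₁₂ / r) * Real.exp (Λ * σ) * (Wc + ε) ≤ (α₁ - Λ) * (Wc + ε) :=
        mul_le_mul_of_nonneg_right hΛ₁.le hWεpos.le
      have hII1 : IntervalIntegrable (fun s => Real.exp (α₁ * (s - t₀))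
          * |F₁₁ s (x₁ (g₁₁ s)) + F₁₂ s (x₂ (g₁₂ s))|) volume t₀ t₁ :=
        (hh₁I t₁ ht₀t₁.le).abs.continuousOn_mul
          (Real.continuous_exp.comp
            (continuous_const.mul (continuous_id.sub continuous_const))).continuousOn
      have hx0 : 1 * |x₁ t₀| ≤ Wc := by
        rw [one_mul]; exact le_trans (hx₁w t₀) (hwW t₀ (by linarith) le_rfl)
      have hu' : Wc + ε ≤ 1 * (|x₁ t₁| * Real.exp (Λ * (t₁ - t₀))) := by
        rw [one_mul, ← hwt₁]
        calc Wc + ε ≤ u t₁ := ht₁u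
          _ = w t₁ * Real.exp (Λ * (t₁ - t₀)) := by simp only [hu_def]
      have hhb : ∀ s ∈ Set.Icc t₀ t₁, 1 * |F₁₁ s (x₁ (g₁₁ s)) + F₁₂ s (x₂ (g₁₂ s))|
          ≤ (L₁₁ + L₁₂ / r) * Real.exp (Λ * σ) * (Wc + ε) * Real.exp (-Λ * (s - t₀)) := by
        intro s hs
        have hs0 : 0 ≤ s := le_trans ht₀ hs.1
        have hb1 : |F₁₁ s (x₁ (g₁₁ s))| ≤ L₁₁ * w (g₁₁ s) :=
          le_trans (hL₁₁ s _ hs0) (mul_le_mul_of_nonneg_left (hx₁w _) hL11)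
        have hb2 : |F₁₂ s (x₂ (g₁₂ s))| ≤ (L₁₂ / r) * w (g₁₂ s) := by
          have h0 := hL₁₂ s (x₂ (g₁₂ s)) hs0
          have h1 := hx₂w (g₁₂ s)
          have h2 : L₁₂ * |x₂ (g₁₂ s)| ≤ (L₁₂ / r) * w (g₁₂ s) := by
            rw [div_mul_eq_mul_div, le_div_iff₀ hr]
            have h3 := mul_le_mul_of_nonneg_left h1 hL12
            linarith
          linarith
        have hB1 := hgbnd g₁₁ hg₁₁ s hs
        have hB2 := hgbnd g₁₂ hg₁₂ s hs
        have habs2 := abs_add_le (F₁₁ s (x₁ (g₁₁ s))) (F₁₂ s (x₂ (g₁₂ s)))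
        have hc1 : L₁₁ * w (g₁₁ s)
            ≤ L₁₁ * ((Wc + ε) * Real.exp (Λ * σ) * Real.exp (-Λ * (s - t₀))) :=
          mul_le_mul_of_nonneg_left hB1 hL11
        have hc2 : (L₁₂ / r) * w (g₁₂ s)
            ≤ (L₁₂ / r) * ((Wc + ε) * Real.exp (Λ * σ) * Real.exp (-Λ * (s - t₀))) :=
          mul_le_mul_of_nonneg_left hB2 (div_nonneg hL12 hr.le)
        calc (1:ℝ) * |F₁₁ s (x₁ (g₁₁ s)) + F₁₂ s (x₂ (g₁₂ s))|
            = |F₁₁ s (x₁ (g₁₁ s)) + F₁₂ s (x₂ (g₁₂ s))| := one_mul _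
          _ ≤ L₁₁ * w (g₁₁ s) + (L₁₂ / r) * w (g₁₂ s) := by linarith
          _ ≤ (L₁₁ + L₁₂ / r) * ((Wc + ε) * Real.exp (Λ * σ) * Real.exp (-Λ * (s - t₀))) := by
              linarith
          _ = (L₁₁ + L₁₂ / r) * Real.exp (Λ * σ) * (Wc + ε) * Real.exp (-Λ * (s - t₀)) := by
              ring
      exact my_halanay_case x₁ (fun s => F₁₁ s (x₁ (g₁₁ s)) + F₁₂ s (x₂ (g₁₂ s)))
        1 α₁ Λ t₀ t₁ Wc ε ((L₁₁ + L₁₂ / r) * Real.exp (Λ * σ) * (Wc + ε))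
        one_pos hε hWεpos ht₀t₁.le hcpos (hdec₁ t₁ ht₀t₁.le) hII1 hx0 hhb hKle hu'
    · -- case 2 : w t₁ = r * |x₂ t₁|
      have hwt₁ : w t₁ = r * |x₂ t₁| := by simp only [hw_def]; exact hmx
      have hcpos : 0 < α₂ - Λ := by
        have := mul_nonneg hℓ₂0 (Real.exp_pos (Λ * σ)).le
        linarith
      have hKle : (L₂₂ + r * L₂₁) * Real.exp (Λ * σ) * (Wc + ε) ≤ (α₂ - Λ) * (Wc + ε) :=
        mul_le_mul_of_nonneg_right hΛ₂.le hWεpos.le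
      have hII2 : IntervalIntegrable (fun s => Real.exp (α₂ * (s - t₀))
          * |F₂₁ s (x₁ (g₂₁ s)) + F₂₂ s (x₂ (g₂₂ s))|) volume t₀ t₁ :=
        (hh₂I t₁ ht₀t₁.le).abs.continuousOn_mul
          (Real.continuous_exp.comp
            (continuous_const.mul (continuous_id.sub continuous_const))).continuousOn
      have hx0 : r * |x₂ t₀| ≤ Wc :=
        le_trans (hx₂w t₀) (hwW t₀ (by linarith) le_rfl)
      have hu' : Wc + ε ≤ r * (|x₂ t₁| * Real.exp (Λ * (t₁ - t₀))) := by
        rw [← mul_assoc, ← hwt₁]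
        calc Wc + ε ≤ u t₁ := ht₁u
          _ = w t₁ * Real.exp (Λ * (t₁ - t₀)) := by simp only [hu_def]
      have hhb : ∀ s ∈ Set.Icc t₀ t₁, r * |F₂₁ s (x₁ (g₂₁ s)) + F₂₂ s (x₂ (g₂₂ s))|
          ≤ (L₂₂ + r * L₂₁) * Real.exp (Λ * σ) * (Wc + ε) * Real.exp (-Λ * (s - t₀)) := by
        intro s hs
        have hs0 : 0 ≤ s := le_trans ht₀ hs.1
        have hb1 : |F₂₁ s (x₁ (g₂₁ s))| ≤ L₂₁ * w (g₂₁ s) :=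
          le_trans (hL₂₁ s _ hs0) (mul_le_mul_of_nonneg_left (hx₁w _) hL21)
        have hb2 : r * |F₂₂ s (x₂ (g₂₂ s))| ≤ L₂₂ * w (g₂₂ s) := by
          have h0 := hL₂₂ s (x₂ (g₂₂ s)) hs0
          have h1 := hx₂w (g₂₂ s)
          have h2 := mul_le_mul_of_nonneg_left h0 hr.le
          have h3 := mul_le_mul_of_nonneg_left h1 hL22
          linarith
        have hB1 := hgbnd g₂₁ hg₂₁ s hs
        have hB2 := hgbnd g₂₂ hg₂₂ s hs
        have habs2 := abs_add_le (F₂₁ s (x₁ (g₂₁ s))) (F₂₂ s (x₂ (g₂₂ s)))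
        have hc1 : (r * L₂₁) * w (g₂₁ s)
            ≤ (r * L₂₁) * ((Wc + ε) * Real.exp (Λ * σ) * Real.exp (-Λ * (s - t₀))) :=
          mul_le_mul_of_nonneg_left hB1 (mul_nonneg hr.le hL21)
        have hc2 : L₂₂ * w (g₂₂ s)
            ≤ L₂₂ * ((Wc + ε) * Real.exp (Λ * σ) * Real.exp (-Λ * (s - t₀))) :=
          mul_le_mul_of_nonneg_left hB2 hL22
        calc r * |F₂₁ s (x₁ (g₂₁ s)) + F₂₂ s (x₂ (g₂₂ s))|
            ≤ r * (|F₂₁ s (x₁ (g₂₁ s))| + |F₂₂ s (x₂ (g₂₂ s))|) :=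
              mul_le_mul_of_nonneg_left habs2 hr.le
          _ = r * |F₂₁ s (x₁ (g₂₁ s))| + r * |F₂₂ s (x₂ (g₂₂ s))| := by ring
          _ ≤ (r * L₂₁) * w (g₂₁ s) + L₂₂ * w (g₂₂ s) := by
              have h4 := mul_le_mul_of_nonneg_left hb1 hr.le
              linarith
          _ ≤ (L₂₂ + r * L₂₁) * ((Wc + ε) * Real.exp (Λ * σ) * Real.exp (-Λ * (s - t₀))) := by
              linarith
          _ = (L₂₂ + r * L₂₁) * Real.exp (Λ * σ) * (Wc + ε) * Real.exp (-Λ * (s - t₀)) := by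
              ring
      exact my_halanay_case x₂ (fun s => F₂₁ s (x₁ (g₂₁ s)) + F₂₂ s (x₂ (g₂₂ s)))
        r α₂ Λ t₀ t₁ Wc ε ((L₂₂ + r * L₂₁) * Real.exp (Λ * σ) * (Wc + ε))
        hr hε hWεpos ht₀t₁.le hcpos (hdec₂ t₁ ht₀t₁.le) hII2 hx0 hhb hKle hu'
  -- conclusion
  intro t ht
  have hwt := hclaim t ht
  have hE1 : Real.exp (Λ * (t - t₀)) * Real.exp (-Λ * (t - t₀)) = 1 := by
    rw [← Real.exp_add, show Λ * (t - t₀) + -Λ * (t - t₀) = 0 by ring, Real.exp_zero]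
  have hwt' : w t ≤ Wc * Real.exp (-Λ * (t - t₀)) := by
    have h1 := mul_le_mul_of_nonneg_right hwt (Real.exp_pos (-Λ * (t - t₀))).le
    rw [mul_assoc, hE1, mul_one] at h1
    exact h1
  rw [hNw]
  have hNt : max |x₁ t| |x₂ t| ≤ max 1 (1 / r) * w t := by
    apply max_le
    · calc |x₁ t| ≤ w t := hx₁w t
        _ = 1 * w t := (one_mul _).symm
        _ ≤ max 1 (1 / r) * w t := mul_le_mul_of_nonneg_right (le_max_left _ _) (hw0 t)
    · calc |x₂ t| = (1 / r) * (r * |x₂ t|) := by field_simp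
        _ ≤ (1 / r) * w t := mul_le_mul_of_nonneg_left (hx₂w t) (by positivity)
        _ ≤ max 1 (1 / r) * w t := mul_le_mul_of_nonneg_right (le_max_right _ _) (hw0 t)
  have hfin : max 1 (1 / r) * w t
      ≤ max 1 r * max 1 (1 / r) * Real.exp (-Λ * (t - t₀)) * (‖(x₁ t₀, x₂ t₀)‖ + S) := by
    calc max 1 (1 / r) * w t
        ≤ max 1 (1 / r) * (Wc * Real.exp (-Λ * (t - t₀))) :=
          mul_le_mul_of_nonneg_left hwt' hm1pos.le
      _ ≤ max 1 (1 / r) * ((max 1 r * S) * Real.exp (-Λ * (t - t₀))) :=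
          mul_le_mul_of_nonneg_left
            (mul_le_mul_of_nonneg_right hWS (Real.exp_pos _).le) hm1pos.le
      _ = (max 1 r * max 1 (1 / r) * Real.exp (-Λ * (t - t₀))) * S := by ring
      _ ≤ max 1 r * max 1 (1 / r) * Real.exp (-Λ * (t - t₀)) * (‖(x₁ t₀, x₂ t₀)‖ + S) := by
          apply mul_le_mul_of_nonneg_left (by linarith [norm_nonneg (x₁ t₀, x₂ t₀)])
          positivity
  exact le_trans hNt hfin
end

section
/- Suppose m = 2, σ_11 < α_1/A_1², and (α_1 − A_1²σ_11)(α_2 − A_2²σ_22) > A_12 A_21 (1 + A_1σ_11)(1 + A_2σ_22). Then the linear delay system ẋ_i(t) = Σ_{j=1}^2 a_{ij}(t)x_j(g_{ij}(t)) is exponentially stable. -/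
open MeasureTheory


lemma exists_small_pos {F : ℝ → ℝ} (hF : Continuous F) (h0 : 0 < F 0) :
    ∃ ε : ℝ, 0 < ε ∧ ε ≤ 1 ∧ 0 < F ε := by
  have h1 : ∀ᶠ ε in nhdsWithin 0 (Set.Ioi 0), 0 < F ε :=
    ((hF.tendsto 0).eventually (eventually_gt_nhds h0)).filter_mono nhdsWithin_le_nhds
  have h2 : ∀ᶠ ε in nhdsWithin 0 (Set.Ioi 0), ε ∈ Set.Ioc (0:ℝ) 1 :=
    Ioc_mem_nhdsGT_of_mem (by norm_num)
  obtain ⟨ε, hε1, hε2⟩ := (h1.and h2).exists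
  exact ⟨ε, hε2.1, hε2.2, hε1⟩

noncomputable def bar (bh mu lam t₀ t₁ t : ℝ) : ℝ :=
  bh * Real.exp (mu * (min (max t t₀) t₁ - t₀) - lam * (max t t₁ - t₁))

lemma bar_pos {bh : ℝ} (hbh : 0 < bh) (mu lam t₀ t₁ t : ℝ) : 0 < bar bh mu lam t₀ t₁ t := by
  unfold bar; positivity

lemma bar_cont (bh mu lam t₀ t₁ : ℝ) : Continuous (bar bh mu lam t₀ t₁) := by
  unfold bar; fun_prop

lemma bar_back {bh mu lam t₀ t₁ : ℝ} (hbh : 0 ≤ bh) (hmu : 0 ≤ mu) (hlam : 0 ≤ lam)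
    {v u : ℝ} (h : v ≤ u) :
    bar bh mu lam t₀ t₁ v ≤ bar bh mu lam t₀ t₁ u * Real.exp (lam * (u - v)) := by
  unfold bar
  rw [mul_assoc, ← Real.exp_add]
  apply mul_le_mul_of_nonneg_left _ hbh
  apply Real.exp_le_exp.mpr
  have hp : min (max v t₀) t₁ ≤ min (max u t₀) t₁ :=
    min_le_min (max_le_max h le_rfl) le_rfl
  have hq1 : max v t₁ ≤ max u t₁ := max_le_max h le_rfl
  have hq2 : max u t₁ ≤ max v t₁ + (u - v) := by
    apply max_le <;> nlinarith [le_max_left v t₁, le_max_right v t₁]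
  nlinarith [mul_le_mul_of_nonneg_left hp hmu,
    mul_le_mul_of_nonneg_left (sub_le_iff_le_add.mpr hq2) hlam]

lemma bar_mono {bh mu lam t₀ t₁ : ℝ} (hbh : 0 ≤ bh) (hmu : 0 ≤ mu)
    {u v : ℝ} (h : u ≤ v) (hv : v ≤ t₁) :
    bar bh mu lam t₀ t₁ u ≤ bar bh mu lam t₀ t₁ v := by
  unfold bar
  apply mul_le_mul_of_nonneg_left _ hbh
  apply Real.exp_le_exp.mpr
  rw [max_eq_right (h.trans hv), max_eq_right hv]
  have hp : min (max u t₀) t₁ ≤ min (max v t₀) t₁ :=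
    min_le_min (max_le_max h le_rfl) le_rfl
  nlinarith [mul_le_mul_of_nonneg_left hp hmu]

lemma bar_le_t₀ {bh mu lam t₀ t₁ t : ℝ} (h : t ≤ t₀) (h01 : t₀ ≤ t₁) :
    bar bh mu lam t₀ t₁ t = bh := by
  unfold bar
  rw [max_eq_right h, min_eq_left h01, max_eq_right (h.trans h01)]
  simp

lemma bar_strip {bh mu lam t₀ t₁ s t : ℝ} (hs : t₀ ≤ s) (hst : s ≤ t) (ht : t ≤ t₁) :
    bar bh mu lam t₀ t₁ s = bar bh mu lam t₀ t₁ t * Real.exp (-(mu * (t - s))) := by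
  unfold bar
  rw [mul_assoc, ← Real.exp_add]
  rw [max_eq_left hs, max_eq_left (hs.trans hst), min_eq_left (hst.trans ht),
    min_eq_left ht, max_eq_right (hst.trans ht), max_eq_right ht]
  ring_nf

lemma bar_final {bh mu lam t₀ t₁ t : ℝ} (hbh : 0 ≤ bh) (hmu : 0 ≤ mu) (hlam : 0 ≤ lam)
    (ht : t₀ ≤ t) (h01 : t₀ ≤ t₁) :
    bar bh mu lam t₀ t₁ t ≤
      bh * Real.exp ((mu + lam) * (t₁ - t₀)) * Real.exp (-lam * (t - t₀)) := by
  unfold bar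
  rw [mul_assoc, ← Real.exp_add]
  apply mul_le_mul_of_nonneg_left _ hbh
  apply Real.exp_le_exp.mpr
  have h1 : min (max t t₀) t₁ ≤ t₁ := min_le_right _ _
  have h2 : t ≤ max t t₁ := le_max_left _ _
  nlinarith [mul_le_mul_of_nonneg_left h1 hmu, mul_le_mul_of_nonneg_left h2 hlam]


lemma strip_full
    (x y a ab g gb B : ℝ → ℝ) (t₀ τ δ σ σb σs A Ab d db : ℝ)
    (ht₀ : 0 ≤ t₀) (hτ : t₀ < τ) (hδ : 0 < δ)
    (hσ : σ ≤ σs) (hσb : σb ≤ σs)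
    (hd : 0 < d) (hdb : 0 < db)
    (ha : ∀ t, 0 ≤ t → |a t| ≤ A)
    (hab : ∀ t, 0 ≤ t → |ab t| ≤ Ab)
    (hg : ∀ t, 0 ≤ t → 0 ≤ t - g t ∧ t - g t ≤ σ)
    (hgb : ∀ t, 0 ≤ t → 0 ≤ t - gb t ∧ t - gb t ≤ σb)
    (hint : ∀ s t, t₀ ≤ s → s ≤ t → t ≤ τ →
        IntervalIntegrable (fun u => a u * x (g u) + ab u * y (gb u)) volume s t)
    (heq : ∀ s t, t₀ ≤ s → s ≤ t → t ≤ τ →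
        x t = x s + ∫ u in s..t, (a u * x (g u) + ab u * y (gb u)))
    (hBpos : ∀ u, 0 < B u)
    (hBmono : ∀ u, u ≤ τ → B u ≤ B τ)
    (hV : ∀ u, t₀ - σs ≤ u → u ≤ τ → |x u| ≤ d * B u ∧ |y u| ≤ db * B u)
    (hxs : |x (max (τ - δ) t₀)| ≤ d * B τ / 2)
    (hcross : x τ = d * B τ)
    (hnum : δ * (A * d + Ab * db) < d / 2) : False := by
  set s := max (τ - δ) t₀ with hs_def
  have hst₀ : t₀ ≤ s := le_max_right _ _
  have hsτ : s ≤ τ := max_le (by linarith) hτ.le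
  have hτs : τ - s ≤ δ := by
    have : τ - δ ≤ s := le_max_left _ _
    linarith
  have hBτ : 0 < B τ := hBpos τ
  have hA : 0 ≤ A := le_trans (abs_nonneg _) (ha t₀ ht₀)
  have hAb : 0 ≤ Ab := le_trans (abs_nonneg _) (hab t₀ ht₀)
  -- pointwise bound on f
  have hfb : ∀ v, t₀ ≤ v → v ≤ τ → |a v * x (g v) + ab v * y (gb v)| ≤ (A * d + Ab * db) * B τ := by
    intro v hv1 hv2
    have hv0 : 0 ≤ v := le_trans ht₀ hv1
    have hgv := hg v hv0
    have hgbv := hgb v hv0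
    have hx1 : |x (g v)| ≤ d * B (g v) :=
      (hV (g v) (by linarith) (by linarith)).1
    have hy1 : |y (gb v)| ≤ db * B (gb v) :=
      (hV (gb v) (by linarith) (by linarith)).2
    have hB1 : B (g v) ≤ B τ := hBmono _ (by linarith)
    have hB2 : B (gb v) ≤ B τ := hBmono _ (by linarith)
    calc |a v * x (g v) + ab v * y (gb v)|
        ≤ |a v| * |x (g v)| + |ab v| * |y (gb v)| := by
          refine (abs_add_le _ _).trans ?_; rw [abs_mul, abs_mul]
      _ ≤ A * (d * B τ) + Ab * (db * B τ) := by
          gcongr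
          · exact ha v hv0
          · exact hx1.trans (by nlinarith)
          · exact hab v hv0
          · exact hy1.trans (by nlinarith)
      _ = (A * d + Ab * db) * B τ := by ring
  -- two-point bound
  have hlip : |x τ - x s| ≤ (A * d + Ab * db) * B τ * (τ - s) := by
    have he := heq s τ hst₀ hsτ le_rfl
    have : x τ - x s = ∫ u in s..τ, (a u * x (g u) + ab u * y (gb u)) := by linarith
    rw [this]
    have hb := intervalIntegral.norm_integral_le_of_norm_le_const
      (f := fun u => a u * x (g u) + ab u * y (gb u)) (a := s) (b := τ)
      (C := (A * d + Ab * db) * B τ) ?_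
    · have habs : |τ - s| = τ - s := abs_of_nonneg (by linarith)
      rwa [Real.norm_eq_abs, habs] at hb
    · intro v hv
      rw [Set.uIoc_of_le hsτ] at hv
      exact hfb v (le_trans hst₀ hv.1.le) hv.2
  have hxτ : x τ ≤ |x s| + (A * d + Ab * db) * B τ * δ := by
    have h1 : x τ - x s ≤ |x τ - x s| := le_abs_self _
    have h2 : x s ≤ |x s| := le_abs_self _
    have h3 : (A * d + Ab * db) * B τ * (τ - s) ≤ (A * d + Ab * db) * B τ * δ := by
      apply mul_le_mul_of_nonneg_left hτs; positivity
    linarith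
  rw [hcross] at hxτ
  nlinarith


set_option maxHeartbeats 1000000 in
lemma decay_core
    (x y a ab g gb B : ℝ → ℝ)
    (t₀ τ lam δ σ σb σs α A Ab d db : ℝ)
    (hx : Continuous x) (ha_meas : Measurable a)
    (ht₀ : 0 ≤ t₀) (hτ : t₀ + σs + 1 ≤ τ)
    (hlam : 0 ≤ lam) (hδ : 0 < δ) (hδ1 : δ ≤ 1)
    (hσ0 : 0 ≤ σ) (hσ : σ ≤ σs) (hσb0 : 0 ≤ σb) (hσb : σb ≤ σs) (hσs : 0 ≤ σs)
    (hα : 0 < α) (hd : 0 < d) (hdb : 0 < db)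
    (ha : ∀ t, 0 ≤ t → α ≤ -a t ∧ -a t ≤ A)
    (hab : ∀ t, 0 ≤ t → |ab t| ≤ Ab)
    (hg : ∀ t, 0 ≤ t → 0 ≤ t - g t ∧ t - g t ≤ σ)
    (hgb : ∀ t, 0 ≤ t → 0 ≤ t - gb t ∧ t - gb t ≤ σb)
    (hint : ∀ s t, t₀ ≤ s → s ≤ t → t ≤ τ →
        IntervalIntegrable (fun u => a u * x (g u) + ab u * y (gb u)) volume s t)
    (heq : ∀ s t, t₀ ≤ s → s ≤ t → t ≤ τ →
        x t = x s + ∫ u in s..t, (a u * x (g u) + ab u * y (gb u)))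
    (hBpos : ∀ u, 0 < B u)
    (hBback : ∀ v u, v ≤ u → B v ≤ B u * Real.exp (lam * (u - v)))
    (hV : ∀ u, t₀ - σs ≤ u → u ≤ τ → |x u| ≤ d * B u ∧ |y u| ≤ db * B u)
    (hcross : x τ = d * B τ)
    (hposd : δ * ((A * d + Ab * db) * Real.exp (lam * (2 * σs + 1))) ≤ d)
    (hnum : d * lam * Real.exp (lam * (2 * σs + 1))
        + α * (δ * ((A * d + Ab * db) * Real.exp (lam * (2 * σs + 1))))
        + A * σ * ((A * d + Ab * db) * Real.exp (lam * (2 * σs + 1)))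
        + Ab * db * Real.exp (lam * (2 * σs + 1)) < α * d) : False := by
  set E := Real.exp (lam * (2 * σs + 1)) with hE_def
  set L := (A * d + Ab * db) * E with hL_def
  set f := fun u => a u * x (g u) + ab u * y (gb u) with hf_def
  have hE1 : 1 ≤ E := Real.one_le_exp (by nlinarith)
  have hEpos : 0 < E := Real.exp_pos _
  have hBτ : 0 < B τ := hBpos τ
  have hA : α ≤ A := le_trans (ha t₀ ht₀).1 (ha t₀ ht₀).2
  have hA0 : 0 < A := lt_of_lt_of_le hα hA
  have hAb0 : 0 ≤ Ab := le_trans (abs_nonneg _) (hab t₀ ht₀)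
  have hL0 : 0 < L := by positivity
  have habs_a : ∀ v, 0 ≤ v → |a v| ≤ A := by
    intro v hv
    have h := ha v hv
    rw [abs_of_nonpos (by linarith)]
    exact h.2
  -- pointwise bound on f in the working window
  have hfb : ∀ v, τ - δ - σs ≤ v → v ≤ τ → |f v| ≤ L * B τ := by
    intro v hv1 hv2
    have hvt₀ : t₀ ≤ v := by linarith
    have hv0 : 0 ≤ v := le_trans ht₀ hvt₀
    have hgv := hg v hv0
    have hgbv := hgb v hv0
    have hx1 : |x (g v)| ≤ d * B (g v) := (hV (g v) (by linarith) (by linarith)).1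
    have hy1 : |y (gb v)| ≤ db * B (gb v) := (hV (gb v) (by linarith) (by linarith)).2
    have hB1 : B (g v) ≤ B τ * E := by
      refine (hBback (g v) τ (by linarith)).trans ?_
      exact mul_le_mul_of_nonneg_left (Real.exp_le_exp.mpr (by nlinarith)) hBτ.le
    have hB2 : B (gb v) ≤ B τ * E := by
      refine (hBback (gb v) τ (by linarith)).trans ?_
      exact mul_le_mul_of_nonneg_left (Real.exp_le_exp.mpr (by nlinarith)) hBτ.le
    calc |f v| ≤ |a v| * |x (g v)| + |ab v| * |y (gb v)| := by
          rw [hf_def]; refine (abs_add_le _ _).trans ?_; rw [abs_mul, abs_mul]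
      _ ≤ A * (d * (B τ * E)) + Ab * (db * (B τ * E)) :=
          add_le_add
            (mul_le_mul (habs_a v hv0)
              (hx1.trans (mul_le_mul_of_nonneg_left hB1 hd.le)) (abs_nonneg _) hA0.le)
            (mul_le_mul (hab v hv0)
              (hy1.trans (mul_le_mul_of_nonneg_left hB2 hdb.le)) (abs_nonneg _) hAb0)
      _ = L * B τ := by rw [hL_def]; ring
  -- two-point bound within window
  have hlip : ∀ s t, τ - δ - σ ≤ s → s ≤ t → t ≤ τ → |x t - x s| ≤ L * B τ * (t - s) := by
    intro s t hs hst htτ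
    have hst₀ : t₀ ≤ s := by linarith
    have he := heq s t hst₀ hst htτ
    have hxt : x t - x s = ∫ u in s..t, f u := by rw [hf_def]; linarith
    rw [hxt]
    have hb := intervalIntegral.norm_integral_le_of_norm_le_const
      (f := f) (a := s) (b := t) (C := L * B τ) ?_
    · have habs : |t - s| = t - s := abs_of_nonneg (by linarith)
      rwa [Real.norm_eq_abs, habs] at hb
    · intro v hv
      rw [Set.uIoc_of_le hst] at hv
      exact hfb v (by linarith [hv.1.le]) (by linarith [hv.2])
  have hτδ : t₀ ≤ τ - δ := by linarith
  -- integrability of a * x on [τ-δ, τ]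
  have haxint : IntervalIntegrable (fun u => a u * x u) volume (τ - δ) τ := by
    have hmeas : AEStronglyMeasurable (fun u => a u * x u)
        (volume.restrict (Set.uIoc (τ - δ) τ)) :=
      (ha_meas.mul hx.measurable).aestronglyMeasurable
    obtain ⟨C, hC⟩ := (isCompact_uIcc (a := τ - δ) (b := τ)).exists_bound_of_continuousOn
      hx.continuousOn
    refine (intervalIntegrable_const (c := A * C)).mono_fun hmeas ?_
    filter_upwards [ae_restrict_mem measurableSet_uIoc] with v hv
    have hv' : v ∈ Set.uIcc (τ - δ) τ := Set.uIoc_subset_uIcc hv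
    have hv0 : 0 ≤ v := by
      rw [Set.uIcc_of_le (show τ - δ ≤ τ by linarith)] at hv'
      linarith [hv'.1]
    have h1 : |a v * x v| ≤ A * C := by
      rw [abs_mul]
      have := hC v hv'
      rw [Real.norm_eq_abs] at this
      exact mul_le_mul (habs_a v hv0) this (abs_nonneg _) hA0.le
    have h2 : |A * C| = A * C := abs_of_nonneg (le_trans (abs_nonneg _) h1)
    rw [Real.norm_eq_abs, Real.norm_eq_abs, h2]
    exact h1
  have hfint : IntervalIntegrable f volume (τ - δ) τ := hint _ _ hτδ (by linarith) le_rfl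
  have hjint : IntervalIntegrable (fun u => f u - a u * x u) volume (τ - δ) τ :=
    hfint.sub haxint
  -- splitting
  have hsplit : (∫ u in (τ - δ)..τ, f u)
      = (∫ u in (τ - δ)..τ, a u * x u) + ∫ u in (τ - δ)..τ, (f u - a u * x u) := by
    rw [← intervalIntegral.integral_add haxint hjint]
    congr 1
    funext u
    ring
  -- bound on the diagonal part
  have hI1 : (∫ u in (τ - δ)..τ, a u * x u) ≤ -α * (d * B τ - δ * L * B τ) * δ := by
    have hmono := intervalIntegral.integral_mono_on (show τ - δ ≤ τ by linarith)
      haxint (intervalIntegrable_const (c := -α * (d * B τ - δ * L * B τ)))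
      (fun u hu => ?_)
    · rw [intervalIntegral.integral_const] at hmono
      have : (τ - (τ - δ)) • (-α * (d * B τ - δ * L * B τ))
          = -α * (d * B τ - δ * L * B τ) * δ := by
        rw [smul_eq_mul]; ring
      linarith [hmono.trans_eq this]
    · have hu1 : τ - δ ≤ u := hu.1
      have hu2 : u ≤ τ := hu.2
      have hu0 : 0 ≤ u := by linarith
      have hxlow : d * B τ - δ * L * B τ ≤ x u := by
        have h1 : |x τ - x u| ≤ L * B τ * (τ - u) := hlip u τ (by linarith) hu2 le_rfl
        have h2 : L * B τ * (τ - u) ≤ L * B τ * δ := by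
          apply mul_le_mul_of_nonneg_left (by linarith); positivity
        have h3 : x τ - x u ≤ L * B τ * δ := le_trans (le_abs_self _) (h1.trans h2)
        rw [hcross] at h3
        have h4 : L * B τ * δ = δ * L * B τ := by ring
        linarith [h3.trans_eq h4]
      have hxnn : 0 ≤ x u := by
        refine le_trans ?_ hxlow
        have h5 := mul_le_mul_of_nonneg_right hposd hBτ.le
        have h6 : δ * L * (B τ) = δ * L * B τ := rfl
        nlinarith [h5]
      have hav := ha u hu0
      calc a u * x u ≤ -α * x u := mul_le_mul_of_nonneg_right (by linarith [hav.1]) hxnn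
        _ ≤ -α * (d * B τ - δ * L * B τ) := by
            nlinarith [mul_le_mul_of_nonneg_left hxlow hα.le]
  -- bound on the junk part
  have hI2 : |∫ u in (τ - δ)..τ, (f u - a u * x u)| ≤ (A * σ * L + Ab * db * E) * B τ * δ := by
    have hb := intervalIntegral.norm_integral_le_of_norm_le_const
      (f := fun u => f u - a u * x u) (a := τ - δ) (b := τ)
      (C := (A * σ * L + Ab * db * E) * B τ) ?_
    · have habs : |τ - (τ - δ)| = δ := by rw [abs_of_nonneg (by linarith)]; ring
      rw [Real.norm_eq_abs, habs] at hb
      exact hb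
    · intro v hv
      rw [Set.uIoc_of_le (show τ - δ ≤ τ by linarith)] at hv
      have hv1 : τ - δ < v := hv.1
      have hv2 : v ≤ τ := hv.2
      have hv0 : 0 ≤ v := by linarith
      have hgv := hg v hv0
      have hgbv := hgb v hv0
      -- x (g v) - x v = -∫_{g v}^{v} f
      have hgt₀ : t₀ ≤ g v := by linarith
      have hegv := heq (g v) v hgt₀ (by linarith) hv2
      have hdiff : x (g v) - x v = -∫ u in (g v)..v, f u := by rw [hf_def]; linarith
      have hinner : |∫ u in (g v)..v, f u| ≤ L * B τ * σ := by
        have hb2 := intervalIntegral.norm_integral_le_of_norm_le_const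
          (f := f) (a := g v) (b := v) (C := L * B τ) ?_
        · have habs2 : |v - g v| ≤ σ := by
            rw [abs_of_nonneg (by linarith)]; linarith
          rw [Real.norm_eq_abs] at hb2
          refine hb2.trans ?_
          apply mul_le_mul_of_nonneg_left habs2; positivity
        · intro w hw
          rw [Set.uIoc_of_le (show g v ≤ v by linarith)] at hw
          exact hfb w (by linarith [hw.1.le]) (by linarith [hw.2])
      have hterm1 : |a v * (x (g v) - x v)| ≤ A * (σ * (L * B τ)) := by
        rw [abs_mul]
        have h1 : |x (g v) - x v| ≤ σ * (L * B τ) := by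
          rw [hdiff, abs_neg]
          refine hinner.trans (le_of_eq (by ring))
        exact mul_le_mul (habs_a v hv0) h1 (abs_nonneg _) hA0.le
      have hterm2 : |ab v * y (gb v)| ≤ Ab * (db * (B τ * E)) := by
        rw [abs_mul]
        have hy1 : |y (gb v)| ≤ db * B (gb v) := (hV (gb v) (by linarith) (by linarith)).2
        have hB2 : B (gb v) ≤ B τ * E := by
          refine (hBback (gb v) τ (by linarith)).trans ?_
          exact mul_le_mul_of_nonneg_left (Real.exp_le_exp.mpr (by nlinarith)) hBτ.le
        exact mul_le_mul (hab v hv0)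
          (hy1.trans (mul_le_mul_of_nonneg_left hB2 hdb.le)) (abs_nonneg _) hAb0
      have hrw : f v - a v * x v = a v * (x (g v) - x v) + ab v * y (gb v) := by
        rw [hf_def]; ring
      rw [Real.norm_eq_abs]
      show |f v - a v * x v| ≤ (A * σ * L + Ab * db * E) * B τ
      rw [hrw]
      calc |a v * (x (g v) - x v) + ab v * y (gb v)|
          ≤ |a v * (x (g v) - x v)| + |ab v * y (gb v)| := abs_add_le _ _
        _ ≤ A * (σ * (L * B τ)) + Ab * (db * (B τ * E)) := add_le_add hterm1 hterm2
        _ = (A * σ * L + Ab * db * E) * B τ := by ring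
  -- lower bound on x τ - x (τ - δ)
  have hlow : -(d * lam * E) * B τ * δ ≤ x τ - x (τ - δ) := by
    have h1 : x (τ - δ) ≤ d * B (τ - δ) :=
      le_trans (le_abs_self _) (hV (τ - δ) (by linarith) (by linarith)).1
    have h2 : B (τ - δ) ≤ B τ * Real.exp (lam * δ) := by
      have := hBback (τ - δ) τ (by linarith)
      simpa using this
    have hexp1 : Real.exp (lam * δ) - 1 ≤ lam * δ * Real.exp (lam * δ) := by
      have h := Real.add_one_le_exp (-(lam * δ))
      rw [Real.exp_neg] at h
      have hp := Real.exp_pos (lam * δ)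
      have hh : Real.exp (lam * δ) * (Real.exp (lam * δ))⁻¹ = 1 :=
        mul_inv_cancel₀ (ne_of_gt hp)
      nlinarith [mul_le_mul_of_nonneg_right h hp.le]
    have hexp2 : Real.exp (lam * δ) ≤ E := Real.exp_le_exp.mpr (by nlinarith)
    rw [hcross]
    have e1 : x (τ - δ) ≤ d * (B τ * Real.exp (lam * δ)) :=
      h1.trans (mul_le_mul_of_nonneg_left h2 hd.le)
    have e2 : Real.exp (lam * δ) - 1 ≤ lam * δ * E := by
      have := mul_le_mul_of_nonneg_left hexp2 (mul_nonneg hlam hδ.le)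
      linarith
    nlinarith [mul_le_mul_of_nonneg_left e2 (mul_nonneg hd.le hBτ.le), e1]
  -- combine
  have hmain : x τ - x (τ - δ) ≤ -α * (d * B τ - δ * L * B τ) * δ
      + (A * σ * L + Ab * db * E) * B τ * δ := by
    have he := heq (τ - δ) τ hτδ (by linarith) le_rfl
    have hxt : x τ - x (τ - δ) = ∫ u in (τ - δ)..τ, f u := by rw [hf_def]; linarith
    rw [hxt, hsplit]
    have := le_trans (le_abs_self _) hI2
    linarith
  have hc : 0 < α * d - (d * lam * E + α * (δ * L) + A * σ * L + Ab * db * E) := by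
    linarith
  nlinarith [mul_pos hc (mul_pos hBτ hδ), hlow, hmain, mul_pos hδ hBτ]


set_option maxHeartbeats 1600000 in
/-- Corollary 2.8: for `m = 2`, if `σ₁₁ < α₁/A₁²` and
`(α₁ − A₁²σ₁₁)(α₂ − A₂²σ₂₂) > A₁₂A₂₁(1+A₁σ₁₁)(1+A₂σ₂₂)`, then the linear delay system
`ẋ_i(t) = Σ_{j=1}^2 a_{ij}(t) x_j(g_{ij}(t))` is exponentially stable. -/
theorem stmt7
    (a₁₁ a₁₂ a₂₁ a₂₂ : ℝ → ℝ) (α₁ α₂ A₁ A₂ A₁₂ A₂₁ : ℝ)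
    (g₁₁ g₁₂ g₂₁ g₂₂ : ℝ → ℝ) (σ₁₁ σ₁₂ σ₂₁ σ₂₂ : ℝ)
    (ha₁₁_meas : Measurable a₁₁) (ha₁₂_meas : Measurable a₁₂)
    (ha₂₁_meas : Measurable a₂₁) (ha₂₂_meas : Measurable a₂₂)
    (hα₁ : 0 < α₁) (hα₂ : 0 < α₂)
    (ha₁₁_bd : ∀ t, 0 ≤ t → α₁ ≤ -(a₁₁ t) ∧ -(a₁₁ t) ≤ A₁)
    (ha₂₂_bd : ∀ t, 0 ≤ t → α₂ ≤ -(a₂₂ t) ∧ -(a₂₂ t) ≤ A₂)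
    (ha₁₂_bd : ∀ t, 0 ≤ t → |a₁₂ t| ≤ A₁₂)
    (ha₂₁_bd : ∀ t, 0 ≤ t → |a₂₁ t| ≤ A₂₁)
    (hg₁₁_meas : Measurable g₁₁) (hg₁₂_meas : Measurable g₁₂)
    (hg₂₁_meas : Measurable g₂₁) (hg₂₂_meas : Measurable g₂₂)
    (hg₁₁ : ∀ t, 0 ≤ t → 0 ≤ t - g₁₁ t ∧ t - g₁₁ t ≤ σ₁₁)
    (hg₁₂ : ∀ t, 0 ≤ t → 0 ≤ t - g₁₂ t ∧ t - g₁₂ t ≤ σ₁₂)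
    (hg₂₁ : ∀ t, 0 ≤ t → 0 ≤ t - g₂₁ t ∧ t - g₂₁ t ≤ σ₂₁)
    (hg₂₂ : ∀ t, 0 ≤ t → 0 ≤ t - g₂₂ t ∧ t - g₂₂ t ≤ σ₂₂)
    -- stability conditions
    (hcond₁ : σ₁₁ < α₁ / A₁ ^ 2)
    (hcond₂ : (α₁ - A₁ ^ 2 * σ₁₁) * (α₂ - A₂ ^ 2 * σ₂₂) >
      A₁₂ * A₂₁ * (1 + A₁ * σ₁₁) * (1 + A₂ * σ₂₂)) :
    -- exponential stability
    ∃ M Λ : ℝ, 0 < M ∧ 0 < Λ ∧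
      ∀ t₀ : ℝ, 0 ≤ t₀ → ∀ x₁ x₂ : ℝ → ℝ,
        Continuous x₁ → Continuous x₂ →
        (∀ t, t₀ ≤ t → IntervalIntegrable
            (fun s => a₁₁ s * x₁ (g₁₁ s) + a₁₂ s * x₂ (g₁₂ s)) volume t₀ t) →
        (∀ t, t₀ ≤ t → IntervalIntegrable
            (fun s => a₂₁ s * x₁ (g₂₁ s) + a₂₂ s * x₂ (g₂₂ s)) volume t₀ t) →
        (∀ t, t₀ ≤ t →
          x₁ t = x₁ t₀ + ∫ s in t₀..t, (a₁₁ s * x₁ (g₁₁ s) + a₁₂ s * x₂ (g₁₂ s))) →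
        (∀ t, t₀ ≤ t →
          x₂ t = x₂ t₀ + ∫ s in t₀..t, (a₂₁ s * x₁ (g₂₁ s) + a₂₂ s * x₂ (g₂₂ s))) →
        ∀ t, t₀ ≤ t →
          ‖(x₁ t, x₂ t)‖ ≤
            M * Real.exp (-Λ * (t - t₀)) *
              (‖(x₁ t₀, x₂ t₀)‖ +
                sSup ((fun s => ‖(x₁ s, x₂ s)‖) ''
                  Set.Icc (t₀ - max (max σ₁₁ σ₁₂) (max σ₂₁ σ₂₂)) t₀)) := by
  have hA1 : α₁ ≤ A₁ := le_trans (ha₁₁_bd 0 le_rfl).1 (ha₁₁_bd 0 le_rfl).2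
  have hA2 : α₂ ≤ A₂ := le_trans (ha₂₂_bd 0 le_rfl).1 (ha₂₂_bd 0 le_rfl).2
  have hA1p : 0 < A₁ := lt_of_lt_of_le hα₁ hA1
  have hA2p : 0 < A₂ := lt_of_lt_of_le hα₂ hA2
  have hA12 : 0 ≤ A₁₂ := le_trans (abs_nonneg _) (ha₁₂_bd 0 le_rfl)
  have hA21 : 0 ≤ A₂₁ := le_trans (abs_nonneg _) (ha₂₁_bd 0 le_rfl)
  have hs11 : 0 ≤ σ₁₁ := le_trans (hg₁₁ 0 le_rfl).1 (hg₁₁ 0 le_rfl).2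
  have hs12 : 0 ≤ σ₁₂ := le_trans (hg₁₂ 0 le_rfl).1 (hg₁₂ 0 le_rfl).2
  have hs21 : 0 ≤ σ₂₁ := le_trans (hg₂₁ 0 le_rfl).1 (hg₂₁ 0 le_rfl).2
  have hs22 : 0 ≤ σ₂₂ := le_trans (hg₂₂ 0 le_rfl).1 (hg₂₂ 0 le_rfl).2
  set σs := max (max σ₁₁ σ₁₂) (max σ₂₁ σ₂₂) with hσs_def
  have h11s : σ₁₁ ≤ σs := le_trans (le_max_left _ _) (le_max_left _ _)
  have h12s : σ₁₂ ≤ σs := le_trans (le_max_right _ _) (le_max_left _ _)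
  have h21s : σ₂₁ ≤ σs := le_trans (le_max_left _ _) (le_max_right _ _)
  have h22s : σ₂₂ ≤ σs := le_trans (le_max_right _ _) (le_max_right _ _)
  have hσs0 : 0 ≤ σs := le_trans hs11 h11s
  clear_value σs
  set G₁ := α₁ - A₁ ^ 2 * σ₁₁ with hG₁_def
  set G₂ := α₂ - A₂ ^ 2 * σ₂₂ with hG₂_def
  set c₁ := A₁₂ * (1 + A₁ * σ₁₁) with hc₁_def
  set c₂ := A₂₁ * (1 + A₂ * σ₂₂) with hc₂_def
  have hc₁0 : 0 ≤ c₁ := by rw [hc₁_def]; positivity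
  have hc₂0 : 0 ≤ c₂ := by rw [hc₂_def]; positivity
  have hprod : c₁ * c₂ = A₁₂ * A₂₁ * (1 + A₁ * σ₁₁) * (1 + A₂ * σ₂₂) := by
    rw [hc₁_def, hc₂_def]; ring
  have hcond₂' : c₁ * c₂ < G₁ * G₂ := by rw [hprod]; exact hcond₂
  have hgap1 : 0 < G₁ := by
    have h := (lt_div_iff₀ (by positivity : (0:ℝ) < A₁ ^ 2)).mp hcond₁
    rw [hG₁_def]; linarith
  have hgap2 : 0 < G₂ := by
    by_contra h
    push_neg at h
    linarith [mul_nonneg hgap1.le (neg_nonneg.mpr h), mul_nonneg hc₁0 hc₂0]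
  set d₁ := G₂ + c₁ with hd₁_def
  set d₂ := G₁ + c₂ with hd₂_def
  have hd₁ : 0 < d₁ := by rw [hd₁_def]; linarith
  have hd₂ : 0 < d₂ := by rw [hd₂_def]; linarith
  have hkey1 : d₂ * c₁ < d₁ * G₁ := by rw [hd₁_def, hd₂_def]; linarith
  have hkey2 : d₁ * c₂ < d₂ * G₂ := by rw [hd₁_def, hd₂_def]; linarith
  have hkey1' : A₁ * σ₁₁ * (A₁ * d₁ + A₁₂ * d₂) + A₁₂ * d₂ < α₁ * d₁ := by
    have h := hkey1
    rw [hc₁_def, hG₁_def] at h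
    linarith [h]
  have hkey2' : A₂ * σ₂₂ * (A₂ * d₂ + A₂₁ * d₁) + A₂₁ * d₁ < α₂ * d₂ := by
    have h := hkey2
    rw [hc₂_def, hG₂_def] at h
    linarith [h]
  clear_value d₁ d₂
  -- choose ε > 0
  obtain ⟨ε, hε0, hε1, hεF⟩ := exists_small_pos
    (F := fun ε =>
      min (min
        (α₁ * d₁ - (d₁ * ε * Real.exp (ε * (2 * σs + 1))
          + α₁ * (ε * ((A₁ * d₁ + A₁₂ * d₂) * Real.exp (ε * (2 * σs + 1))))
          + A₁ * σ₁₁ * ((A₁ * d₁ + A₁₂ * d₂) * Real.exp (ε * (2 * σs + 1)))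
          + A₁₂ * d₂ * Real.exp (ε * (2 * σs + 1))))
        (α₂ * d₂ - (d₂ * ε * Real.exp (ε * (2 * σs + 1))
          + α₂ * (ε * ((A₂ * d₂ + A₂₁ * d₁) * Real.exp (ε * (2 * σs + 1))))
          + A₂ * σ₂₂ * ((A₂ * d₂ + A₂₁ * d₁) * Real.exp (ε * (2 * σs + 1)))
          + A₂₁ * d₁ * Real.exp (ε * (2 * σs + 1)))))
      (min (min (d₁ - ε * ((A₁ * d₁ + A₁₂ * d₂) * Real.exp (ε * (2 * σs + 1))))
                (d₂ - ε * ((A₂ * d₂ + A₂₁ * d₁) * Real.exp (ε * (2 * σs + 1)))))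
           (min (d₁ / 2 - ε * (A₁ * d₁ + A₁₂ * d₂))
                (d₂ / 2 - ε * (A₂ * d₂ + A₂₁ * d₁)))))
    (by fun_prop)
    (by
      simp only [zero_mul, Real.exp_zero, mul_one, mul_zero, add_zero, zero_add, sub_zero]
      refine lt_min (lt_min ?_ ?_) (lt_min (lt_min ?_ ?_) (lt_min ?_ ?_))
      · linarith [hkey1']
      · linarith [hkey2']
      · linarith
      · linarith
      · linarith
      · linarith)
  simp only [lt_min_iff] at hεF
  obtain ⟨⟨hnum1, hnum2⟩, ⟨hposd1, hposd2⟩, hnums1, hnums2⟩ := hεF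
  set mu := Real.log 2 / ε with hmu_def
  have hmu : 0 < mu := div_pos (Real.log_pos one_lt_two) hε0
  clear_value mu
  have hdmn : 0 < min d₁ d₂ := lt_min hd₁ hd₂
  have hdmx : 0 < max d₁ d₂ := lt_of_lt_of_le hd₁ (le_max_left _ _)
  refine ⟨2 * (max d₁ d₂ / min d₁ d₂) * Real.exp ((mu + ε) * (σs + 1)), ε,
    mul_pos (mul_pos two_pos (div_pos hdmx hdmn)) (Real.exp_pos _), hε0, ?_⟩
  intro t₀ ht₀ x₁ x₂ hx₁ hx₂ hi₁ hi₂ hX₁ hX₂ t ht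
  set M := 2 * (max d₁ d₂ / min d₁ d₂) * Real.exp ((mu + ε) * (σs + 1)) with hM_def
  have hMpos : 0 < M := by
    rw [hM_def]
    exact mul_pos (mul_pos two_pos (div_pos hdmx hdmn)) (Real.exp_pos _)
  clear_value M
  set S := sSup ((fun s => ‖(x₁ s, x₂ s)‖) '' Set.Icc (t₀ - σs) t₀) with hS_def
  set K := ‖(x₁ t₀, x₂ t₀)‖ + S with hK_def
  have hSb : ∀ s, t₀ - σs ≤ s → s ≤ t₀ → ‖(x₁ s, x₂ s)‖ ≤ S := by
    intro s h1 h2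
    apply le_csSup
    · exact (isCompact_Icc.image ((hx₁.prodMk hx₂).norm)).bddAbove
    · exact Set.mem_image_of_mem _ ⟨h1, h2⟩
  have hS0 : 0 ≤ S := le_trans (norm_nonneg _) (hSb t₀ (by linarith) le_rfl)
  have hK0 : 0 ≤ K := add_nonneg (norm_nonneg _) hS0
  clear_value S K
  -- two-point integral equations
  have hi₁' : ∀ s t, t₀ ≤ s → s ≤ t → IntervalIntegrable
      (fun u => a₁₁ u * x₁ (g₁₁ u) + a₁₂ u * x₂ (g₁₂ u)) volume s t := by
    intro s t hs hst
    refine (hi₁ t (hs.trans hst)).mono_set ?_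
    rw [Set.uIcc_of_le (hs.trans hst), Set.uIcc_of_le hst]
    exact Set.Icc_subset_Icc hs le_rfl
  have hi₂' : ∀ s t, t₀ ≤ s → s ≤ t → IntervalIntegrable
      (fun u => a₂₁ u * x₁ (g₂₁ u) + a₂₂ u * x₂ (g₂₂ u)) volume s t := by
    intro s t hs hst
    refine (hi₂ t (hs.trans hst)).mono_set ?_
    rw [Set.uIcc_of_le (hs.trans hst), Set.uIcc_of_le hst]
    exact Set.Icc_subset_Icc hs le_rfl
  have heq₁ : ∀ s t, t₀ ≤ s → s ≤ t →
      x₁ t = x₁ s + ∫ u in s..t, (a₁₁ u * x₁ (g₁₁ u) + a₁₂ u * x₂ (g₁₂ u)) := by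
    intro s t hs hst
    have h1 := hX₁ t (hs.trans hst)
    have h2 := hX₁ s hs
    have h3 := intervalIntegral.integral_add_adjacent_intervals
      (hi₁' t₀ s le_rfl hs) (hi₁' s t hs hst)
    linarith
  have heq₂ : ∀ s t, t₀ ≤ s → s ≤ t →
      x₂ t = x₂ s + ∫ u in s..t, (a₂₁ u * x₁ (g₂₁ u) + a₂₂ u * x₂ (g₂₂ u)) := by
    intro s t hs hst
    have h1 := hX₂ t (hs.trans hst)
    have h2 := hX₂ s hs
    have h3 := intervalIntegral.integral_add_adjacent_intervals
      (hi₂' t₀ s le_rfl hs) (hi₂' s t hs hst)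
    linarith
  -- negated versions
  have hfunA : (fun u => a₁₁ u * (-x₁ (g₁₁ u)) + a₁₂ u * (-x₂ (g₁₂ u)))
      = fun u => -(a₁₁ u * x₁ (g₁₁ u) + a₁₂ u * x₂ (g₁₂ u)) := by funext u; ring
  have hfunB : (fun u => a₂₂ u * (-x₂ (g₂₂ u)) + a₂₁ u * (-x₁ (g₂₁ u)))
      = fun u => -(a₂₁ u * x₁ (g₂₁ u) + a₂₂ u * x₂ (g₂₂ u)) := by funext u; ring
  have hfunC : (fun u => a₂₂ u * x₂ (g₂₂ u) + a₂₁ u * x₁ (g₂₁ u))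
      = fun u => a₂₁ u * x₁ (g₂₁ u) + a₂₂ u * x₂ (g₂₂ u) := by funext u; ring
  have hnegintA : ∀ s t, t₀ ≤ s → s ≤ t → IntervalIntegrable
      (fun u => a₁₁ u * (-x₁ (g₁₁ u)) + a₁₂ u * (-x₂ (g₁₂ u))) volume s t := by
    intro s t hs hst
    rw [hfunA]
    exact (hi₁' s t hs hst).neg
  have hnegeqA : ∀ s t, t₀ ≤ s → s ≤ t →
      -x₁ t = -x₁ s + ∫ u in s..t, (a₁₁ u * (-x₁ (g₁₁ u)) + a₁₂ u * (-x₂ (g₁₂ u))) := by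
    intro s t hs hst
    have h := heq₁ s t hs hst
    rw [hfunA, intervalIntegral.integral_neg]
    linarith
  have hint₂sw : ∀ s t, t₀ ≤ s → s ≤ t → IntervalIntegrable
      (fun u => a₂₂ u * x₂ (g₂₂ u) + a₂₁ u * x₁ (g₂₁ u)) volume s t := by
    intro s t hs hst
    rw [hfunC]
    exact hi₂' s t hs hst
  have heq₂sw : ∀ s t, t₀ ≤ s → s ≤ t →
      x₂ t = x₂ s + ∫ u in s..t, (a₂₂ u * x₂ (g₂₂ u) + a₂₁ u * x₁ (g₂₁ u)) := by
    intro s t hs hst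
    rw [hfunC]
    exact heq₂ s t hs hst
  have hnegintB : ∀ s t, t₀ ≤ s → s ≤ t → IntervalIntegrable
      (fun u => a₂₂ u * (-x₂ (g₂₂ u)) + a₂₁ u * (-x₁ (g₂₁ u))) volume s t := by
    intro s t hs hst
    rw [hfunB]
    exact (hi₂' s t hs hst).neg
  have hnegeqB : ∀ s t, t₀ ≤ s → s ≤ t →
      -x₂ t = -x₂ s + ∫ u in s..t, (a₂₂ u * (-x₂ (g₂₂ u)) + a₂₁ u * (-x₁ (g₂₁ u))) := by
    intro s t hs hst
    have h := heq₂ s t hs hst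
    rw [hfunB, intervalIntegral.integral_neg]
    linarith
  -- final bound via ε'-approximation
  apply le_of_forall_sub_le
  intro c hc
  have hMexp : 0 < M * Real.exp (-ε * (t - t₀)) := mul_pos hMpos (Real.exp_pos _)
  rw [sub_le_iff_le_add]
  set ε' := c / (M * Real.exp (-ε * (t - t₀))) with hε'_def
  have hε'0 : 0 < ε' := div_pos hc hMexp
  clear_value ε'
  set P := K + ε' with hP_def
  have hPpos : 0 < P := add_pos_of_nonneg_of_pos hK0 hε'0
  clear_value P
  set bh := 2 * P / min d₁ d₂ with hbh_def
  have hbh : 0 < bh := by rw [hbh_def]; exact div_pos (by linarith) hdmn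
  clear_value bh
  set t₁ := t₀ + σs + 1 with ht₁_def
  set Bf := bar bh mu ε t₀ t₁ with hBf_def
  have hBfpos : ∀ v, 0 < Bf v := fun v => bar_pos hbh _ _ _ _ _
  have hBfc : Continuous Bf := by rw [hBf_def]; exact bar_cont _ _ _ _ _
  have ht₀₁ : t₀ ≤ t₁ := by rw [ht₁_def]; linarith
  clear_value Bf
  have hPdm : P = min d₁ d₂ * bh / 2 := by rw [hbh_def]; field_simp
  have hx1S : ∀ v, t₀ - σs ≤ v → v ≤ t₀ → |x₁ v| ≤ S := by
    intro v h1 h2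
    exact le_trans (by simpa using norm_fst_le (x₁ v, x₂ v)) (hSb v h1 h2)
  have hx2S : ∀ v, t₀ - σs ≤ v → v ≤ t₀ → |x₂ v| ≤ S := by
    intro v h1 h2
    exact le_trans (by simpa using norm_snd_le (x₁ v, x₂ v)) (hSb v h1 h2)
  have hSP : S < P := by
    have h1 : S ≤ K := by rw [hK_def]; exact le_add_of_nonneg_left (norm_nonneg _)
    rw [hP_def]; linarith
  have hwin : ∀ v, t₀ - σs ≤ v → v ≤ t₀ → |x₁ v| ≤ d₁ * Bf v ∧ |x₂ v| ≤ d₂ * Bf v := by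
    intro v h1 h2
    have hBv : Bf v = bh := by rw [hBf_def]; exact bar_le_t₀ h2 ht₀₁
    rw [hBv]
    constructor
    · refine le_trans (hx1S v h1 h2) ?_
      linarith [mul_nonneg (sub_nonneg.mpr (min_le_left d₁ d₂)) hbh.le, mul_pos hd₁ hbh]
    · refine le_trans (hx2S v h1 h2) ?_
      linarith [mul_nonneg (sub_nonneg.mpr (min_le_right d₁ d₂)) hbh.le, mul_pos hd₂ hbh]
  have hBt₀ : Bf t₀ = bh := by rw [hBf_def]; exact bar_le_t₀ le_rfl ht₀₁
  have hx1K : |x₁ t₀| ≤ K := by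
    refine le_trans (show |x₁ t₀| ≤ ‖(x₁ t₀, x₂ t₀)‖ by have h := norm_fst_le (x₁ t₀, x₂ t₀); rw [Real.norm_eq_abs] at h; exact h) ?_
    rw [hK_def]; linarith
  have hx2K : |x₂ t₀| ≤ K := by
    refine le_trans (show |x₂ t₀| ≤ ‖(x₁ t₀, x₂ t₀)‖ by have h := norm_snd_le (x₁ t₀, x₂ t₀); rw [Real.norm_eq_abs] at h; exact h) ?_
    rw [hK_def]; linarith
  have hKP : K < P := by rw [hP_def]; linarith
  have hx10half : |x₁ t₀| ≤ d₁ * bh / 2 := by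
    linarith [mul_nonneg (sub_nonneg.mpr (min_le_left d₁ d₂)) hbh.le, mul_pos hd₁ hbh]
  have hx20half : |x₂ t₀| ≤ d₂ * bh / 2 := by
    linarith [mul_nonneg (sub_nonneg.mpr (min_le_right d₁ d₂)) hbh.le, mul_pos hd₂ hbh]
  have hstrict1 : |x₁ t₀| < d₁ * Bf t₀ := by
    rw [hBt₀]
    linarith [mul_nonneg (sub_nonneg.mpr (min_le_left d₁ d₂)) hbh.le, mul_pos hd₁ hbh]
  have hstrict2 : |x₂ t₀| < d₂ * Bf t₀ := by
    rw [hBt₀]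
    linarith [mul_nonneg (sub_nonneg.mpr (min_le_right d₁ d₂)) hbh.le, mul_pos hd₂ hbh]
  -- the barrier argument
  have key : ∀ T, t₀ ≤ T → |x₁ T| ≤ d₁ * Bf T ∧ |x₂ T| ≤ d₂ * Bf T := by
    intro T hT
    by_contra hcon
    rw [not_and_or] at hcon
    push_neg at hcon
    set Ss : Set ℝ := Set.Icc t₀ T ∩
      ({v | d₁ * Bf v ≤ |x₁ v|} ∪ {v | d₂ * Bf v ≤ |x₂ v|}) with hSs_def
    have hTclosed : IsClosed Ss := by
      refine IsClosed.inter isClosed_Icc (IsClosed.union ?_ ?_)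
      · exact isClosed_le (continuous_const.mul hBfc) hx₁.abs
      · exact isClosed_le (continuous_const.mul hBfc) hx₂.abs
    have hTmem : T ∈ Ss := by
      refine ⟨⟨hT, le_rfl⟩, ?_⟩
      rcases hcon with h | h
      · exact Or.inl h.le
      · exact Or.inr h.le
    have hbddb : BddBelow Ss := BddBelow.mono Set.inter_subset_left bddBelow_Icc
    set τ := sInf Ss with hτ_def
    have hτmem : τ ∈ Ss := hTclosed.csInf_mem ⟨T, hTmem⟩ hbddb
    have hτIcc := hτmem.1
    have hτC := hτmem.2
    have hτt₀ : t₀ < τ := by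
      rcases lt_or_eq_of_le hτIcc.1 with h | h
      · exact h
      · exfalso
        rcases hτC with h1 | h1
        · rw [← h] at h1; exact absurd h1 (not_le.mpr hstrict1)
        · rw [← h] at h1; exact absurd h1 (not_le.mpr hstrict2)
    have hbefore : ∀ v, t₀ ≤ v → v < τ → |x₁ v| < d₁ * Bf v ∧ |x₂ v| < d₂ * Bf v := by
      intro v h1 h2
      have h2' : v < sInf Ss := by rw [← hτ_def]; exact h2
      have hvn : v ∉ Ss := notMem_of_lt_csInf h2' hbddb
      constructor
      · by_contra hcc
        push_neg at hcc
        exact hvn ⟨⟨h1, h2.le.trans hτIcc.2⟩, Or.inl hcc⟩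
      · by_contra hcc
        push_neg at hcc
        exact hvn ⟨⟨h1, h2.le.trans hτIcc.2⟩, Or.inr hcc⟩
    have hatτ : |x₁ τ| ≤ d₁ * Bf τ ∧ |x₂ τ| ≤ d₂ * Bf τ := by
      have hev : ∀ᶠ v in nhdsWithin τ (Set.Iio τ),
          |x₁ v| ≤ d₁ * Bf v ∧ |x₂ v| ≤ d₂ * Bf v := by
        filter_upwards [Ioo_mem_nhdsLT_of_mem
          (show τ ∈ Set.Ioc t₀ τ from ⟨hτt₀, le_rfl⟩)] with v hv
        exact ⟨(hbefore v hv.1.le hv.2).1.le, (hbefore v hv.1.le hv.2).2.le⟩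
      constructor
      · exact le_of_tendsto_of_tendsto
          ((hx₁.abs.tendsto τ).mono_left nhdsWithin_le_nhds)
          (((continuous_const.mul hBfc).tendsto τ).mono_left nhdsWithin_le_nhds)
          (hev.mono fun v h => h.1)
      · exact le_of_tendsto_of_tendsto
          ((hx₂.abs.tendsto τ).mono_left nhdsWithin_le_nhds)
          (((continuous_const.mul hBfc).tendsto τ).mono_left nhdsWithin_le_nhds)
          (hev.mono fun v h => h.2)
    have hVfull : ∀ v, t₀ - σs ≤ v → v ≤ τ →
        |x₁ v| ≤ d₁ * Bf v ∧ |x₂ v| ≤ d₂ * Bf v := by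
      intro v h1 h2
      rcases le_or_gt v t₀ with h | h
      · exact hwin v h1 h
      · rcases lt_or_eq_of_le h2 with h' | h'
        · exact ⟨(hbefore v h.le h').1.le, (hbefore v h.le h').2.le⟩
        · rw [h']; exact hatτ
    have hBback : ∀ v u : ℝ, v ≤ u → Bf v ≤ Bf u * Real.exp (ε * (u - v)) := by
      intro v u h
      rw [hBf_def]
      exact bar_back hbh.le hmu.le hε0.le h
    -- the dispatcher
    have dispatch : ∀ (w z aw az gw gz : ℝ → ℝ) (αw Aw Az σw σz dw dz : ℝ),
        Continuous w → Measurable aw →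
        0 < αw → 0 < dw → 0 < dz →
        (∀ s, 0 ≤ s → αw ≤ -aw s ∧ -aw s ≤ Aw) →
        (∀ s, 0 ≤ s → |az s| ≤ Az) →
        (∀ s, 0 ≤ s → 0 ≤ s - gw s ∧ s - gw s ≤ σw) →
        (∀ s, 0 ≤ s → 0 ≤ s - gz s ∧ s - gz s ≤ σz) →
        0 ≤ σw → σw ≤ σs → 0 ≤ σz → σz ≤ σs →
        (∀ s t, t₀ ≤ s → s ≤ t →
          IntervalIntegrable (fun u => aw u * w (gw u) + az u * z (gz u)) volume s t) →
        (∀ s t, t₀ ≤ s → s ≤ t →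
          w t = w s + ∫ u in s..t, (aw u * w (gw u) + az u * z (gz u))) →
        (∀ v, t₀ - σs ≤ v → v ≤ τ → |w v| ≤ dw * Bf v ∧ |z v| ≤ dz * Bf v) →
        |w t₀| ≤ dw * bh / 2 →
        ε * ((Aw * dw + Az * dz) * Real.exp (ε * (2 * σs + 1))) ≤ dw →
        dw * ε * Real.exp (ε * (2 * σs + 1))
          + αw * (ε * ((Aw * dw + Az * dz) * Real.exp (ε * (2 * σs + 1))))
          + Aw * σw * ((Aw * dw + Az * dz) * Real.exp (ε * (2 * σs + 1)))
          + Az * dz * Real.exp (ε * (2 * σs + 1)) < αw * dw →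
        ε * (Aw * dw + Az * dz) < dw / 2 →
        w τ = dw * Bf τ → False := by
      intro w z aw az gw gz αw Aw Az σw σz dw dz hw hawm hαw hdw hdz hawb hazb hgw hgz
        hσw0 hσws hσz0 hσzs hint2 heq2 hV2 hw0 hposd hnumd hnums hcross
      have hawabs : ∀ s, 0 ≤ s → |aw s| ≤ Aw := by
        intro s hs
        have h := hawb s hs
        rw [abs_of_nonpos (by linarith [h.1])]
        exact h.2
      rcases le_or_gt τ t₁ with hreg | hreg
      · -- strip region
        refine strip_full w z aw az gw gz Bf t₀ τ ε σw σz σs Aw Az dw dz ht₀ hτt₀ hε0 hσws hσzs hdw hdz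
          hawabs hazb hgw hgz (fun s t hs hst _ => hint2 s t hs hst)
          (fun s t hs hst _ => heq2 s t hs hst) hBfpos
          (fun u hu => by rw [hBf_def]; exact bar_mono hbh.le hmu.le hu hreg)
          hV2 ?_ hcross hnums
        rcases le_or_gt t₀ (τ - ε) with h | h
        · rw [max_eq_left h]
          have h1 := (hV2 (τ - ε) (by linarith) (by linarith)).1
          have h2 : Bf (τ - ε) = Bf τ * Real.exp (-(mu * (τ - (τ - ε)))) := by
            rw [hBf_def]; exact bar_strip h (by linarith) hreg
          have h3 : Real.exp (-(mu * (τ - (τ - ε)))) = 1 / 2 := by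
            have hμε : mu * (τ - (τ - ε)) = Real.log 2 := by
              rw [hmu_def]; field_simp; ring
            rw [hμε, Real.exp_neg, Real.exp_log two_pos]
            norm_num
          rw [h2, h3] at h1
          calc |w (τ - ε)| ≤ dw * (Bf τ * (1 / 2)) := h1
            _ = dw * Bf τ / 2 := by ring
        · rw [max_eq_right h.le]
          refine hw0.trans ?_
          have hbb : Bf t₀ ≤ Bf τ := by
            rw [hBf_def]; exact bar_mono hbh.le hmu.le hτt₀.le hreg
          have h4 : bh ≤ Bf τ := by rw [← hBt₀]; exact hbb
          linarith [mul_nonneg hdw.le (sub_nonneg.mpr h4)]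
      · -- decay region
        exact decay_core w z aw az gw gz Bf t₀ τ ε ε σw σz σs αw Aw Az dw dz hw hawm ht₀
          (by rw [ht₁_def] at hreg; linarith) hε0.le hε0 hε1 hσw0 hσws hσz0 hσzs hσs0
          hαw hdw hdz hawb hazb hgw hgz (fun s t hs hst _ => hint2 s t hs hst)
          (fun s t hs hst _ => heq2 s t hs hst) hBfpos hBback hV2 hcross hposd hnumd
    -- crossing case analysis
    rcases hτC with h1 | h1
    · have heqτ : |x₁ τ| = d₁ * Bf τ := le_antisymm hatτ.1 h1
      rcases (abs_eq (mul_pos hd₁ (hBfpos τ)).le).mp heqτ with hplus | hminus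
      · exact dispatch x₁ x₂ a₁₁ a₁₂ g₁₁ g₁₂ α₁ A₁ A₁₂ σ₁₁ σ₁₂ d₁ d₂ hx₁ ha₁₁_meas
          hα₁ hd₁ hd₂ ha₁₁_bd ha₁₂_bd hg₁₁ hg₁₂ hs11 h11s hs12 h12s hi₁' heq₁ hVfull
          hx10half (by linarith) (by linarith) (by linarith) hplus
      · refine dispatch (fun v => -x₁ v) (fun v => -x₂ v) a₁₁ a₁₂ g₁₁ g₁₂ α₁ A₁ A₁₂
          σ₁₁ σ₁₂ d₁ d₂ hx₁.neg ha₁₁_meas hα₁ hd₁ hd₂ ha₁₁_bd ha₁₂_bd hg₁₁ hg₁₂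
          hs11 h11s hs12 h12s hnegintA hnegeqA
          (fun v hv1 hv2 => by simpa [abs_neg] using hVfull v hv1 hv2)
          (by simpa [abs_neg] using hx10half) (by linarith) (by linarith) (by linarith)
          (by linarith)
    · have heqτ : |x₂ τ| = d₂ * Bf τ := le_antisymm hatτ.2 h1
      rcases (abs_eq (mul_pos hd₂ (hBfpos τ)).le).mp heqτ with hplus | hminus
      · exact dispatch x₂ x₁ a₂₂ a₂₁ g₂₂ g₂₁ α₂ A₂ A₂₁ σ₂₂ σ₂₁ d₂ d₁ hx₂ ha₂₂_meas
          hα₂ hd₂ hd₁ ha₂₂_bd ha₂₁_bd hg₂₂ hg₂₁ hs22 h22s hs21 h21s hint₂sw heq₂sw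
          (fun v hv1 hv2 => ⟨(hVfull v hv1 hv2).2, (hVfull v hv1 hv2).1⟩)
          hx20half (by linarith) (by linarith) (by linarith) hplus
      · refine dispatch (fun v => -x₂ v) (fun v => -x₁ v) a₂₂ a₂₁ g₂₂ g₂₁ α₂ A₂ A₂₁
          σ₂₂ σ₂₁ d₂ d₁ hx₂.neg ha₂₂_meas hα₂ hd₂ hd₁ ha₂₂_bd ha₂₁_bd hg₂₂ hg₂₁
          hs22 h22s hs21 h21s hnegintB hnegeqB
          (fun v hv1 hv2 => by
            simpa [abs_neg] using ⟨(hVfull v hv1 hv2).2, (hVfull v hv1 hv2).1⟩)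
          (by simpa [abs_neg] using hx20half) (by linarith) (by linarith) (by linarith)
          (by linarith)
  -- conclude
  have hkt := key t ht
  have hnorm : ‖(x₁ t, x₂ t)‖ = max |x₁ t| |x₂ t| := by
    rw [Prod.norm_def, Real.norm_eq_abs, Real.norm_eq_abs]
  have hfin : Bf t ≤ bh * Real.exp ((mu + ε) * (σs + 1)) * Real.exp (-ε * (t - t₀)) := by
    have h := bar_final (bh := bh) (mu := mu) (lam := ε) (t₀ := t₀) (t₁ := t₁)
      hbh.le hmu.le hε0.le ht ht₀₁
    rw [show t₁ - t₀ = σs + 1 by rw [ht₁_def]; ring] at h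
    rw [hBf_def]
    exact h
  have hchain : ‖(x₁ t, x₂ t)‖ ≤ max d₁ d₂ * Bf t := by
    rw [hnorm]
    apply max_le
    · exact hkt.1.trans (mul_le_mul_of_nonneg_right (le_max_left _ _) (hBfpos t).le)
    · exact hkt.2.trans (mul_le_mul_of_nonneg_right (le_max_right _ _) (hBfpos t).le)
  have hchain2 : ‖(x₁ t, x₂ t)‖ ≤ M * Real.exp (-ε * (t - t₀)) * P := by
    refine hchain.trans ?_
    have h2 := mul_le_mul_of_nonneg_left hfin hdmx.le
    refine h2.trans_eq ?_
    rw [hM_def, hbh_def]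
    field_simp
  refine hchain2.trans_eq ?_
  rw [hP_def, hε'_def]
  have hne : M * Real.exp (-ε * (t - t₀)) ≠ 0 := ne_of_gt hMexp
  field_simp
end
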